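/- arXiv:2108.08804 — 7 statements merged into one kernel-verified Lean document; each statement's English description precedes it below -/
import Mathlib

section
/- Let m, r, d be positive integers with m ≥ (r-1)(d+1)+1, and let x_1, x_2, ..., x_m be points in ℝ^d. Then there is a partition S_1, S_2, ..., S_r of the index set {1, 2, ..., m} into r pairwise disjoint parts such that the convex hulls conv{x_i : i ∈ S_1}, ..., conv{x_i : i ∈ S_r} have a point in common. -/
open Finset Module

local notation "⟪" x ", " y "⟫" => @inner ℝ _ _ x y

/-- Moving from `p` towards a point `z` with `⟪p,z⟫ < ‖p‖²` strictly decreases the norm. -/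
lemma tv_improve {E : Type*} [NormedAddCommGroup E] [InnerProductSpace ℝ E] {p z : E}
    (h : ⟪p, z⟫ < ‖p‖ ^ 2) :
    ∃ s : ℝ, 0 ≤ s ∧ s ≤ 1 ∧ ‖(1 - s) • p + s • z‖ < ‖p‖ := by
  have hzp : z - p ≠ 0 := by
    intro hzp
    rw [sub_eq_zero] at hzp
    rw [hzp, real_inner_self_eq_norm_sq] at h
    exact lt_irrefl _ h
  set a : ℝ := ‖p‖ ^ 2 - ⟪p, z⟫ with ha
  have ha0 : 0 < a := by simp [ha]; linarith
  set b : ℝ := ‖z - p‖ ^ 2 with hb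
  have hb0 : 0 < b := by
    have := norm_pos_iff.2 hzp
    positivity
  set s : ℝ := min 1 (a / b) with hs
  have hs0 : 0 < s := lt_min one_pos (by positivity)
  have hs1 : s ≤ 1 := min_le_left _ _
  have hsb : s * b ≤ a := by
    calc s * b ≤ (a / b) * b := by
          have := min_le_right 1 (a / b); nlinarith
      _ = a := by field_simp
  refine ⟨s, le_of_lt hs0, hs1, ?_⟩
  have hq : (1 - s) • p + s • z = p + s • (z - p) := by
    rw [smul_sub, sub_smul, one_smul]; abel
  have hnorm : ‖p + s • (z - p)‖ ^ 2 = ‖p‖ ^ 2 + 2 * (s * ⟪p, z - p⟫) + s ^ 2 * b := by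
    rw [norm_add_sq_real, real_inner_smul_right, norm_smul]
    rw [mul_pow, hb]
    congr 1
    simp [abs_of_pos hs0]
  have hinner : ⟪p, z - p⟫ = -a := by
    rw [inner_sub_right, real_inner_self_eq_norm_sq, ha]; ring
  have key : ‖p + s • (z - p)‖ ^ 2 < ‖p‖ ^ 2 := by
    rw [hnorm, hinner]
    have : s ^ 2 * b = s * (s * b) := by ring
    nlinarith
  rw [hq]
  nlinarith [norm_nonneg (p + s • (z - p)), norm_nonneg p]

/-- An affinely independent family inside the hyperplane `⟪P,·⟫ = ‖P‖²` (with `P ≠ 0`)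
has at most `finrank ℝ E` elements. -/
lemma tv_card_le {E : Type*} [NormedAddCommGroup E] [InnerProductSpace ℝ E]
    [FiniteDimensional ℝ E] {κ : Type*} [Fintype κ] [Nonempty κ] {z : κ → E} {P : E}
    (hP : P ≠ 0) (hai : AffineIndependent ℝ z) (hH : ∀ i, ⟪P, z i⟫ = ‖P‖ ^ 2) :
    Fintype.card κ ≤ finrank ℝ E := by
  have h1 : finrank ℝ (vectorSpan ℝ (Set.range z)) + 1 = Fintype.card κ :=
    hai.finrank_vectorSpan_add_one
  have h2 : vectorSpan ℝ (Set.range z) ≤ (ℝ ∙ P)ᗮ := by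
    rw [vectorSpan_def]
    refine Submodule.span_le.2 ?_
    rintro v ⟨v₁, ⟨i, rfl⟩, v₂, ⟨j, rfl⟩, rfl⟩
    rw [SetLike.mem_coe, Submodule.mem_orthogonal_singleton_iff_inner_right]
    show ⟪P, z i -ᵥ z j⟫ = 0
    rw [vsub_eq_sub, inner_sub_right, hH i, hH j, sub_self]
  have h3 : finrank ℝ (vectorSpan ℝ (Set.range z)) ≤ finrank ℝ (ℝ ∙ P)ᗮ :=
    Submodule.finrank_mono h2
  have h4 : finrank ℝ (ℝ ∙ P) + finrank ℝ (ℝ ∙ P)ᗮ = finrank ℝ E :=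
    Submodule.finrank_add_finrank_orthogonal _
  have h5 : finrank ℝ (ℝ ∙ P) = 1 := finrank_span_singleton hP
  omega

/-- Extract weights indexed by the fintype `ι` itself from membership of the convex hull
of the range of `g : ι → E`. -/
lemma tv_exists_weights {ι : Type*} [Fintype ι] {E : Type*} [AddCommGroup E] [Module ℝ E]
    {g : ι → E} {P : E} (h : P ∈ convexHull ℝ (Set.range g)) :
    ∃ l : ι → ℝ, (∀ i, 0 ≤ l i) ∧ ∑ i, l i = 1 ∧ ∑ i, l i • g i = P := by
  classical
  obtain ⟨κ, hκ, w, z, hw0, hw1, hz, hx⟩ := mem_convexHull_iff_exists_fintype.1 h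
  choose φ hφ using fun i => (hz i : z i ∈ Set.range g)
  refine ⟨fun j => ∑ i ∈ univ.filter (fun i => φ i = j), w i, fun j => sum_nonneg fun i _ => hw0 i,
    ?_, ?_⟩
  · rw [Finset.sum_fiberwise_of_maps_to (fun i _ => mem_univ (φ i)) w, hw1]
  · rw [← hx]
    have : ∀ j : ι, (∑ i ∈ univ.filter (fun i => φ i = j), w i) • g j
        = ∑ i ∈ univ.filter (fun i => φ i = j), w i • z i := by
      intro j
      rw [Finset.sum_smul]
      refine Finset.sum_congr rfl fun i hi => ?_
      rw [mem_filter] at hi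
      rw [← hφ i, hi.2]
    rw [Finset.sum_congr rfl fun j _ => this j]
    exact Finset.sum_fiberwise_of_maps_to (fun i _ => mem_univ (φ i)) _

/-- **Colorful Carathéodory theorem** (Bárány). If `m ≥ finrank E + 1` finite "color classes"
(each of size `r`) all contain `0` in their convex hulls, one can pick one point of each color
so that `0` is in the convex hull of the picked points. -/
lemma tv_colorful {E : Type*} [NormedAddCommGroup E] [InnerProductSpace ℝ E]
    [FiniteDimensional ℝ E] {m r : ℕ} (hm : finrank ℝ E + 1 ≤ m) (hr : 0 < r)
    (f : Fin m → Fin r → E)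
    (hf : ∀ i, (0 : E) ∈ convexHull ℝ (Set.range (f i))) :
    ∃ c : Fin m → Fin r, (0 : E) ∈ convexHull ℝ (Set.range fun i => f i (c i)) := by
  classical
  have hm0 : 0 < m := lt_of_lt_of_le (Nat.succ_pos _) hm
  haveI : Nonempty (Fin m) := ⟨⟨0, hm0⟩⟩
  haveI : Nonempty (Fin r) := ⟨⟨0, hr⟩⟩
  -- choose a norm-minimizing point in each transversal's hull
  have key : ∀ c : Fin m → Fin r, ∃ p, p ∈ convexHull ℝ (Set.range fun i => f i (c i)) ∧
      ∀ z ∈ convexHull ℝ (Set.range fun i => f i (c i)), ‖p‖ ≤ ‖z‖ := by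
    intro c
    have hK : IsCompact (convexHull ℝ (Set.range fun i => f i (c i))) :=
      (Set.finite_range _).isCompact_convexHull (𝕜 := ℝ)
    have hne : (convexHull ℝ (Set.range fun i => f i (c i))).Nonempty :=
      (Set.range_nonempty _).convexHull
    obtain ⟨p, hp, hpmin⟩ := hK.exists_isMinOn hne (continuous_norm.continuousOn)
    exact ⟨p, hp, fun z hz => hpmin hz⟩
  choose p hpK hpmin using key
  obtain ⟨c₀, -, hc₀⟩ := Finset.exists_min_image Finset.univ (fun c => ‖p c‖) univ_nonempty
  set g : Fin m → E := fun i => f i (c₀ i) with hg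
  set P : E := p c₀ with hPdef
  by_cases hP : P = 0
  · exact ⟨c₀, hP ▸ hpK c₀⟩
  exfalso
  have hPn : (0 : ℝ) < ‖P‖ ^ 2 := by
    have := norm_pos_iff.2 hP; positivity
  -- Step A: the hull lies in the halfspace ⟪P,·⟫ ≥ ‖P‖²
  have stepA : ∀ z ∈ convexHull ℝ (Set.range g), ‖P‖ ^ 2 ≤ ⟪P, z⟫ := by
    intro z hz
    by_contra hlt
    push_neg at hlt
    obtain ⟨s, hs0, hs1, hq⟩ := tv_improve hlt
    have hqK : (1 - s) • P + s • z ∈ convexHull ℝ (Set.range g) :=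
      (convex_convexHull ℝ _) (hpK c₀) hz (by linarith) hs0 (by ring)
    exact absurd (hpmin c₀ _ hqK) (not_le.2 hq)
  -- weights for P
  obtain ⟨l, hl0, hl1, hlP⟩ := tv_exists_weights (hpK c₀)
  -- forcing: the support lies in the hyperplane
  have force : ∀ i, 0 < l i → ⟪P, g i⟫ = ‖P‖ ^ 2 := by
    intro i hi
    by_contra hne
    have hle : ∀ j, ‖P‖ ^ 2 ≤ ⟪P, g j⟫ := fun j =>
      stepA _ (subset_convexHull ℝ _ (Set.mem_range_self j))
    have hgt : ‖P‖ ^ 2 < ⟪P, g i⟫ := lt_of_le_of_ne (hle i) (Ne.symm hne)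
    have hlt : ∑ j, l j * ‖P‖ ^ 2 < ∑ j, l j * ⟪P, g j⟫ := by
      refine Finset.sum_lt_sum (fun j _ => mul_le_mul_of_nonneg_left (hle j) (hl0 j))
        ⟨i, Finset.mem_univ i, mul_lt_mul_of_pos_left hgt hi⟩
    have hL : ∑ j, l j * ‖P‖ ^ 2 = ‖P‖ ^ 2 := by
      rw [← Finset.sum_mul, hl1, one_mul]
    have hR : ∑ j, l j * ⟪P, g j⟫ = ‖P‖ ^ 2 := by
      have : ∑ j, l j * ⟪P, g j⟫ = ⟪P, ∑ j, l j • g j⟫ := by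
        rw [inner_sum]
        exact Finset.sum_congr rfl fun j _ => (real_inner_smul_right _ _ _).symm
      rw [this, hlP, real_inner_self_eq_norm_sq]
    rw [hL, hR] at hlt
    exact lt_irrefl _ hlt
  -- restrict to the support
  set supp : Finset (Fin m) := Finset.univ.filter (fun i => 0 < l i) with hsupp
  have hsum_supp : ∑ i ∈ supp, l i = 1 := by
    rw [hsupp, Finset.sum_filter_of_ne (fun i _ hne => lt_of_le_of_ne (hl0 i) (Ne.symm hne)), hl1]
  have hsum_vec : ∑ i ∈ supp, l i • g i = P := by
    rw [hsupp, Finset.sum_filter_of_ne, hlP]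
    intro i _ hne
    rcases lt_of_le_of_ne (hl0 i) (fun h => hne (by rw [← h, zero_smul])) with h
    exact h
  have hPmem : P ∈ convexHull ℝ (g '' ↑supp) := by
    have := supp.centerMass_mem_convexHull (fun i _ => hl0 i)
      (by rw [hsum_supp]; exact one_pos) (fun i hi => Set.mem_image_of_mem g (by exact_mod_cast hi))
    rwa [Finset.centerMass_eq_of_sum_1 _ _ hsum_supp, hsum_vec] at this
  -- Carathéodory with affine independence
  obtain ⟨κ, hκ, z, w, hz_sub, hz_ai, hw_pos, hw1, hwz⟩ :=
    eq_pos_convex_span_of_mem_convexHull hPmem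
  haveI : Nonempty κ := by
    rcases isEmpty_or_nonempty κ with hemp | hne
    · rw [Finset.univ_eq_empty, Finset.sum_empty] at hw1
      exact absurd hw1 (by norm_num)
    · exact hne
  have hzH : ∀ i, ⟪P, z i⟫ = ‖P‖ ^ 2 := by
    intro i
    obtain ⟨a, ha_supp, ha_eq⟩ := hz_sub (Set.mem_range_self i)
    rw [← ha_eq]
    have : a ∈ supp := ha_supp
    exact force a (Finset.mem_filter.1 this).2
  have hcard : Fintype.card κ ≤ finrank ℝ E := tv_card_le hP hz_ai hzH
  -- an unused index
  choose ψ hψsupp hψeq using fun i => hz_sub (Set.mem_range_self i)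
  set used : Finset (Fin m) := Finset.univ.image ψ with hused
  have husedcard : used.card ≤ Fintype.card κ := by
    refine le_trans Finset.card_image_le ?_
    simp
  obtain ⟨i0, hi0⟩ : ∃ i0 : Fin m, i0 ∉ used := by
    by_contra hall
    push_neg at hall
    have : (Finset.univ : Finset (Fin m)).card ≤ used.card :=
      Finset.card_le_card (fun i _ => hall i)
    rw [Finset.card_univ, Fintype.card_fin] at this
    omega
  -- a point of color i0 on the other side
  obtain ⟨j0, hj0⟩ : ∃ j0, ⟪P, f i0 j0⟫ ≤ 0 := by
    by_contra hall
    push_neg at hall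
    have hconv : convexHull ℝ (Set.range (f i0)) ⊆ {y | (0 : ℝ) < ⟪P, y⟫} := by
      refine convexHull_min ?_ (convex_halfSpace_gt ⟨fun a b => inner_add_right _ _ _,
        fun t a => real_inner_smul_right _ _ _⟩ 0)
      rintro y ⟨j, rfl⟩
      exact hall j
    have := hconv (hf i0)
    simp at this
  set c₁ : Fin m → Fin r := Function.update c₀ i0 j0 with hc₁
  have hPK' : P ∈ convexHull ℝ (Set.range fun i => f i (c₁ i)) := by
    refine mem_convexHull_of_exists_fintype w (fun i => f (ψ i) (c₁ (ψ i)))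
      (fun i => le_of_lt (hw_pos i)) hw1 (fun i => ⟨ψ i, rfl⟩) ?_
    rw [← hwz]
    refine Finset.sum_congr rfl fun i _ => ?_
    have hne : ψ i ≠ i0 := by
      intro hcontra
      exact hi0 (hcontra ▸ Finset.mem_image_of_mem ψ (Finset.mem_univ i))
    show w i • f (ψ i) (Function.update c₀ i0 j0 (ψ i)) = w i • z i
    rw [Function.update_of_ne hne]
    rw [show f (ψ i) (c₀ (ψ i)) = g (ψ i) from rfl, hψeq i]
  have hy' : f i0 j0 ∈ convexHull ℝ (Set.range fun i => f i (c₁ i)) :=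
    subset_convexHull ℝ _ ⟨i0, by simp [hc₁]⟩
  have hlt : ⟪P, f i0 j0⟫ < ‖P‖ ^ 2 := lt_of_le_of_lt hj0 hPn
  obtain ⟨s, hs0, hs1, hq⟩ := tv_improve hlt
  have hqK : (1 - s) • P + s • f i0 j0 ∈ convexHull ℝ (Set.range fun i => f i (c₁ i)) :=
    (convex_convexHull ℝ _) hPK' hy' (by linarith) hs0 (by ring)
  have h1 : ‖p c₁‖ ≤ ‖(1 - s) • P + s • f i0 j0‖ := hpmin c₁ _ hqK
  have h2 : ‖P‖ ≤ ‖p c₁‖ := hc₀ c₁ (Finset.mem_univ c₁)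
  linarith

/-- **Tverberg's theorem.** If `m ≥ (r-1)(d+1)+1`, then any `m` points in `ℝ^d` can be
partitioned into `r` pairwise disjoint parts whose convex hulls have a point in common. -/
theorem tverberg (m r d : ℕ) (hm : 0 < m) (hr : 0 < r) (hd : 0 < d)
    (h : (r - 1) * (d + 1) + 1 ≤ m)
    (x : Fin m → EuclideanSpace ℝ (Fin d)) :
    ∃ S : Fin r → Finset (Fin m),
      (∀ i j : Fin r, i ≠ j → Disjoint (S i) (S j)) ∧
      (Finset.univ.biUnion S = Finset.univ) ∧
      ∃ p : EuclideanSpace ℝ (Fin d),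
        ∀ j : Fin r, p ∈ convexHull ℝ (x '' (S j : Set (Fin m))) := by
  classical
  obtain ⟨e, rfl⟩ : ∃ e, r = e + 1 := ⟨r - 1, (Nat.succ_pred_eq_of_pos hr).symm⟩
  have hm' : e * (d + 1) + 1 ≤ m := by simpa using h
  set L : ((Fin (d + 1) × Fin e) → ℝ) ≃ₗ[ℝ] EuclideanSpace ℝ (Fin (d + 1) × Fin e) :=
    (WithLp.linearEquiv 2 ℝ ((Fin (d + 1) × Fin e) → ℝ)).symm with hL
  set xb : Fin m → Fin (d + 1) → ℝ :=
    fun i a => if h : (a : ℕ) < d then x i ⟨a, h⟩ else 1 with hxb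
  set v : Fin (e + 1) → Fin e → ℝ := fun j k =>
    (if j = Fin.castSucc k then 1 else 0) - (if j = Fin.last e then 1 else 0) with hv
  set F : Fin m → Fin (e + 1) → ((Fin (d + 1) × Fin e) → ℝ) := fun i j q => xb i q.1 * v j q.2 with hF
  set f : Fin m → Fin (e + 1) → EuclideanSpace ℝ (Fin (d + 1) × Fin e) := fun i j => L (F i j) with hf
  have hv_sum : ∀ k : Fin e, ∑ j, v j k = 0 := by
    intro k
    simp [hv, Finset.sum_sub_distrib, Finset.sum_ite_eq']
  have hv_key : ∀ (c : Fin (e + 1) → ℝ) (k : Fin e),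
      ∑ j, c j * v j k = c (Fin.castSucc k) - c (Fin.last e) := by
    intro c k
    simp [hv, mul_sub, Finset.sum_sub_distrib, mul_ite, mul_one, mul_zero,
      Finset.sum_ite_eq']
  -- each color class contains 0 in its convex hull
  have hf0 : ∀ i, (0 : EuclideanSpace ℝ (Fin (d + 1) × Fin e)) ∈ convexHull ℝ (Set.range (f i)) := by
    intro i
    have hepos : (0 : ℝ) < (e : ℝ) + 1 := by positivity
    refine mem_convexHull_of_exists_fintype (fun _ => ((e : ℝ) + 1)⁻¹) (f i)
      (fun _ => by positivity) ?_ (fun j => Set.mem_range_self j) ?_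
    · rw [Finset.sum_const, Finset.card_univ, Fintype.card_fin, nsmul_eq_mul]
      push_cast
      field_simp
    · have hin : ∑ j, ((e : ℝ) + 1)⁻¹ • F i j = 0 := by
        funext q
        rw [Finset.sum_apply]
        have : ∀ j, (((e : ℝ) + 1)⁻¹ • F i j) q = (((e : ℝ) + 1)⁻¹ * xb i q.1) * v j q.2 := by
          intro j
          rw [Pi.smul_apply, smul_eq_mul]
          show ((e : ℝ) + 1)⁻¹ * (xb i q.1 * v j q.2) = _
          ring
        rw [Finset.sum_congr rfl fun j _ => this j, ← Finset.mul_sum, hv_sum q.2,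
          mul_zero]
        rfl
      calc ∑ j, ((e : ℝ) + 1)⁻¹ • f i j = L (∑ j, ((e : ℝ) + 1)⁻¹ • F i j) := by
            rw [map_sum]
            exact Finset.sum_congr rfl fun j _ => (map_smul L _ _).symm
        _ = 0 := by rw [hin, map_zero]
  -- apply colorful Carathéodory
  have hrank : finrank ℝ (EuclideanSpace ℝ (Fin (d + 1) × Fin e)) + 1 ≤ m := by
    have h2 : finrank ℝ (EuclideanSpace ℝ (Fin (d + 1) × Fin e)) = (d + 1) * e := by
      rw [finrank_euclideanSpace]
      simp
    rw [h2, Nat.mul_comm]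
    exact hm'
  obtain ⟨c, hc⟩ := tv_colorful hrank (Nat.succ_pos e) f hf0
  obtain ⟨l, hl0, hl1, hlP⟩ := tv_exists_weights hc
  -- transport the vanishing combination back to the plain pi type and coordinates
  have hsum0 : ∑ i, l i • F i (c i) = 0 := by
    have h1 := congrArg L.symm hlP
    rw [map_sum, map_zero] at h1
    calc ∑ i, l i • F i (c i) = ∑ i, L.symm (l i • f i (c i)) := by
          refine Finset.sum_congr rfl fun i _ => ?_
          rw [map_smul, hf]
          rw [L.symm_apply_apply]
      _ = 0 := h1
  have hcoord : ∀ (a : Fin (d + 1)) (k : Fin e),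
      ∑ i, l i * (xb i a * v (c i) k) = 0 := by
    intro a k
    have h1 := congrFun hsum0 (a, k)
    rw [Finset.sum_apply] at h1
    simpa [hF] using h1
  -- the partition
  set S : Fin (e + 1) → Finset (Fin m) := fun j => Finset.univ.filter (fun i => c i = j)
    with hS
  have hdisj : ∀ j₁ j₂ : Fin (e + 1), j₁ ≠ j₂ → Disjoint (S j₁) (S j₂) := by
    intro j₁ j₂ hne
    refine Finset.disjoint_left.2 fun i hi₁ hi₂ => ?_
    rw [hS, Finset.mem_filter] at hi₁ hi₂
    exact hne (hi₁.2 ▸ hi₂.2)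
  have hcover : Finset.univ.biUnion S = Finset.univ := by
    apply Finset.eq_univ_of_forall
    intro i
    rw [Finset.mem_biUnion]
    exact ⟨c i, Finset.mem_univ _, by rw [hS, Finset.mem_filter]; exact ⟨Finset.mem_univ _, rfl⟩⟩
  -- fiberwise sums
  set W : Fin (e + 1) → Fin (d + 1) → ℝ := fun j a => ∑ i ∈ S j, l i * xb i a with hW
  have hWv : ∀ (a : Fin (d + 1)) (k : Fin e), ∑ j, W j a * v j k = 0 := by
    intro a k
    have step1 : ∀ j, W j a * v j k = ∑ i ∈ S j, l i * (xb i a * v (c i) k) := by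
      intro j
      rw [hW]
      show (∑ i ∈ S j, l i * xb i a) * v j k = _
      rw [Finset.sum_mul]
      refine Finset.sum_congr rfl fun i hi => ?_
      have hci : c i = j := by
        have h3 := hi
        rw [hS] at h3
        exact (Finset.mem_filter.1 h3).2
      rw [hci]; ring
    rw [Finset.sum_congr rfl fun j _ => step1 j, hS]
    rw [Finset.sum_fiberwise_of_maps_to (fun i _ => Finset.mem_univ (c i))]
    exact hcoord a k
  -- all fiberwise sums are equal
  have hWeq : ∀ (j : Fin (e + 1)) (a : Fin (d + 1)), W j a = W (Fin.last e) a := by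
    intro j a
    induction j using Fin.lastCases with
    | last => rfl
    | cast k =>
        have h1 := hv_key (fun j => W j a) k
        rw [hWv a k] at h1
        have := h1.symm
        linarith [this]
  -- the common weight
  have hlast : ∀ i : Fin m, xb i (Fin.last d) = 1 := by
    intro i
    simp only [hxb]
    rw [dif_neg (by simp)]
  set σ : ℝ := W (Fin.last e) (Fin.last d) with hσ
  have hWsum : ∀ j, ∑ i ∈ S j, l i = σ := by
    intro j
    have h1 : W j (Fin.last d) = ∑ i ∈ S j, l i := by
      rw [hW]
      exact Finset.sum_congr rfl fun i _ => by rw [hlast i, mul_one]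
    rw [← h1, hWeq j (Fin.last d), hσ]
  have hσsum : ((e : ℝ) + 1) * σ = 1 := by
    have h1 : ∑ j : Fin (e + 1), ∑ i ∈ S j, l i = 1 := by
      rw [hS, Finset.sum_fiberwise_of_maps_to (fun i _ => Finset.mem_univ (c i)) l]
      exact hl1
    rw [Finset.sum_congr rfl (fun j _ => hWsum j)] at h1
    rw [Finset.sum_const, Finset.card_univ, Fintype.card_fin, nsmul_eq_mul] at h1
    push_cast at h1
    exact h1
  have hσpos : 0 < σ := by
    have hepos : (0 : ℝ) < (e : ℝ) + 1 := by positivity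
    nlinarith
  -- the common point
  set Ld : (Fin d → ℝ) ≃ₗ[ℝ] EuclideanSpace ℝ (Fin d) :=
    (WithLp.linearEquiv 2 ℝ (Fin d → ℝ)).symm with hLd
  set p : EuclideanSpace ℝ (Fin d) :=
    Ld (fun b => ((e : ℝ) + 1) * W (Fin.last e) (Fin.castSucc b)) with hp
  refine ⟨S, hdisj, hcover, p, ?_⟩
  intro j
  have hxbc : ∀ (i : Fin m) (b : Fin d), xb i (Fin.castSucc b) = x i b := by
    intro i b
    have hb : ((Fin.castSucc b : Fin (d + 1)) : ℕ) < d := by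
      simpa using b.isLt
    simp only [hxb]
    rw [dif_pos hb]
    rfl
  have hSpos : 0 < ∑ i ∈ S j, l i := by rw [hWsum j]; exact hσpos
  have hmem := (S j).centerMass_mem_convexHull (fun i _ => hl0 i) hSpos
    (fun i hi => Set.mem_image_of_mem x (Finset.mem_coe.2 hi))
  have hvec : ∑ i ∈ S j, l i • x i = σ • p := by
    apply Ld.symm.injective
    rw [map_sum, map_smul]
    funext b
    rw [Finset.sum_apply]
    have hterm : ∀ i, (Ld.symm (l i • x i)) b = l i * xb i (Fin.castSucc b) := by
      intro i
      rw [map_smul, Pi.smul_apply, smul_eq_mul, hxbc i b]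
      rfl
    rw [Finset.sum_congr rfl fun i _ => hterm i]
    have hpb : (Ld.symm p) b = ((e : ℝ) + 1) * W (Fin.last e) (Fin.castSucc b) := by
      rw [hp, hLd]
      rw [LinearEquiv.symm_apply_apply]
    rw [Pi.smul_apply, smul_eq_mul, hpb]
    calc ∑ i ∈ S j, l i * xb i (Fin.castSucc b) = W j (Fin.castSucc b) := by rw [hW]
      _ = W (Fin.last e) (Fin.castSucc b) := hWeq j _
      _ = σ * (((e : ℝ) + 1) * W (Fin.last e) (Fin.castSucc b)) := by
          rw [← mul_assoc, mul_comm σ, hσsum, one_mul]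
  have hcm : (S j).centerMass l x = p := by
    rw [Finset.centerMass, hvec, hWsum j, smul_smul, inv_mul_cancel₀ (ne_of_gt hσpos),
      one_smul]
  rw [← hcm]
  exact hmem
end

section
/- Let S_1, S_2, ..., S_{d+1} be subsets of ℝ^d and let x be a point with x ∈ conv S_i for every i = 1, ..., d+1. Then there exist points x_1 ∈ S_1, x_2 ∈ S_2, ..., x_{d+1} ∈ S_{d+1} such that x ∈ conv{x_1, ..., x_{d+1}}. -/
open Metric Set Finset
open scoped RealInnerProductSpace

theorem colorful_caratheodory_finset (d : ℕ)
    (T : Fin (d + 1) → Finset (EuclideanSpace ℝ (Fin d)))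
    (x : EuclideanSpace ℝ (Fin d)) (hx : ∀ i, x ∈ convexHull ℝ (T i : Set _)) :
    ∃ y : Fin (d + 1) → EuclideanSpace ℝ (Fin d),
      (∀ i, y i ∈ T i) ∧ x ∈ convexHull ℝ (Set.range y) := by
  classical

  have hTne : ∀ i, (T i).Nonempty := fun i => by
    have := convexHull_nonempty_iff.mp ⟨x, hx i⟩
    exact_mod_cast this
  have hpi : (Fintype.piFinset T).Nonempty := Fintype.piFinset_nonempty.mpr hTne
  obtain ⟨y, hypi, hmin⟩ := Finset.exists_min_image (Fintype.piFinset T)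
    (fun y => Metric.infDist x (convexHull ℝ (Set.range y))) hpi
  have hyT : ∀ i, y i ∈ T i := Fintype.mem_piFinset.mp hypi
  set K := convexHull ℝ (Set.range y) with hKdef
  have hKc : IsCompact K := (Set.finite_range y).isCompact_convexHull ℝ
  have hKne : K.Nonempty := ⟨y 0, subset_convexHull ℝ _ ⟨0, rfl⟩⟩
  obtain ⟨z, hzK, hz⟩ := hKc.exists_infDist_eq_dist hKne x
  rcases eq_or_ne x z with rfl | hne
  · exact ⟨y, hyT, hzK⟩
  exfalso
  -- variational inequality
  have hvar : ∀ w ∈ K, ⟪x - z, w - z⟫ ≤ 0 := by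
    rw [← norm_eq_iInf_iff_real_inner_le_zero (convex_convexHull ℝ _) hzK]
    rw [← dist_eq_norm, ← hz, Metric.infDist_eq_iInf]
    simp only [dist_eq_norm]
    rfl
  set v := x - z with hvdef
  have hv : v ≠ 0 := sub_ne_zero.mpr hne
  have hg : ∀ w ∈ K, ⟪v, w⟫ ≤ ⟪v, z⟫ := fun w hw => by
    have := hvar w hw
    rwa [inner_sub_right, sub_nonpos] at this
  -- express z as a convex combination of the y i
  set s₀ : Finset (EuclideanSpace ℝ (Fin d)) := Finset.image y Finset.univ with hs₀def
  have hs₀ : (s₀ : Set (EuclideanSpace ℝ (Fin d))) = Set.range y := by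
    rw [hs₀def, Finset.coe_image, Finset.coe_univ, Set.image_univ]
  obtain ⟨w, hw0, hw1, hwz⟩ : ∃ w : EuclideanSpace ℝ (Fin d) → ℝ, (∀ p ∈ s₀, 0 ≤ w p) ∧ ∑ p ∈ s₀, w p = 1 ∧
      ∑ p ∈ s₀, w p • p = z := Finset.mem_convexHull'.mp (by rw [hs₀]; exact hzK)
  set s' : Finset (EuclideanSpace ℝ (Fin d)) := s₀.filter (fun p => w p ≠ 0) with hs'def
  have hw1' : ∑ p ∈ s', w p = 1 := by rw [hs'def, Finset.sum_filter_ne_zero]; exact hw1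
  have hwz' : ∑ p ∈ s', w p • p = z := by
    rw [show s' = s₀.filter (fun p => w p ≠ 0) from rfl, Finset.sum_filter_of_ne]
    · exact hwz
    · intro p _ h h0
      exact h (by simp [h0])
  have hs'K : ∀ p ∈ s', p ∈ K := fun p hp => subset_convexHull ℝ _ (by
    rw [← hs₀]; exact_mod_cast Finset.mem_of_mem_filter p hp)
  -- all support points lie on the hyperplane
  have hplane : ∀ p ∈ s', ⟪v, p⟫ = ⟪v, z⟫ := by
    have hsum : ∑ p ∈ s', w p * (⟪v, z⟫ - ⟪v, p⟫) = 0 := by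
      have h1 : ∑ p ∈ s', w p * ⟪v, p⟫ = ⟪v, z⟫ := by
        rw [← hwz', inner_sum]
        exact Finset.sum_congr rfl fun p _ => (real_inner_smul_right _ _ _).symm
      have h2 : ∑ p ∈ s', w p * ⟪v, z⟫ = ⟪v, z⟫ := by
        rw [← Finset.sum_mul, hw1', one_mul]
      calc ∑ p ∈ s', w p * (⟪v, z⟫ - ⟪v, p⟫)
          = ∑ p ∈ s', (w p * ⟪v, z⟫ - w p * ⟪v, p⟫) := by
            exact Finset.sum_congr rfl fun p _ => mul_sub _ _ _
        _ = 0 := by rw [Finset.sum_sub_distrib, h1, h2, sub_self]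
    intro p hp
    have hterm := (Finset.sum_eq_zero_iff_of_nonneg (fun q hq =>
      mul_nonneg (hw0 q (Finset.mem_of_mem_filter q hq))
        (sub_nonneg.mpr (hg q (hs'K q hq))))).mp hsum p hp
    have hwp : w p ≠ 0 := (Finset.mem_filter.mp hp).2
    have := mul_eq_zero.mp hterm
    rcases this with h | h
    · exact absurd h hwp
    · linarith [sub_eq_zero.mp h]
  have hzs' : z ∈ convexHull ℝ (s' : Set (EuclideanSpace ℝ (Fin d))) :=
    Finset.mem_convexHull'.mpr ⟨w, fun p hp => hw0 p (Finset.mem_of_mem_filter p hp), hw1', hwz'⟩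
  -- Carathéodory with affine independence
  rw [convexHull_eq_union] at hzs'
  simp only [Set.mem_iUnion] at hzs'
  obtain ⟨t, hts', hai, hzt⟩ := hzs'
  have htne : t.Nonempty := by
    have := convexHull_nonempty_iff.mp ⟨z, hzt⟩
    exact_mod_cast this
  -- cardinality bound : t.card ≤ d
  have hcard : t.card ≤ d := by
    have hker : vectorSpan ℝ (t : Set (EuclideanSpace ℝ (Fin d))) ≤ LinearMap.ker ((innerSL ℝ v : EuclideanSpace ℝ (Fin d) →L[ℝ] ℝ) : EuclideanSpace ℝ (Fin d) →ₗ[ℝ] ℝ) := by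
      rw [vectorSpan_def]
      rw [Submodule.span_le]
      rintro u ⟨a, ha, b, hb, rfl⟩
      have ha' := hplane a (hts' ha)
      have hb' := hplane b (hts' hb)
      simp only [SetLike.mem_coe, LinearMap.mem_ker, ContinuousLinearMap.coe_coe, innerSL_apply_apply,
        vsub_eq_sub]
      rw [inner_sub_right, ha', hb', sub_self]
    have hkerlt : LinearMap.ker ((innerSL ℝ v : EuclideanSpace ℝ (Fin d) →L[ℝ] ℝ) : EuclideanSpace ℝ (Fin d) →ₗ[ℝ] ℝ) < ⊤ := by
      rw [lt_top_iff_ne_top]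
      intro h
      have : v ∈ LinearMap.ker ((innerSL ℝ v : EuclideanSpace ℝ (Fin d) →L[ℝ] ℝ) : EuclideanSpace ℝ (Fin d) →ₗ[ℝ] ℝ) := h ▸ Submodule.mem_top
      simp only [LinearMap.mem_ker, ContinuousLinearMap.coe_coe, innerSL_apply_apply] at this
      exact hv (inner_self_eq_zero.mp this)
    have hrange : Set.range (Subtype.val : {p // p ∈ t} → EuclideanSpace ℝ (Fin d)) =
        (t : Set (EuclideanSpace ℝ (Fin d))) := Subtype.range_coe
    have h1 : Module.finrank ℝ
        (vectorSpan ℝ (Set.range (Subtype.val : {p // p ∈ t} → EuclideanSpace ℝ (Fin d)))) ≤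
        Module.finrank ℝ (LinearMap.ker ((innerSL ℝ v : EuclideanSpace ℝ (Fin d) →L[ℝ] ℝ) : EuclideanSpace ℝ (Fin d) →ₗ[ℝ] ℝ)) := by
      rw [hrange]; exact Submodule.finrank_mono hker
    have h2 : Module.finrank ℝ (LinearMap.ker ((innerSL ℝ v : EuclideanSpace ℝ (Fin d) →L[ℝ] ℝ) : EuclideanSpace ℝ (Fin d) →ₗ[ℝ] ℝ)) <
        Module.finrank ℝ (EuclideanSpace ℝ (Fin d)) := Submodule.finrank_lt hkerlt.ne
    have h3 : Module.finrank ℝ (EuclideanSpace ℝ (Fin d)) = d := finrank_euclideanSpace_fin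
    have : Nonempty t := htne.to_subtype
    have h4 := hai.finrank_vectorSpan_add_one
    rw [Fintype.card_coe] at h4
    omega
  -- choose preimage indices
  have hchoice : ∀ p ∈ t, ∃ i, y i = p := fun p hp => by
    have : p ∈ s₀ := Finset.mem_of_mem_filter p (hts' hp)
    simpa [hs₀def] using this
  let c : EuclideanSpace ℝ (Fin d) → Fin (d + 1) := fun p => if h : ∃ i, y i = p then h.choose else 0
  have hc : ∀ p ∈ t, y (c p) = p := fun p hp => by
    simp only [c, dif_pos (hchoice p hp)]
    exact (hchoice p hp).choose_spec
  have hcinj : ∀ p ∈ t, ∀ q ∈ t, c p = c q → p = q := fun p hp q hq h => by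
    rw [← hc p hp, ← hc q hq, h]
  have himcard : (t.image c).card ≤ d := le_trans (Finset.card_image_le) hcard
  have himne : t.image c ≠ Finset.univ := fun h => by
    rw [h, Finset.card_univ, Fintype.card_fin] at himcard; omega
  obtain ⟨j, -, hj⟩ := Finset.exists_of_ssubset
    (lt_of_le_of_ne (Finset.subset_univ _) himne)
  have hcj : ∀ p ∈ t, c p ≠ j := fun p hp h =>
    hj (h ▸ Finset.mem_image_of_mem c hp)
  -- find a replacement point in T j
  have hexp : ∃ p ∈ T j, ⟪v, z⟫ < ⟪v, p⟫ := by
    by_contra h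
    push_neg at h
    have hconv : Convex ℝ {u : EuclideanSpace ℝ (Fin d) | ⟪v, u⟫ ≤ ⟪v, z⟫} :=
      convex_halfSpace_le ⟨fun a b => inner_add_right v a b,
        fun c a => real_inner_smul_right v a c⟩ _
    have hxle : x ∈ {u : EuclideanSpace ℝ (Fin d) | ⟪v, u⟫ ≤ ⟪v, z⟫} :=
      convexHull_min (fun p hp => h p hp) hconv (hx j)
    have : ⟪v, v⟫ ≤ 0 := by
      have hx' : ⟪v, x⟫ ≤ ⟪v, z⟫ := hxle
      rw [hvdef, inner_sub_right]
      linarith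
    exact hv (real_inner_self_nonpos.mp this)
  obtain ⟨p, hpT, hpgt⟩ := hexp
  -- the swapped transversal
  set y' : Fin (d + 1) → EuclideanSpace ℝ (Fin d) := Function.update y j p with hy'def
  have hy'T : ∀ i, y' i ∈ T i := fun i => by
    rcases eq_or_ne i j with rfl | h
    · rw [hy'def, Function.update_self]; exact hpT
    · rw [hy'def, Function.update_of_ne h]; exact hyT i
  have hy'pi : y' ∈ Fintype.piFinset T := Fintype.mem_piFinset.mpr hy'T
  set K' := convexHull ℝ (Set.range y') with hK'def
  have htK' : (t : Set (EuclideanSpace ℝ (Fin d))) ⊆ Set.range y' := fun q hq => by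
    have hq' : q ∈ t := hq
    exact ⟨c q, by rw [hy'def, Function.update_of_ne (hcj q hq'), hc q hq']⟩
  have hzK' : z ∈ K' := convexHull_mono htK' (by exact hzt)
  have hpK' : p ∈ K' := subset_convexHull ℝ _ ⟨j, by rw [hy'def, Function.update_self]⟩
  -- strict decrease
  set α : ℝ := ⟪v, p - z⟫ with hαdef
  have hα : 0 < α := by rw [hαdef, inner_sub_right]; linarith
  have hpz : p - z ≠ 0 := fun h => by
    rw [hαdef, h, inner_zero_right] at hα; exact lt_irrefl _ hα
  set β : ℝ := ‖p - z‖ ^ 2 with hβdef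
  have hβ : 0 < β := by rw [hβdef]; exact pow_pos (norm_pos_iff.mpr hpz) 2
  set θ : ℝ := min 1 (α / β) with hθdef
  have hθ0 : 0 < θ := lt_min one_pos (div_pos hα hβ)
  have hθ1 : θ ≤ 1 := min_le_left _ _
  have hθβ : θ * β ≤ α := by
    have := min_le_right (1:ℝ) (α / β)
    calc θ * β ≤ (α / β) * β := by
          exact mul_le_mul_of_nonneg_right this hβ.le
      _ = α := div_mul_cancel₀ α hβ.ne'
  set q : EuclideanSpace ℝ (Fin d) := z + θ • (p - z) with hqdef
  have hqK' : q ∈ K' := by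
    have : q = (1 - θ) • z + θ • p := by
      rw [hqdef, sub_smul, one_smul, smul_sub]
      abel
    rw [this]
    exact (convex_convexHull ℝ _) hzK' hpK' (by linarith) hθ0.le (by ring)
  have hdq : dist x q < dist x z := by
    have hxq : x - q = v - θ • (p - z) := by rw [hqdef, hvdef]; abel
    have hsq : ‖x - q‖ ^ 2 < ‖v‖ ^ 2 := by
      rw [hxq, norm_sub_sq_real]
      have h1 : ⟪v, θ • (p - z)⟫ = θ * α := real_inner_smul_right _ _ _
      have h2 : ‖θ • (p - z)‖ ^ 2 = θ ^ 2 * β := by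
        rw [norm_smul, mul_pow, hβdef, Real.norm_eq_abs, sq_abs]
      rw [h1, h2]
      nlinarith
    have h0' : (0:ℝ) ≤ ‖v‖ := norm_nonneg _
    rw [dist_eq_norm, dist_eq_norm, ← hvdef]
    exact lt_of_pow_lt_pow_left₀ 2 h0' hsq
  have hle := hmin y' hy'pi
  have : Metric.infDist x K' ≤ dist x q := Metric.infDist_le_dist_of_mem hqK'
  simp only [← hK'def] at hle
  rw [hz] at hle
  linarith

/-- **The colorful Carathéodory theorem** (Bárány). If `x` lies in the convex hull of each of
`d+1` sets `S 0, …, S d` in `ℝ^d`, then there is a transversal (rainbow set)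
`x_i ∈ S i` with `x` in its convex hull. -/
theorem colorful_caratheodory (d : ℕ) (S : Fin (d + 1) → Set (EuclideanSpace ℝ (Fin d)))
    (x : EuclideanSpace ℝ (Fin d)) (hx : ∀ i, x ∈ convexHull ℝ (S i)) :
    ∃ y : Fin (d + 1) → EuclideanSpace ℝ (Fin d),
      (∀ i, y i ∈ S i) ∧ x ∈ convexHull ℝ (Set.range y) := by
  have hfin : ∀ i, ∃ t : Finset (EuclideanSpace ℝ (Fin d)),
      ↑t ⊆ S i ∧ x ∈ convexHull ℝ (t : Set _) := by
    intro i
    have := hx i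
    rw [convexHull_eq_union_convexHull_finite_subsets] at this
    simpa using this
  choose T hTS hxT using hfin
  obtain ⟨y, hyT, hy⟩ := colorful_caratheodory_finset d T x hxT
  exact ⟨y, fun i => hTS i (hyT i), hy⟩
end

section
/- Let C_1, ..., C_{d+1} be nonempty finite families of convex sets in ℝ^d with the property that for every choice K_1 ∈ C_1, K_2 ∈ C_2, ..., K_{d+1} ∈ C_{d+1} the intersection K_1 ∩ K_2 ∩ ... ∩ K_{d+1} is non-empty. Then there exists an index i ∈ {1,...,d+1} such that the intersection of all the members of C_i is non-empty. -/
noncomputable section ColorfulHellyAux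

/-- Lexicographic comparison map on Euclidean space. -/
def Lx (d : ℕ) (x : EuclideanSpace ℝ (Fin d)) : Lex (Fin d → ℝ) := toLex (fun i => x i)

variable {d : ℕ}

lemma Lx_inj {x y : EuclideanSpace ℝ (Fin d)} (h : Lx d x = Lx d y) : x = y :=
  WithLp.ofLp_injective (p := 2) (funext fun i => congrFun (toLex.injective h) i)

lemma Lx_total (x y : EuclideanSpace ℝ (Fin d)) : Lx d x ≤ Lx d y ∨ Lx d y ≤ Lx d x := by
  rcases eq_or_ne x y with rfl | hxy
  · exact Or.inl le_rfl
  · have tri := lt_trichotomy (Lx d x) (Lx d y)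
    rcases tri with h | h | h
    · exact Or.inl (le_of_lt h)
    · exact absurd (Lx_inj h) hxy
    · exact Or.inr (le_of_lt h)

lemma Lx_smul_le {t : ℝ} (ht : 0 ≤ t) {x y : EuclideanSpace ℝ (Fin d)}
    (h : Lx d x ≤ Lx d y) : Lx d (t • x) ≤ Lx d (t • y) := by
  rcases h.lt_or_eq with h | h
  · rcases eq_or_lt_of_le ht with rfl | ht
    · exact le_of_eq (congrArg (Lx d) (by rw [zero_smul, zero_smul]))
    · obtain ⟨i, hi, hlt⟩ := h
      refine le_of_lt ⟨i, fun j hj => ?_, ?_⟩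
      · show (t • x) j = (t • y) j
        have hxy : x j = y j := hi j hj
        simp [hxy]
      · show (t • x) i < (t • y) i
        have h1 : (t • x) i = t * x i := by simp
        have h2 : (t • y) i = t * y i := by simp
        rw [h1, h2]
        exact mul_lt_mul_of_pos_left hlt ht
  · exact le_of_eq (congrArg (Lx d) (by rw [Lx_inj h]))

lemma Lx_add_le {x y z : EuclideanSpace ℝ (Fin d)}
    (h : Lx d x ≤ Lx d y) : Lx d (x + z) ≤ Lx d (y + z) := by
  rcases h.lt_or_eq with h | h
  · obtain ⟨i, hi, hlt⟩ := h
    refine le_of_lt ⟨i, fun j hj => ?_, ?_⟩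
    · show (x + z) j = (y + z) j
      have hxy : x j = y j := hi j hj
      simp [hxy]
    · show (x + z) i < (y + z) i
      have h1 : (x + z) i = x i + z i := by simp
      have h2 : (y + z) i = y i + z i := by simp
      rw [h1, h2]
      exact add_lt_add_left hlt _
  · exact le_of_eq (congrArg (Lx d) (by rw [Lx_inj h]))

lemma Lx_comb {x y z : EuclideanSpace ℝ (Fin d)} {a b : ℝ}
    (ha : 0 ≤ a) (hb : 0 ≤ b) (hab : a + b = 1)
    (hx : Lx d x ≤ Lx d z) (hy : Lx d y ≤ Lx d z) :
    Lx d (a • x + b • y) ≤ Lx d z := by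
  have h1 : Lx d (a • x + b • y) ≤ Lx d (a • z + b • y) := Lx_add_le (Lx_smul_le ha hx)
  have h2 : Lx d (a • z + b • y) ≤ Lx d (a • z + b • z) := by
    have h := Lx_add_le (z := a • z) (Lx_smul_le hb hy)
    rwa [add_comm (b • y), add_comm (b • z)] at h
  have h3 : a • z + b • z = z := by rw [← add_smul, hab, one_smul]
  calc Lx d (a • x + b • y) ≤ Lx d (a • z + b • z) := le_trans h1 h2
    _ = Lx d z := by rw [h3]

lemma convex_Lx_le (z : EuclideanSpace ℝ (Fin d)) :
    Convex ℝ {y : EuclideanSpace ℝ (Fin d) | Lx d y ≤ Lx d z} :=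
  fun _ hx _ hy a b ha hb hab => Lx_comb ha hb hab hx hy




lemma exists_lex_min (S : Set (EuclideanSpace ℝ (Fin d))) (hS : IsCompact S)
    (hne : S.Nonempty) :
    ∃ v ∈ S, ∀ x ∈ S, toLex (fun i => v i) ≤ toLex (fun i => x i) := by
  have key : ∀ k : ℕ, k ≤ d → ∃ T : Set (EuclideanSpace ℝ (Fin d)), T ⊆ S ∧ IsCompact T ∧
      T.Nonempty ∧
      (∀ v ∈ T, ∀ w ∈ T, ∀ j : Fin d, (j : ℕ) < k → v j = w j) ∧
      (∀ x ∈ S, ∀ v ∈ T, x ∉ T →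
        ∃ j : Fin d, (j : ℕ) < k ∧ (∀ j' : Fin d, j' < j → x j' = v j') ∧ v j < x j) := by
    intro k hk
    induction k with
    | zero =>
      exact ⟨S, subset_rfl, hS, hne, fun v _ w _ j hj => absurd hj (by omega),
        fun x hx v _ hxT => absurd hx hxT⟩
    | succ k ih =>
      obtain ⟨T, hTS, hTc, hTne, hagree, hmin⟩ := ih (Nat.le_of_succ_le hk)
      have hkd : k < d := hk
      set jk : Fin d := ⟨k, hkd⟩ with hjk
      have hjkv : (jk : ℕ) = k := rfl
      have hcont : Continuous (fun y : EuclideanSpace ℝ (Fin d) => y jk) :=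
        (EuclideanSpace.proj jk).continuous
      obtain ⟨x₀, hx₀T, hx₀min⟩ := hTc.exists_isMinOn hTne hcont.continuousOn
      have hTeq : {x ∈ T | x jk = x₀ jk} =
          T ∩ ((fun y : EuclideanSpace ℝ (Fin d) => y jk) ⁻¹' {x₀ jk}) := rfl
      refine ⟨{x ∈ T | x jk = x₀ jk}, fun x hx => hTS hx.1, ?_, ⟨x₀, hx₀T, rfl⟩, ?_, ?_⟩
      · rw [hTeq]
        exact hTc.inter_right (isClosed_singleton.preimage hcont)
      · intro v hv w hw j hj
        rcases Nat.lt_or_ge (j : ℕ) k with h | h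
        · exact hagree v hv.1 w hw.1 j h
        · have hjjk : j = jk := Fin.ext (by omega)

          rw [hjjk, hv.2, hw.2]
      · intro x hx v hv hxT'
        by_cases hxT : x ∈ T
        · have hne2 : x jk ≠ x₀ jk := fun h => hxT' ⟨hxT, h⟩
          have hle : x₀ jk ≤ x jk := hx₀min hxT
          have hlt : v jk < x jk := by
            rw [hv.2]
            exact lt_of_le_of_ne hle (Ne.symm hne2)
          refine ⟨jk, by omega, fun j' hj' => hagree x hxT v hv.1 j' ?_, hlt⟩
          have : (j' : ℕ) < (jk : ℕ) := hj'
          omega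
        · obtain ⟨j, hjlt, hpre, hlt⟩ := hmin x hx v hv.1 hxT
          exact ⟨j, by omega, hpre, hlt⟩
  obtain ⟨T, hTS, _, ⟨v, hvT⟩, hagree, hmin⟩ := key d le_rfl
  refine ⟨v, hTS hvT, fun x hx => ?_⟩
  by_cases hxT : x ∈ T
  · have hxv : x = v := WithLp.ofLp_injective (p := 2) <| funext fun j => hagree x hxT v hvT j j.isLt
    exact le_of_eq (by rw [hxv])
  · obtain ⟨j, _, hpre, hlt⟩ := hmin x hx v hvT hxT
    exact le_of_lt ⟨j, fun j' h' => (hpre j' h').symm, hlt⟩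

end ColorfulHellyAux

/-- **The colorful Helly theorem** (Lovász). If `C 0, …, C d` are nonempty finite families of
convex sets in `ℝ^d` such that every transversal `K 0 ∈ C 0, …, K d ∈ C d` has non-empty
intersection, then some family `C i` has non-empty total intersection. -/
theorem colorful_helly (d : ℕ) (C : Fin (d + 1) → Finset (Set (EuclideanSpace ℝ (Fin d))))
    (hne : ∀ i, (C i).Nonempty)
    (hconv : ∀ i, ∀ A ∈ C i, Convex ℝ A)
    (htrans : ∀ K : Fin (d + 1) → Set (EuclideanSpace ℝ (Fin d)),
      (∀ i, K i ∈ C i) → (⋂ i, K i).Nonempty) :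
    ∃ i : Fin (d + 1), (⋂ A ∈ C i, A).Nonempty := by
  classical
  -- the type of transversals
  have hw : ∀ T : (∀ i : Fin (d + 1), {A // A ∈ C i}),
      ∃ p : EuclideanSpace ℝ (Fin d), ∀ i, p ∈ (T i : Set (EuclideanSpace ℝ (Fin d))) := by
    intro T
    obtain ⟨p, hp⟩ := htrans (fun i => (T i : Set (EuclideanSpace ℝ (Fin d))))
      (fun i => (T i).2)
    exact ⟨p, by simpa [Set.mem_iInter] using hp⟩
  choose w hwmem using hw
  -- replace each set by the convex hull of the witness points it contains
  set P : ∀ _ : Fin (d + 1), Set (EuclideanSpace ℝ (Fin d)) → Set (EuclideanSpace ℝ (Fin d)) :=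
    fun i A => convexHull ℝ (w '' {T | (T i : Set (EuclideanSpace ℝ (Fin d))) = A}) with hP
  have hPsub : ∀ i A, A ∈ C i → P i A ⊆ A := by
    intro i A hA
    refine convexHull_min ?_ (hconv i A hA)
    rintro _ ⟨T, hT, rfl⟩
    exact hT ▸ hwmem T i
  have hPconv : ∀ i A, Convex ℝ (P i A) := fun i A => convex_convexHull ℝ _
  have hPcomp : ∀ i A, IsCompact (P i A) :=
    fun i A => ((Set.toFinite _).image w).isCompact_convexHull ℝ
  have hPmem : ∀ (T : ∀ i : Fin (d + 1), {A // A ∈ C i}) i,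
      w T ∈ P i (T i : Set (EuclideanSpace ℝ (Fin d))) :=
    fun T i => subset_convexHull ℝ _ ⟨T, rfl, rfl⟩
  set Q : (∀ i : Fin (d + 1), {A // A ∈ C i}) → Set (EuclideanSpace ℝ (Fin d)) :=
    fun T => ⋂ i, P i (T i : Set (EuclideanSpace ℝ (Fin d))) with hQ
  have hQmem : ∀ T, w T ∈ Q T := fun T => Set.mem_iInter.2 (hPmem T)
  have hQcomp : ∀ T, IsCompact (Q T) := by
    intro T
    exact IsCompact.of_isClosed_subset (hPcomp 0 _)
      (isClosed_iInter fun i => (hPcomp i _).isClosed) (Set.iInter_subset _ 0)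
  -- the lexicographically least point of the intersection of a transversal
  choose v hvQ hvmin using fun T => exists_lex_min (Q T) (hQcomp T) ⟨w T, hQmem T⟩
  -- a transversal maximizing the least point
  have hτne : Nonempty (∀ i : Fin (d + 1), {A // A ∈ C i}) :=
    ⟨fun i => ⟨(hne i).choose, (hne i).choose_spec⟩⟩
  obtain ⟨T₀⟩ := hτne
  obtain ⟨Tm, -, hTmax⟩ := Set.Finite.exists_maximalFor (fun T => Lx d (v T)) Set.univ
    Set.finite_univ ⟨T₀, trivial⟩
  have hmax : ∀ T, ¬ Lx d (v Tm) < Lx d (v T) := by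
    intro T h
    exact absurd (hTmax trivial h.le) (not_le_of_gt h)
  set vs := v Tm with hvs
  -- key step: one color can be dropped
  have hdrop : ∃ j : Fin (d + 1), ∀ y : EuclideanSpace ℝ (Fin d),
      (∀ i, i ≠ j → y ∈ P i (Tm i : Set (EuclideanSpace ℝ (Fin d)))) →
      Lx d vs ≤ Lx d y := by
    by_contra hcon
    push_neg at hcon
    choose x hxR hxlt using hcon
    replace hxlt : ∀ j, Lx d (x j) < Lx d vs := by
      intro j
      exact hxlt j
    set g : Fin (d + 2) → EuclideanSpace ℝ (Fin d) := Fin.snoc x vs with hg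
    have hgdep : ¬ AffineIndependent ℝ g := by
      intro hind
      have hcard := hind.card_le_finrank_succ
      have hrk := Submodule.finrank_le (vectorSpan ℝ (Set.range g))
      rw [finrank_euclideanSpace_fin] at hrk
      simp only [Fintype.card_fin] at hcard
      omega
    obtain ⟨I, p, hp⟩ := Convex.radon_partition hgdep
    have hgP : ∀ (i : Fin (d + 1)) (Sid : Set (Fin (d + 2))), Fin.castSucc i ∉ Sid →
        g '' Sid ⊆ P i (Tm i : Set (EuclideanSpace ℝ (Fin d))) := by
      rintro i Sid hSid _ ⟨k, hk, rfl⟩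
      rcases Fin.eq_castSucc_or_eq_last k with ⟨j, rfl⟩ | rfl
      · have hji : j ≠ i := fun h => hSid (h ▸ hk)
        have hgj : g (Fin.castSucc j) = x j := by simp [hg]
        rw [hgj]
        exact hxR j i (fun h => hji h.symm)
      · have hgl : g (Fin.last (d + 1)) = vs := by simp [hg]
        rw [hgl]
        exact Set.mem_iInter.1 (hvQ Tm) i
    have hpQ : p ∈ Q Tm := by
      refine Set.mem_iInter.2 fun i => ?_
      by_cases hi : Fin.castSucc i ∈ I
      · exact convexHull_min (hgP i Iᶜ (by simp [hi])) (hPconv _ _) hp.2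
      · exact convexHull_min (hgP i I hi) (hPconv _ _) hp.1
    have h1 : Lx d vs ≤ Lx d p := hvmin Tm p hpQ
    have h2 : Lx d p < Lx d vs := by
      have hside : ∃ Sid : Set (Fin (d + 2)), Fin.last (d + 1) ∉ Sid ∧
          p ∈ convexHull ℝ (g '' Sid) := by
        by_cases hl : Fin.last (d + 1) ∈ I
        · exact ⟨Iᶜ, by simp [hl], hp.2⟩
        · exact ⟨I, hl, hp.1⟩
      obtain ⟨Sid, hlast, hpS⟩ := hside
      have hSne : (g '' Sid).Nonempty := by
        by_contra h
        rw [Set.not_nonempty_iff_eq_empty] at h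
        rw [h, convexHull_empty] at hpS
        exact hpS
      obtain ⟨m, hmS, hmmax⟩ := Set.Finite.exists_maximalFor (fun y => Lx d y)
        (g '' Sid) (Set.toFinite _) hSne
      have hmax' : ∀ y ∈ g '' Sid, Lx d y ≤ Lx d m := by
        intro y hy
        rcases Lx_total y m with h | h
        · exact h
        · exact hmmax hy h
      have hmlt : Lx d m < Lx d vs := by
        obtain ⟨k, hk, rfl⟩ := hmS
        rcases Fin.eq_castSucc_or_eq_last k with ⟨j, rfl⟩ | rfl
        · have hgj : g (Fin.castSucc j) = x j := by simp [hg]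
          rw [hgj]
          exact hxlt j
        · exact absurd hk hlast
      have hple : Lx d p ≤ Lx d m :=
        convexHull_min (fun y hy => hmax' y hy) (convex_Lx_le m) hpS
      exact lt_of_le_of_lt hple hmlt
    exact absurd h1 (not_le_of_gt h2)
  obtain ⟨j, hkey⟩ := hdrop
  refine ⟨j, vs, Set.mem_iInter₂.2 fun A hA => ?_⟩
  set T' : ∀ i : Fin (d + 1), {B // B ∈ C i} := Function.update Tm j ⟨A, hA⟩ with hT'
  have hQ'R : ∀ y ∈ Q T', ∀ i, i ≠ j → y ∈ P i (Tm i : Set (EuclideanSpace ℝ (Fin d))) := by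
    intro y hy i hij
    have h := Set.mem_iInter.1 hy i
    rwa [hT', Function.update_of_ne hij] at h
  have h1 : Lx d vs ≤ Lx d (v T') := hkey (v T') (hQ'R (v T') (hvQ T'))
  have h2 : ¬ Lx d vs < Lx d (v T') := hmax T'
  have heq : v T' = vs := by
    rcases h1.lt_or_eq with h | h
    · exact absurd h h2
    · exact (Lx_inj h).symm
  have hvP : v T' ∈ P j A := by
    have h := Set.mem_iInter.1 (hvQ T') j
    rwa [hT', Function.update_self] at h
  exact hPsub j A hA (heq ▸ hvP)
end

section
/- Let d ≥ 1 and 1 ≤ k ≤ d be integers, and set g = max{d+1, 2(d-k+1)}. Let F be a finite family of at least g convex sets in ℝ^d such that the intersection of every g members of F has dimension at least k. Then the intersection of all the members of F has dimension at least k. -/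
set_option linter.unusedSectionVars false

open Module Set Submodule

section Cones

variable {V : Type*} [AddCommGroup V] [Module ℝ V]

/-- A convex cone through the origin, as a set property. -/
def KIsCone (C : Set V) : Prop :=
  0 ∈ C ∧ (∀ u ∈ C, ∀ v ∈ C, u + v ∈ C) ∧ (∀ (t : ℝ), 0 < t → ∀ u ∈ C, t • u ∈ C)

namespace KIsCone

variable {C : Set V}

lemma zero_mem (h : KIsCone C) : (0 : V) ∈ C := h.1
lemma add_mem (h : KIsCone C) {u v : V} (hu : u ∈ C) (hv : v ∈ C) : u + v ∈ C := h.2.1 u hu v hv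
lemma smul_mem (h : KIsCone C) {t : ℝ} (ht : 0 < t) {u : V} (hu : u ∈ C) : t • u ∈ C :=
  h.2.2 t ht u hu

lemma sum_mem (h : KIsCone C) {ι : Type*} (s : Finset ι) (f : ι → V)
    (hf : ∀ i ∈ s, f i ∈ C) : ∑ i ∈ s, f i ∈ C := by
  classical
  induction s using Finset.induction with
  | empty => simpa using h.zero_mem
  | insert _ _ hnot ih =>
    rw [Finset.sum_insert hnot]
    exact h.add_mem (hf _ (Finset.mem_insert_self _ _))
      (ih fun i hi => hf i (Finset.mem_insert_of_mem hi))

lemma convex (h : KIsCone C) : Convex ℝ C := by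
  intro u hu v hv a b ha hb hab
  rcases eq_or_lt_of_le ha with ha0 | ha0
  · have : b = 1 := by linarith
    simpa [← ha0, this] using hv
  rcases eq_or_lt_of_le hb with hb0 | hb0
  · have : a = 1 := by linarith
    simpa [← hb0, this] using hu
  exact h.add_mem (h.smul_mem ha0 hu) (h.smul_mem hb0 hv)

end KIsCone

/-- Interval property of convex sets: shrinking the step keeps you inside. -/
lemma convex_interval {S : Set V} (hS : Convex ℝ S) {x v : V} {t t' : ℝ}
    (hx : x ∈ S) (hmem : x + t • v ∈ S) (ht' : 0 < t') (htt : t' ≤ t) :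
    x + t' • v ∈ S := by
  have ht : 0 < t := lt_of_lt_of_le ht' htt
  have h1 : (t' / t) • (x + t • v) + (1 - t' / t) • x ∈ S := by
    apply hS hmem hx (by positivity) _ (by ring)
    have : t' / t ≤ 1 := by
      rw [div_le_one ht]; exact htt
    linarith
  have h2 : (t' / t) • (x + t • v) + (1 - t' / t) • x = x + t' • v := by
    have : t' / t * t = t' := div_mul_cancel₀ _ (ne_of_gt ht)
    rw [smul_add, smul_smul, this]
    module
  rwa [h2] at h1

/-- The cone of feasible directions of `S` at `p`. -/
def feas (S : Set V) (p : V) : Set V := {v | ∃ t : ℝ, 0 < t ∧ p + t • v ∈ S}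

lemma feas_isCone {S : Set V} {p : V} (hS : Convex ℝ S) (hp : p ∈ S) : KIsCone (feas S p) := by
  refine ⟨⟨1, one_pos, by simpa using hp⟩, ?_, ?_⟩
  · rintro u ⟨s, hs, hus⟩ v ⟨t, ht, hvt⟩
    refine ⟨s * t / (s + t), by positivity, ?_⟩
    have key : p + (s * t / (s + t)) • (u + v) =
        (t / (s + t)) • (p + s • u) + (s / (s + t)) • (p + t • v) := by
      have hst : s + t ≠ 0 := by positivity
      match_scalars <;> field_simp <;> ring
    rw [key]
    exact hS hus hvt (by positivity) (by positivity) (by field_simp; ring)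
  · rintro t ht u ⟨s, hs, hus⟩
    exact ⟨s / t, by positivity, by rwa [smul_smul, div_mul_cancel₀ _ (ne_of_gt ht)]⟩

/-- Every cone has a "radial" point: moving slightly from it in any direction of its span
stays in the cone. -/
lemma exists_radial [FiniteDimensional ℝ V] {C : Set V} (hC : KIsCone C) :
    ∃ z ∈ C, ∀ v ∈ span ℝ C, ∃ ε : ℝ, 0 < ε ∧ z + ε • v ∈ C := by
  obtain ⟨b, hbC, hspan, hbli⟩ := exists_linearIndependent ℝ C
  have hfin : b.Finite := hbli.setFinite
  classical
  set B := hfin.toFinset with hB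
  have hBb : (B : Set V) = b := hfin.coe_toFinset
  refine ⟨∑ i ∈ B, i, hC.sum_mem B _ (fun i hi => hbC (by rwa [← hBb])), ?_⟩
  intro v hv
  rw [← hspan, ← hBb] at hv
  obtain ⟨f, hf⟩ := mem_span_finset.1 hv
  set M : ℝ := 1 + ∑ i ∈ B, |f i| with hM
  have hM1 : 1 ≤ M := by
    have : 0 ≤ ∑ i ∈ B, |f i| := Finset.sum_nonneg fun i _ => abs_nonneg _
    rw [hM]; linarith
  have hMpos : 0 < M := lt_of_lt_of_le one_pos hM1
  refine ⟨M⁻¹, by positivity, ?_⟩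
  have key : (∑ i ∈ B, i) + M⁻¹ • v = ∑ i ∈ B, (1 + M⁻¹ * f i) • i := by
    rw [← hf.2, Finset.smul_sum]
    rw [← Finset.sum_add_distrib]
    congr 1; ext i
    rw [add_smul, one_smul, smul_smul]
  rw [key]
  apply hC.sum_mem
  intro i hi
  have habs : |f i| ≤ ∑ j ∈ B, |f j| :=
    Finset.single_le_sum (fun j _ => abs_nonneg (f j)) hi
  have hlt : M⁻¹ * |f i| < 1 := by
    rw [inv_mul_lt_iff₀ hMpos, mul_one]
    calc |f i| ≤ ∑ j ∈ B, |f j| := habs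
    _ < M := by rw [hM]; linarith
  have : 0 < 1 + M⁻¹ * f i := by
    have h1 : -(M⁻¹ * |f i|) ≤ M⁻¹ * f i := by
      have := neg_abs_le (f i)
      have hM' : 0 ≤ M⁻¹ := by positivity
      nlinarith
    linarith
  exact hC.smul_mem this (hbC (by rwa [← hBb]))

end Cones

section SIG

variable {V : Type*} [AddCommGroup V] [Module ℝ V]
variable {ι : Type*} [DecidableEq ι]

/-- The cone generated by `W` and the sets `R a`, `a ∈ A` (sums of elements). -/
def SIG (R : ι → Set V) (W : Submodule ℝ V) (A : Finset ι) : Set V :=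
  {v | ∃ w : V, ∃ f : ι → V, w ∈ W ∧ (∀ a ∈ A, f a ∈ R a) ∧ v = w + ∑ a ∈ A, f a}

variable {R : ι → Set V} {W : Submodule ℝ V} {A B : Finset ι}

lemma W_subset_SIG (hR0 : ∀ a ∈ A, (0:V) ∈ R a) : (W : Set V) ⊆ SIG R W A := by
  intro w hw
  refine ⟨w, 0, hw, fun a ha => hR0 a ha, by simp⟩

lemma subset_SIG (hR0 : ∀ a ∈ A, (0:V) ∈ R a) {a : ι} (ha : a ∈ A) : R a ⊆ SIG R W A := by
  intro v hv
  refine ⟨0, fun i => if i = a then v else 0, W.zero_mem, ?_, ?_⟩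
  · intro b hb
    by_cases hba : b = a
    · subst hba; simpa using hv
    · simpa [hba] using hR0 b hb
  · rw [Finset.sum_ite_eq' A a (fun _ => v)]
    simp [ha]

lemma SIG_mono (hR0 : ∀ a ∈ B, (0:V) ∈ R a) (hAB : A ⊆ B) : SIG R W A ⊆ SIG R W B := by
  rintro v ⟨w, f, hw, hf, rfl⟩
  refine ⟨w, fun i => if i ∈ A then f i else 0, hw, ?_, ?_⟩
  · intro b hb
    by_cases hbA : b ∈ A
    · simpa [hbA] using hf b hbA
    · simpa [hbA] using hR0 b hb
  · congr 1
    rw [← Finset.sum_subset hAB (fun i _ hiA => if_neg hiA)]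
    exact Finset.sum_congr rfl fun i hi => by rw [if_pos hi]

lemma SIG_isCone (hR : ∀ a ∈ A, KIsCone (R a)) : KIsCone (SIG R W A) := by
  refine ⟨⟨0, 0, W.zero_mem, fun a ha => (hR a ha).zero_mem, by simp⟩, ?_, ?_⟩
  · rintro u ⟨w, f, hw, hf, rfl⟩ v ⟨w', f', hw', hf', rfl⟩
    refine ⟨w + w', f + f', W.add_mem hw hw', fun a ha => (hR a ha).add_mem (hf a ha) (hf' a ha), ?_⟩
    simp only [Pi.add_apply, Finset.sum_add_distrib]
    abel
  · rintro t ht u ⟨w, f, hw, hf, rfl⟩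
    refine ⟨t • w, t • f, W.smul_mem t hw, fun a ha => (hR a ha).smul_mem ht (hf a ha), ?_⟩
    rw [smul_add, Finset.smul_sum]
    simp

lemma SIG_subset {C : Set V} (hC : KIsCone C) (hW : (W : Set V) ⊆ C)
    (hRC : ∀ a ∈ A, R a ⊆ C) : SIG R W A ⊆ C := by
  rintro v ⟨w, f, hw, hf, rfl⟩
  exact hC.add_mem (hW hw) (hC.sum_mem A f fun a ha => hRC a ha (hf a ha))

/-- Decompose an element of the span of a finite union. -/
lemma span_biUnion_decomp (R : ι → Set V) (P : Finset ι) :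
    ∀ w ∈ span ℝ (⋃ c ∈ P, R c),
    ∃ g : ι → V, (∀ c ∈ P, g c ∈ span ℝ (R c)) ∧ w = ∑ c ∈ P, g c := by
  classical
  induction P using Finset.induction with
  | empty =>
    intro w hw
    simp only [Finset.notMem_empty, iUnion_of_empty, iUnion_empty, span_empty,
      mem_bot] at hw
    exact ⟨0, by simp, by simp [hw]⟩
  | @insert a s hnot ih =>
    intro w hw
    have : (⋃ c ∈ insert a s, R c) = R a ∪ ⋃ c ∈ s, R c := by
      simp [Set.biUnion_insert]
    rw [this, span_union] at hw
    obtain ⟨w1, hw1, w2, hw2, rfl⟩ := Submodule.mem_sup.1 hw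
    obtain ⟨g, hg, rfl⟩ := ih w2 hw2
    refine ⟨fun i => if i = a then w1 else g i, ?_, ?_⟩
    · intro c hc
      rcases Finset.mem_insert.1 hc with rfl | hcs
      · simpa using hw1
      · have : c ≠ a := fun h => hnot (h ▸ hcs)
        simpa [this] using hg c hcs
    · rw [Finset.sum_insert hnot, if_pos rfl]
      congr 1
      exact (Finset.sum_congr rfl fun i hi => by
        have : i ≠ a := fun h => hnot (h ▸ hi)
        rw [if_neg this]).symm

end SIG

section Core

variable {V : Type*} [AddCommGroup V] [Module ℝ V] [FiniteDimensional ℝ V]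
variable {ι : Type*} [DecidableEq ι]

set_option maxHeartbeats 1000000 in
lemma cone_core_ind (k : ℕ) (T : Finset ι) (R : ι → Set V) (W : Submodule ℝ V)
    (x : ι → V)
    (hcone : ∀ a ∈ T, KIsCone (R a))
    (hxR : ∀ a ∈ T, x a ∈ R a)
    (hxrad : ∀ a ∈ T, ∀ v ∈ span ℝ (R a), ∃ ε : ℝ, 0 < ε ∧ x a + ε • v ∈ R a)
    (hrank : ∀ a ∈ T, k ≤ finrank ℝ (span ℝ (R a)))
    (hstar : ∀ A B : Finset ι, A ⊆ T → B ⊆ T → Disjoint A B →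
      SIG R W A ∩ SIG R W B ⊆ (W : Set V)) :
    ∀ (N : ℕ) (C : Finset ι) (Λ : Submodule ℝ V), C.card ≤ N → C ⊆ T → W ≤ Λ →
      (Λ : Set V) ⊆ SIG R W (T \ C) →
      ∃ s : ℕ, C.card + finrank ℝ Λ ≤ finrank ℝ V + s ∧
        finrank ℝ Λ + s * (k - finrank ℝ W) ≤ finrank ℝ V := by
  intro N
  induction N with
  | zero =>
    intro C Λ hC0 _ _ _
    refine ⟨0, ?_, ?_⟩
    · have := Submodule.finrank_le Λ
      omega
    · simpa using Submodule.finrank_le Λ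
  | succ N ih =>
    intro C Λ hCN hCT hWΛ hΛSIG
    classical
    by_cases hind : LinearIndependent ℝ (fun c : {y // y ∈ C} => Λ.mkQ (x c))
    · refine ⟨0, ?_, ?_⟩
      · have h1 : Fintype.card {y // y ∈ C} ≤ finrank ℝ (V ⧸ Λ) :=
          hind.fintype_card_le_finrank
        rw [Fintype.card_coe] at h1
        have h2 := Submodule.finrank_quotient_add_finrank Λ
        omega
      · simpa using Submodule.finrank_le Λ
    · obtain ⟨g, hgsum, c₀, hgc₀⟩ := Fintype.not_linearIndependent_iff.1 hind
      set μ : ι → ℝ := fun i => if h : i ∈ C then g ⟨i, h⟩ else 0 with hμ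
      have hμsum : ∑ c ∈ C, μ c • x c ∈ Λ := by
        have e2 : ∑ c ∈ C, μ c • x c = ∑ c : {y // y ∈ C}, g c • x (c : ι) := by
          rw [← Finset.sum_coe_sort C (fun i => μ i • x i)]
          exact Finset.sum_congr rfl fun c _ => by simp [hμ, c.2]
        have e3 : Λ.mkQ (∑ c : {y // y ∈ C}, g c • x (c : ι)) = 0 := by
          rw [map_sum]
          simp only [map_smul]
          exact hgsum
        rw [Submodule.mkQ_apply, Submodule.Quotient.mk_eq_zero] at e3
        rw [e2]; exact e3
      -- the set of "good" subsets and a minimal one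
      set good : Finset ι → Prop := fun P => P.Nonempty ∧ ∃ ν : ι → ℝ,
        (∀ c ∈ P, ν c ≠ 0) ∧ ∑ c ∈ P, ν c • x c ∈ Λ with hgood
      set S : Finset (Finset ι) := C.powerset.filter good with hS
      have hSne : S.Nonempty := by
        refine ⟨C.filter (fun i => μ i ≠ 0), Finset.mem_filter.2
          ⟨Finset.mem_powerset.2 (Finset.filter_subset _ _), ?_, μ, ?_, ?_⟩⟩
        · refine ⟨(c₀ : ι), Finset.mem_filter.2 ⟨c₀.2, ?_⟩⟩
          show μ (c₀ : ι) ≠ 0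
          rw [hμ]
          simpa [c₀.2] using hgc₀
        · intro c hc; exact (Finset.mem_filter.1 hc).2
        · rw [Finset.sum_filter_of_ne]
          · exact hμsum
          · intro c _ hne hc0
            exact hne (by rw [hc0, zero_smul])
      obtain ⟨P, hPmem, hPmin⟩ := Finset.exists_min_image S Finset.card hSne
      have hPC : P ⊆ C := Finset.mem_powerset.1 (Finset.mem_filter.1 hPmem).1
      obtain ⟨hPne, ν₀, hν₀ne, hν₀sum⟩ := (Finset.mem_filter.1 hPmem).2
      set Q : Finset ι := T \ C with hQ
      have hQT : Q ⊆ T := Finset.sdiff_subset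
      have hPT : P ⊆ T := hPC.trans hCT
      have hdisjCQ : ∀ P' : Finset ι, P' ⊆ C → Disjoint P' Q := by
        intro P' hP'C
        rw [Finset.disjoint_left]
        intro a haP' haQ
        exact (Finset.mem_sdiff.1 haQ).2 (hP'C haP')
      have hzero : ∀ A : Finset ι, A ⊆ T → ∀ a ∈ A, (0:V) ∈ R a :=
        fun A hA a ha => (hcone a (hA ha)).zero_mem
      have claim_pos : ∀ (P' : Finset ι), P' ⊆ C → ∀ (ν : ι → ℝ), (∀ c ∈ P', 0 < ν c) →
          (∑ c ∈ P', ν c • x c) ∈ Λ → (∑ c ∈ P', ν c • x c) ∈ (W : Set V) := by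
        intro P' hP'C ν hpos hsum
        apply hstar P' Q (hP'C.trans hCT) hQT (hdisjCQ P' hP'C)
        constructor
        · exact ⟨0, fun c => ν c • x c, W.zero_mem,
            fun a ha => (hcone a (hP'C.trans hCT ha)).smul_mem (hpos a ha)
              (hxR a (hP'C.trans hCT ha)), by simp⟩
        · exact hΛSIG hsum
      -- minimality: small combinations landing in Λ are trivial
      have hmin' : ∀ (P' : Finset ι), P' ⊆ C → P'.card < P.card →
          ∀ (ν' : ι → ℝ), (∑ c ∈ P', ν' c • x c) ∈ Λ → ∀ c ∈ P', ν' c = 0 := by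
        intro P' hP'C hcard ν' hsum' c hc
        by_contra hne
        have hmem : P'.filter (fun i => ν' i ≠ 0) ∈ S := by
          refine Finset.mem_filter.2 ⟨Finset.mem_powerset.2
            ((Finset.filter_subset _ _).trans hP'C), ⟨c, Finset.mem_filter.2 ⟨hc, hne⟩⟩,
            ν', ?_, ?_⟩
          · intro c' hc'; exact (Finset.mem_filter.1 hc').2
          · rw [Finset.sum_filter_of_ne]
            · exact hsum'
            · intro c' _ hne' hc0
              exact hne' (by rw [hc0, zero_smul])
        have := hPmin _ hmem
        have hle := Finset.card_le_card ((Finset.filter_subset (fun i => ν' i ≠ 0) P'))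
        omega
      -- sign dichotomy: get an all-positive relation
      obtain ⟨ν, hνpos, hνsum⟩ : ∃ ν : ι → ℝ, (∀ c ∈ P, 0 < ν c) ∧
          (∑ c ∈ P, ν c • x c) ∈ Λ := by
        set Ppos := P.filter (fun c => 0 < ν₀ c) with hPposdef
        set Pneg := P.filter (fun c => ¬ 0 < ν₀ c) with hPnegdef
        have hPposP : Ppos ⊆ P := Finset.filter_subset _ _
        have hPnegP : Pneg ⊆ P := Finset.filter_subset _ _
        have hsplit : ∑ c ∈ Ppos, ν₀ c • x c + ∑ c ∈ Pneg, ν₀ c • x c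
            = ∑ c ∈ P, ν₀ c • x c :=
          Finset.sum_filter_add_sum_filter_not P _ _
        have hu : (∑ c ∈ Ppos, ν₀ c • x c) ∈ (W : Set V) := by
          apply hstar Ppos (Q ∪ Pneg) (hPposP.trans hPT)
            (Finset.union_subset hQT (hPnegP.trans hPT))
          · rw [Finset.disjoint_union_right]
            exact ⟨hdisjCQ Ppos (hPposP.trans hPC),
              Finset.disjoint_filter_filter_not P P _⟩
          constructor
          · exact ⟨0, fun c => ν₀ c • x c, W.zero_mem,
              fun a ha => (hcone a (hPT (hPposP ha))).smul_mem
                ((Finset.mem_filter.1 ha).2) (hxR a (hPT (hPposP ha))), by simp⟩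
          · obtain ⟨w1, f1, hw1, hf1, heq⟩ := hΛSIG hν₀sum
            have hdisjQPneg : Disjoint Q Pneg := (hdisjCQ Pneg (hPnegP.trans hPC)).symm
            refine ⟨w1, fun i => if i ∈ Q then f1 i else (-ν₀ i) • x i, hw1, ?_, ?_⟩
            · intro a ha
              simp only []
              rcases Finset.mem_union.1 ha with haQ | haP
              · rw [if_pos haQ]; exact hf1 a haQ
              · have haP' : a ∈ P := hPnegP haP
                have haQ' : a ∉ Q := fun h => (Finset.mem_sdiff.1 h).2 (hPC haP')
                rw [if_neg haQ']
                have hnotpos : ¬ 0 < ν₀ a := (Finset.mem_filter.1 haP).2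
                have hneg : 0 < -ν₀ a := by
                  rcases lt_trichotomy (ν₀ a) 0 with h|h|h
                  · linarith
                  · exact absurd h (hν₀ne a haP')
                  · exact absurd h hnotpos
                exact (hcone a (hPT haP')).smul_mem hneg (hxR a (hPT haP'))
            · simp only []
              rw [Finset.sum_union hdisjQPneg]
              have e1 : ∑ i ∈ Q, (if i ∈ Q then f1 i else (-ν₀ i) • x i) = ∑ i ∈ Q, f1 i :=
                Finset.sum_congr rfl fun i hi => if_pos hi
              have e2 : ∑ i ∈ Pneg, (if i ∈ Q then f1 i else (-ν₀ i) • x i)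
                  = ∑ i ∈ Pneg, (-ν₀ i) • x i := by
                refine Finset.sum_congr rfl fun i hi => if_neg ?_
                exact fun h => (Finset.mem_sdiff.1 h).2 (hPC (hPnegP hi))
              rw [e1, e2]
              have e3 : ∑ i ∈ Pneg, (-ν₀ i) • x i = - ∑ i ∈ Pneg, ν₀ i • x i := by
                rw [← Finset.sum_neg_distrib]
                exact Finset.sum_congr rfl fun i _ => by rw [neg_smul]
              rw [e3]
              have e5 : ∑ c ∈ Ppos, ν₀ c • x c
                  = ∑ c ∈ P, ν₀ c • x c - ∑ c ∈ Pneg, ν₀ c • x c := by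
                rw [← hsplit]; abel
              rw [e5, heq]; abel
        by_cases hpos : Ppos.Nonempty
        · have hPposS : Ppos ∈ S := by
            refine Finset.mem_filter.2 ⟨Finset.mem_powerset.2 (hPposP.trans hPC),
              hpos, ν₀, fun c hc => hν₀ne c (hPposP hc), hWΛ hu⟩
          have hcard := hPmin _ hPposS
          have hPP : Ppos = P := Finset.eq_of_subset_of_card_le hPposP hcard
          refine ⟨ν₀, fun c hc => ?_, hν₀sum⟩
          · have : c ∈ Ppos := hPP ▸ hc
            exact (Finset.mem_filter.1 this).2
        · refine ⟨fun c => -ν₀ c, fun c hc => ?_, ?_⟩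
          · show 0 < -ν₀ c
            have hnotpos : ¬ 0 < ν₀ c := fun h => hpos ⟨c, Finset.mem_filter.2 ⟨hc, h⟩⟩
            rcases lt_trichotomy (ν₀ c) 0 with h|h|h
            · linarith
            · exact absurd h (hν₀ne c hc)
            · exact absurd h hnotpos
          · have : ∑ c ∈ P, (-ν₀ c) • x c = - ∑ c ∈ P, ν₀ c • x c := by
              rw [← Finset.sum_neg_distrib]
              exact Finset.sum_congr rfl fun i _ => by rw [neg_smul]
            rw [this]
            exact Λ.neg_mem hν₀sum
      set u2 := ∑ c ∈ P, ν c • x c with hu2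
      have hu2W : u2 ∈ W := claim_pos P hPC ν hνpos hνsum
      -- f1 : the negation of each x p is in the cone generated by the others
      have f1 : ∀ p ∈ P, -x p ∈ SIG R W (P.erase p) := by
        intro p hp
        have hcone' : KIsCone (SIG R W (P.erase p)) :=
          SIG_isCone (fun a ha => hcone a (hPT (Finset.mem_of_mem_erase ha)))
        have hmem : (-u2) + ∑ c ∈ P.erase p, ν c • x c ∈ SIG R W (P.erase p) :=
          ⟨-u2, fun c => ν c • x c, W.neg_mem hu2W,
            fun a ha => (hcone a (hPT (Finset.mem_of_mem_erase ha))).smul_mem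
              (hνpos a (Finset.mem_of_mem_erase ha)) (hxR a (hPT (Finset.mem_of_mem_erase ha))),
            rfl⟩
        have heq : (ν p)⁻¹ • ((-u2) + ∑ c ∈ P.erase p, ν c • x c) = -x p := by
          have hsum : ∑ c ∈ P.erase p, ν c • x c + ν p • x p = ∑ c ∈ P, ν c • x c :=
            Finset.sum_erase_add P _ hp
          have e : (-u2) + ∑ c ∈ P.erase p, ν c • x c = -(ν p • x p) := by
            rw [hu2, ← hsum]; abel
          rw [e, smul_neg, smul_smul, inv_mul_cancel₀ (ne_of_gt (hνpos p hp)), one_smul]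
        rw [← heq]
        exact hcone'.smul_mem (inv_pos.2 (hνpos p hp)) hmem
      set X := SIG R W (Q ∪ P) with hX
      have hQPT : Q ∪ P ⊆ T := Finset.union_subset hQT hPT
      have hXcone : KIsCone X := SIG_isCone (fun a ha => hcone a (hQPT ha))
      have f2 : ∀ p ∈ P, ∀ v ∈ span ℝ (R p), v ∈ X := by
        intro p hp v hv
        obtain ⟨ε, hε, hmem⟩ := hxrad p (hPT hp) v hv
        have h1 : x p + ε • v ∈ X :=
          subset_SIG (hzero _ hQPT) (Finset.mem_union_right _ hp) hmem
        have h2 : -x p ∈ X :=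
          SIG_mono (hzero _ hQPT)
            ((Finset.erase_subset _ _).trans Finset.subset_union_right) (f1 p hp)
        have h3 : ε • v ∈ X := by
          have h4 := hXcone.add_mem h1 h2
          have e : x p + ε • v + -x p = ε • v := by abel
          rwa [e] at h4
        have h5 := hXcone.smul_mem (inv_pos.2 hε) h3
        rwa [smul_smul, inv_mul_cancel₀ (ne_of_gt hε), one_smul] at h5
      set WP := span ℝ (⋃ c ∈ P, R c) with hWP
      set Λ' := Λ ⊔ WP with hΛ'
      have hxWP : ∀ p ∈ P, x p ∈ WP :=
        fun p hp => subset_span (Set.mem_biUnion hp (hxR p (hPT hp)))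
      have hspanWP : ∀ p ∈ P, span ℝ (R p) ≤ WP :=
        fun p hp => span_mono (Set.subset_biUnion_of_mem hp)
      have hΛ'X : (Λ' : Set V) ⊆ X := by
        let X' : Submodule ℝ V :=
          { carrier := {v | v ∈ X ∧ -v ∈ X}
            add_mem' := fun ha hb => ⟨hXcone.add_mem ha.1 hb.1, by
              rw [neg_add]; exact hXcone.add_mem ha.2 hb.2⟩
            zero_mem' := ⟨hXcone.zero_mem, by simpa using hXcone.zero_mem⟩
            smul_mem' := by
              intro c v hv
              rcases lt_trichotomy c 0 with h|h|h
              · constructor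
                · have e : c • v = (-c) • (-v) := by simp
                  rw [e]; exact hXcone.smul_mem (by linarith) hv.2
                · have e : -(c • v) = (-c) • v := by simp
                  rw [e]; exact hXcone.smul_mem (by linarith) hv.1
              · subst h
                refine ⟨by simpa using hXcone.zero_mem, by simpa using hXcone.zero_mem⟩
              · exact ⟨hXcone.smul_mem h hv.1, by
                  rw [← smul_neg]; exact hXcone.smul_mem h hv.2⟩ }
        have hΛX' : Λ ≤ X' := by
          intro w hw
          constructor
          · exact SIG_mono (hzero _ hQPT) Finset.subset_union_left (hΛSIG hw)
          · exact SIG_mono (hzero _ hQPT) Finset.subset_union_left (hΛSIG (Λ.neg_mem hw))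
        have hWPX' : WP ≤ X' := by
          rw [hWP]
          apply span_le.2
          intro v hv
          obtain ⟨p, hp, hvp⟩ := Set.mem_iUnion₂.1 hv
          exact ⟨f2 p hp v (subset_span hvp), f2 p hp (-v) (neg_mem (subset_span hvp))⟩
        intro v hv
        exact ((sup_le hΛX' hWPX') hv).1
      -- f3 : Λ ⊓ WP ≤ W
      have f3 : ∀ w' ∈ (Λ ⊓ WP : Submodule ℝ V), w' ∈ W := by
        intro w' hw'
        obtain ⟨hw'Λ, hw'WP⟩ := Submodule.mem_inf.1 hw'
        obtain ⟨g', hg', hw'eq⟩ := span_biUnion_decomp R P w' hw'WP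
        have hchoice : ∀ c ∈ P, ∃ ε : ℝ, 0 < ε ∧ x c + ε • ((ν c)⁻¹ • g' c) ∈ R c :=
          fun c hc => hxrad c (hPT hc) _ (Submodule.smul_mem _ _ (hg' c hc))
        set efn : ι → ℝ := fun c => if h : c ∈ P then (hchoice c h).choose else 1 with hefn
        have hefnpos : ∀ c ∈ P, 0 < efn c ∧ x c + efn c • ((ν c)⁻¹ • g' c) ∈ R c := by
          intro c hc
          rw [hefn]; simp only [dif_pos hc]
          exact ⟨(hchoice c hc).choose_spec.1, (hchoice c hc).choose_spec.2⟩
        set ε := P.inf' hPne efn with hεdef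
        have hεpos : 0 < ε := (Finset.lt_inf'_iff _).2 (fun c hc => (hefnpos c hc).1)
        have hεmem : ∀ c ∈ P, x c + ε • ((ν c)⁻¹ • g' c) ∈ R c := by
          intro c hc
          exact convex_interval (hcone c (hPT hc)).convex (hxR c (hPT hc))
            (hefnpos c hc).2 hεpos (Finset.inf'_le _ hc)
        have hkey : ∑ c ∈ P, ν c • (x c + ε • ((ν c)⁻¹ • g' c)) = u2 + ε • w' := by
          rw [hw'eq, Finset.smul_sum, hu2, ← Finset.sum_add_distrib]
          apply Finset.sum_congr rfl
          intro c hc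
          rw [smul_add]
          congr 1
          have hvc : ν c ≠ 0 := ne_of_gt (hνpos c hc)
          rw [smul_smul, smul_smul]
          congr 1
          field_simp
        have hmem1 : u2 + ε • w' ∈ SIG R W P := by
          rw [← hkey]
          exact ⟨0, fun c => ν c • (x c + ε • ((ν c)⁻¹ • g' c)), W.zero_mem,
            fun a ha => (hcone a (hPT ha)).smul_mem (hνpos a ha) (hεmem a ha), by simp⟩
        have hmem2 : u2 + ε • w' ∈ SIG R W Q :=
          hΛSIG (Λ.add_mem (hWΛ hu2W) (Λ.smul_mem _ hw'Λ))
        have hW' : u2 + ε • w' ∈ (W : Set V) :=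
          hstar P Q hPT hQT (hdisjCQ P hPC) ⟨hmem1, hmem2⟩
        have h6 : ε • w' ∈ W := by
          have h7 := W.sub_mem hW' hu2W
          have e : u2 + ε • w' - u2 = ε • w' := by abel
          rwa [e] at h7
        have h8 := W.smul_mem ε⁻¹ h6
        rwa [smul_smul, inv_mul_cancel₀ (ne_of_gt hεpos), one_smul] at h8
      -- rank bookkeeping
      set ψ : WP →ₗ[ℝ] V ⧸ Λ := Λ.mkQ.comp WP.subtype with hψ
      set dmap := finrank ℝ (LinearMap.range ψ) with hdmap
      have g1 : k ≤ dmap + finrank ℝ W := by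
        have hWPrank : k ≤ finrank ℝ WP := by
          obtain ⟨p, hp⟩ := hPne
          exact le_trans (hrank p (hPT hp)) (Submodule.finrank_mono (hspanWP p hp))
        have hrn := LinearMap.finrank_range_add_finrank_ker ψ
        have hker : finrank ℝ (LinearMap.ker ψ) ≤ finrank ℝ W := by
          have hle : (LinearMap.ker ψ).map WP.subtype ≤ W := by
            rintro v hv
            obtain ⟨aw, ha2, rfl⟩ := Submodule.mem_map.1 hv
            rw [LinearMap.mem_ker, hψ] at ha2
            simp only [LinearMap.comp_apply, Submodule.subtype_apply, Submodule.mkQ_apply,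
              Submodule.Quotient.mk_eq_zero] at ha2
            exact f3 _ (Submodule.mem_inf.2 ⟨ha2, aw.2⟩)
          calc finrank ℝ (LinearMap.ker ψ)
              = finrank ℝ ((LinearMap.ker ψ).map WP.subtype) :=
                (Submodule.finrank_map_subtype_eq WP _).symm
            _ ≤ finrank ℝ W := Submodule.finrank_mono hle
        omega
      have g2 : finrank ℝ Λ + dmap ≤ finrank ℝ Λ' := by
        set ψ' : Λ' →ₗ[ℝ] V ⧸ Λ := Λ.mkQ.comp Λ'.subtype with hψ'
        have hrn := LinearMap.finrank_range_add_finrank_ker ψ'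
        have h1 : dmap ≤ finrank ℝ (LinearMap.range ψ') := by
          apply Submodule.finrank_mono
          rw [hψ, hψ', LinearMap.range_comp, LinearMap.range_comp,
            Submodule.range_subtype, Submodule.range_subtype]
          exact Submodule.map_mono le_sup_right
        have h2 : finrank ℝ Λ ≤ finrank ℝ (LinearMap.ker ψ') := by
          have hle : Λ ≤ (LinearMap.ker ψ').map Λ'.subtype := by
            intro v hv
            refine Submodule.mem_map.2 ⟨⟨v, Submodule.mem_sup_left hv⟩, ?_, rfl⟩
            rw [LinearMap.mem_ker, hψ']
            simp only [LinearMap.comp_apply, Submodule.subtype_apply, Submodule.mkQ_apply,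
              Submodule.Quotient.mk_eq_zero]
            exact hv
          calc finrank ℝ Λ ≤ finrank ℝ ((LinearMap.ker ψ').map Λ'.subtype) :=
                Submodule.finrank_mono hle
            _ = finrank ℝ (LinearMap.ker ψ') := Submodule.finrank_map_subtype_eq Λ' _
        omega
      have g3 : P.card ≤ dmap + 1 := by
        obtain ⟨p, hp⟩ := hPne
        have hindep : LinearIndependent ℝ
            (fun c : {y // y ∈ P.erase p} => Λ.mkQ (x (c : ι))) := by
          by_contra hdep
          obtain ⟨g', hg'sum, c', hc'⟩ := Fintype.not_linearIndependent_iff.1 hdep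
          set μ' : ι → ℝ := fun i => if h : i ∈ P.erase p then g' ⟨i, h⟩ else 0 with hμ'
          have hsum' : ∑ c ∈ P.erase p, μ' c • x c ∈ Λ := by
            have e2 : ∑ c ∈ P.erase p, μ' c • x c
                = ∑ c : {y // y ∈ P.erase p}, g' c • x (c : ι) := by
              rw [← Finset.sum_coe_sort (P.erase p) (fun i => μ' i • x i)]
              refine Finset.sum_congr rfl fun c _ => ?_
              have hcc : μ' (c : ι) = g' c := by
                rw [hμ']
                simp only [dif_pos c.2, Subtype.coe_eta]
              rw [hcc]
            have e3 : Λ.mkQ (∑ c : {y // y ∈ P.erase p}, g' c • x (c : ι)) = 0 := by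
              rw [map_sum]
              simp only [map_smul]
              exact hg'sum
            rw [Submodule.mkQ_apply, Submodule.Quotient.mk_eq_zero] at e3
            rw [e2]; exact e3
          have hcardlt : (P.erase p).card < P.card := Finset.card_erase_lt_of_mem hp
          have := hmin' (P.erase p) ((Finset.erase_subset _ _).trans hPC) hcardlt μ' hsum'
            (c' : ι) c'.2
          rw [hμ'] at this
          simp only [dif_pos c'.2] at this
          exact hc' (by simpa using this)
        have hval : ∀ c : {y // y ∈ P.erase p}, Λ.mkQ (x (c : ι)) ∈ WP.map Λ.mkQ :=
          fun c => Submodule.mem_map_of_mem (hxWP _ (Finset.mem_of_mem_erase c.2))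
        let fam : {y // y ∈ P.erase p} → (WP.map Λ.mkQ) := fun c => ⟨Λ.mkQ (x (c : ι)), hval c⟩
        have hfam : LinearIndependent ℝ fam := by
          have hco : (WP.map Λ.mkQ).subtype ∘ fam
              = fun c : {y // y ∈ P.erase p} => Λ.mkQ (x (c : ι)) := rfl
          exact LinearIndependent.of_comp _ (hco ▸ hindep)
        have hcard := hfam.fintype_card_le_finrank
        rw [Fintype.card_coe] at hcard
        have hrange : LinearMap.range ψ = WP.map Λ.mkQ := by
          rw [hψ, LinearMap.range_comp, Submodule.range_subtype]
        rw [← hrange] at hcard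
        have hce : (P.erase p).card = P.card - 1 := Finset.card_erase_of_mem hp
        have hp1 : 1 ≤ P.card := Finset.card_pos.2 ⟨p, hp⟩
        omega
      -- recurse
      set C' := C \ P with hC'
      have hC'T : C' ⊆ T := Finset.sdiff_subset.trans hCT
      have hcardsplit : C'.card + P.card = C.card := Finset.card_sdiff_add_card_eq_card hPC
      have hp1 : 1 ≤ P.card := Finset.card_pos.2 hPne
      have hC'N : C'.card ≤ N := by omega
      have hWΛ' : W ≤ Λ' := le_trans hWΛ le_sup_left
      have hTsub : Q ∪ P ⊆ T \ C' := by
        intro i hi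
        rcases Finset.mem_union.1 hi with hiQ | hiP
        · obtain ⟨hiT, hiC⟩ := Finset.mem_sdiff.1 hiQ
          exact Finset.mem_sdiff.2 ⟨hiT, fun h => hiC (Finset.mem_sdiff.1 h).1⟩
        · exact Finset.mem_sdiff.2 ⟨hPT hiP, fun h => (Finset.mem_sdiff.1 h).2 hiP⟩
      have hΛ'SIG : (Λ' : Set V) ⊆ SIG R W (T \ C') := by
        intro v hv
        exact SIG_mono (hzero _ Finset.sdiff_subset) hTsub (hΛ'X hv)
      obtain ⟨s', ih1, ih2⟩ := ih C' Λ' hC'N hC'T hWΛ' hΛ'SIG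
      refine ⟨s' + 1, by omega, ?_⟩
      have hκd : k - finrank ℝ W ≤ dmap := by omega
      have hexp : (s' + 1) * (k - finrank ℝ W)
          = s' * (k - finrank ℝ W) + (k - finrank ℝ W) := by ring
      rw [hexp]
      omega

end Core

section Wrap

variable {V : Type*} [AddCommGroup V] [Module ℝ V] [FiniteDimensional ℝ V]
variable {ι : Type*} [DecidableEq ι]

lemma cone_core (k : ℕ) (T : Finset ι) (R : ι → Set V) (W : Submodule ℝ V)
    (hcone : ∀ a ∈ T, KIsCone (R a))
    (hWsub : ∀ a ∈ T, (W : Set V) ⊆ R a)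
    (hrank : ∀ a ∈ T, k ≤ finrank ℝ (span ℝ (R a)))
    (hstar : ∀ A B : Finset ι, A ⊆ T → B ⊆ T → Disjoint A B →
      SIG R W A ∩ SIG R W B ⊆ (W : Set V))
    (hj : finrank ℝ W < k) :
    T.card ≤ max (finrank ℝ V + 1) (2 * (finrank ℝ V - k + 1)) := by
  classical
  have hxch : ∀ a : ι, ∃ z : V, a ∈ T → z ∈ R a ∧
      ∀ v ∈ span ℝ (R a), ∃ ε : ℝ, 0 < ε ∧ z + ε • v ∈ R a := by
    intro a
    by_cases h : a ∈ T
    · obtain ⟨z, hz, hrad⟩ := exists_radial (hcone a h)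
      exact ⟨z, fun _ => ⟨hz, hrad⟩⟩
    · exact ⟨0, fun h' => absurd h' h⟩
  choose x hx using hxch
  have hWSIG : (W : Set V) ⊆ SIG R W (T \ T) := by
    intro w hw
    exact ⟨w, 0, hw, by simp, by simp⟩
  obtain ⟨s, h1, h2⟩ := cone_core_ind k T R W x hcone (fun a ha => (hx a ha).1)
    (fun a ha => (hx a ha).2) hrank hstar T.card T W le_rfl (le_refl T) le_rfl hWSIG
  set d := finrank ℝ V with hd
  set j := finrank ℝ W with hjdef
  set κ := k - j with hκdef
  set m := s * κ with hm
  rcases Nat.lt_or_ge s 2 with hs | hs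
  · have : T.card ≤ d + 1 := by omega
    exact le_trans this (le_max_left _ _)
  · have hκ1 : 1 ≤ κ := by omega
    have key : s + 2 * κ ≤ m + 2 := by
      rw [hm]
      have hs' : (2:ℤ) ≤ (s:ℤ) := by exact_mod_cast hs
      have hκ' : (1:ℤ) ≤ (κ:ℤ) := by exact_mod_cast hκ1
      zify
      nlinarith [mul_nonneg (by linarith : (0:ℤ) ≤ (s:ℤ) - 2) (by linarith : (0:ℤ) ≤ (κ:ℤ) - 1)]
    have : T.card ≤ 2 * (d - k + 1) := by omega
    exact le_trans this (le_max_right _ _)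

end Wrap

section Family

variable {V : Type*} [AddCommGroup V] [Module ℝ V] [FiniteDimensional ℝ V]

lemma KIsCone.biInter {ι : Type*} (s : Finset ι) (G : ι → Set V)
    (h : ∀ b ∈ s, KIsCone (G b)) : KIsCone (⋂ b ∈ s, G b) := by
  refine ⟨?_, ?_, ?_⟩
  · exact Set.mem_iInter₂.2 fun b hb => (h b hb).zero_mem
  · intro u hu v hv
    exact Set.mem_iInter₂.2 fun b hb =>
      (h b hb).add_mem (Set.mem_iInter₂.1 hu b hb) (Set.mem_iInter₂.1 hv b hb)
  · intro t ht u hu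
    exact Set.mem_iInter₂.2 fun b hb => (h b hb).smul_mem ht (Set.mem_iInter₂.1 hu b hb)

set_option maxHeartbeats 1000000 in
lemma cone_family (d k n : ℕ) (hk1 : 1 ≤ k) (hkd : k ≤ d)
    (hn : max (d + 1) (2 * (d - k + 1)) ≤ n)
    (hV : finrank ℝ V = d)
    (F : Fin n → Set V) (hcone : ∀ i, KIsCone (F i))
    (hdim : ∀ S : Finset (Fin n), S.card = max (d + 1) (2 * (d - k + 1)) →
      k ≤ finrank ℝ (span ℝ (⋂ i ∈ S, F i))) :
    k ≤ finrank ℝ (span ℝ (⋂ i, F i)) := by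
  by_contra hcon
  push_neg at hcon
  classical
  set bad : Finset (Fin n) → Prop :=
    fun U => finrank ℝ (span ℝ (⋂ i ∈ U, F i)) < k with hbad
  have hUnivBad : bad Finset.univ := by
    have he : (⋂ i ∈ Finset.univ, F i) = ⋂ i, F i := by simp
    show finrank ℝ (span ℝ (⋂ i ∈ Finset.univ, F i)) < k
    rw [he]
    exact hcon
  have hBne : ((Finset.univ : Finset (Finset (Fin n))).filter bad).Nonempty :=
    ⟨Finset.univ, Finset.mem_filter.2 ⟨Finset.mem_univ _, hUnivBad⟩⟩
  obtain ⟨T, hTmem, hTmin⟩ := Finset.exists_min_image _ Finset.card hBne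
  have hTbad : bad T := (Finset.mem_filter.1 hTmem).2
  have hTminlt : ∀ U : Finset (Fin n), U.card < T.card → ¬ bad U := by
    intro U hUcard hUbad
    have := hTmin U (Finset.mem_filter.2 ⟨Finset.mem_univ _, hUbad⟩)
    omega
  have hTne : T.Nonempty := by
    rcases Finset.eq_empty_or_nonempty T with rfl | h
    · exfalso
      rw [hbad] at hTbad
      have he : (⋂ i ∈ (∅ : Finset (Fin n)), F i) = Set.univ := by simp
      rw [he, Submodule.span_univ, finrank_top, hV] at hTbad
      omega
    · exact h
  set D := ⋂ i ∈ T, F i with hD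
  have hDcone : KIsCone D := KIsCone.biInter T F (fun b _ => hcone b)
  set W := span ℝ D with hW
  have hjW : finrank ℝ W < k := hTbad
  obtain ⟨z, hzD, hzrad⟩ := exists_radial hDcone
  set E : Fin n → Set V := fun a => feas (F a) z with hE
  have hzF : ∀ a ∈ T, z ∈ F a := fun a ha => Set.mem_iInter₂.1 hzD a ha
  have hEcone : ∀ a ∈ T, KIsCone (E a) :=
    fun a ha => feas_isCone (hcone a).convex (hzF a ha)
  have hWE : ∀ b ∈ T, (W : Set V) ⊆ E b := by
    intro b hb v hv
    obtain ⟨ε, hε, hmem⟩ := hzrad v hv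
    exact ⟨ε, hε, Set.mem_iInter₂.1 hmem b hb⟩
  set R : Fin n → Set V := fun a => ⋂ b ∈ T.erase a, E b with hR
  have hRcone : ∀ a ∈ T, KIsCone (R a) := fun a _ =>
    KIsCone.biInter _ E (fun b hb => hEcone b (Finset.mem_of_mem_erase hb))
  have hWR : ∀ a ∈ T, (W : Set V) ⊆ R a := by
    intro a _ v hv
    exact Set.mem_iInter₂.2 fun b hb => hWE b (Finset.mem_of_mem_erase hb) hv
  have hrankR : ∀ a ∈ T, k ≤ finrank ℝ (span ℝ (R a)) := by
    intro a ha
    set Da := ⋂ b ∈ T.erase a, F b with hDa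
    have hnotbad : ¬ bad (T.erase a) := hTminlt _ (Finset.card_erase_lt_of_mem ha)
    simp only [hbad] at hnotbad
    rw [Nat.not_lt] at hnotbad
    have h0Da : (0 : V) ∈ Da := Set.mem_iInter₂.2 fun b _ => (hcone b).zero_mem
    have hsub : ∀ y ∈ Da, y - z ∈ R a := by
      intro y hy
      refine Set.mem_iInter₂.2 fun b hb => ⟨1, one_pos, ?_⟩
      have := Set.mem_iInter₂.1 hy b hb
      simpa using this
    have hDaspan : Da ⊆ (span ℝ (R a) : Set V) := by
      intro y hy
      have h1 : y - z ∈ span ℝ (R a) := subset_span (hsub y hy)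
      have h2 : (0:V) - z ∈ span ℝ (R a) := subset_span (hsub 0 h0Da)
      have he : y = (y - z) - ((0:V) - z) := by abel
      rw [he]
      exact Submodule.sub_mem _ h1 h2
    exact le_trans hnotbad (Submodule.finrank_mono (span_le.2 hDaspan))
  have hstar : ∀ A B : Finset (Fin n), A ⊆ T → B ⊆ T → Disjoint A B →
      SIG R W A ∩ SIG R W B ⊆ (W : Set V) := by
    intro A B hA hB hdisj v hv
    have hvE : ∀ c ∈ T, v ∈ E c := by
      intro c hc
      have hcase : c ∉ A ∨ c ∉ B := by
        by_contra h
        push_neg at h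
        exact (Finset.disjoint_left.1 hdisj h.1) h.2
      have hsubSIG : ∀ (U : Finset (Fin n)), U ⊆ T → c ∉ U → v ∈ SIG R W U → v ∈ E c := by
        intro U hUT hcU hvU
        have hUsub : U ⊆ T.erase c :=
          fun i hi => Finset.mem_erase.2 ⟨fun h => hcU (h ▸ hi), hUT hi⟩
        have h1 : v ∈ SIG R W (T.erase c) :=
          SIG_mono (fun a ha => (hRcone a (Finset.mem_of_mem_erase ha)).zero_mem) hUsub hvU
        refine SIG_subset (hEcone c hc) (hWE c hc) ?_ h1
        intro a ha w hw
        have hca : c ∈ T.erase a :=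
          Finset.mem_erase.2 ⟨fun h => (Finset.mem_erase.1 ha).1 h.symm, hc⟩
        exact Set.mem_iInter₂.1 hw c hca
      rcases hcase with h | h
      · exact hsubSIG A hA h hv.1
      · exact hsubSIG B hB h hv.2
    have hch : ∀ c : Fin n, ∃ t : ℝ, c ∈ T → (0 < t ∧ z + t • v ∈ F c) := by
      intro c
      by_cases h : c ∈ T
      · obtain ⟨t, ht, hmem⟩ := hvE c h
        exact ⟨t, fun _ => ⟨ht, hmem⟩⟩
      · exact ⟨1, fun h' => absurd h' h⟩
    choose tf htf using hch
    set tbar := T.inf' hTne tf with htbar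
    have htbarpos : 0 < tbar := (Finset.lt_inf'_iff _).2 fun c hc => (htf c hc).1
    have hmemD : z + tbar • v ∈ D := by
      refine Set.mem_iInter₂.2 fun c hc => ?_
      exact convex_interval (hcone c).convex (hzF c hc) (htf c hc).2 htbarpos
        (Finset.inf'_le _ hc)
    have h1 : z + tbar • v ∈ W := subset_span hmemD
    have h2 : z ∈ W := subset_span hzD
    have h3 : tbar • v ∈ W := by
      have h4 := W.sub_mem h1 h2
      have he : z + tbar • v - z = tbar • v := by abel
      rwa [he] at h4
    have h5 := W.smul_mem tbar⁻¹ h3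
    rwa [smul_smul, inv_mul_cancel₀ (ne_of_gt htbarpos), one_smul] at h5
  have hcard := cone_core k T R W hRcone hWR hrankR hstar hjW
  rw [hV] at hcard
  obtain ⟨S, hTS, _, hScard⟩ := Finset.exists_subsuperset_card_eq
    (Finset.subset_univ T) hcard
    (by rw [Finset.card_univ, Fintype.card_fin]; exact hn)
  have hk := hdim S hScard
  have hmono : (⋂ i ∈ S, F i) ⊆ ⋂ i ∈ T, F i := by
    intro v hv
    exact Set.mem_iInter₂.2 fun i hi => Set.mem_iInter₂.1 hv i (hTS hi)
  have hle := le_trans hk (Submodule.finrank_mono (span_mono hmono))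
  rw [hbad] at hTbad
  omega

end Family

/-- **Katchalski's dimension Helly theorem.** Let `1 ≤ k ≤ d` and
`g = max {d+1, 2(d-k+1)}`. If in a family of at least `g` convex sets in `ℝ^d` every `g`
members have an intersection of dimension at least `k`, then the intersection of the whole
family has dimension at least `k`. (For a nonempty convex set, its dimension is the
dimension of its affine hull; since `k ≥ 1`, "dimension ≥ k" is expressed as
`k ≤ finrank` of the direction of the affine span.) -/
theorem katchalski_dimension_helly (d k : ℕ) (hd : 1 ≤ d) (hk1 : 1 ≤ k) (hkd : k ≤ d)
    (n : ℕ) (hn : max (d + 1) (2 * (d - k + 1)) ≤ n)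
    (K : Fin n → Set (EuclideanSpace ℝ (Fin d)))
    (hconv : ∀ i, Convex ℝ (K i))
    (hdim : ∀ S : Finset (Fin n), S.card = max (d + 1) (2 * (d - k + 1)) →
      k ≤ Module.finrank ℝ (affineSpan ℝ (⋂ i ∈ S, K i)).direction) :
    k ≤ Module.finrank ℝ (affineSpan ℝ (⋂ i, K i)).direction := by
  classical
  have hVd : finrank ℝ (EuclideanSpace ℝ (Fin d)) = d := finrank_euclideanSpace_fin
  have hdg : d + 1 ≤ max (d + 1) (2 * (d - k + 1)) := le_max_left _ _
  have hnpos : 0 < n := by omega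
  -- Step 1: every g-fold intersection is nonempty
  have hSne : ∀ S : Finset (Fin n), S.card = max (d + 1) (2 * (d - k + 1)) →
      (⋂ i ∈ S, K i).Nonempty := by
    intro S hScard
    by_contra hemp
    rw [Set.not_nonempty_iff_eq_empty] at hemp
    have h1 := hdim S hScard
    rw [hemp, AffineSubspace.span_empty, AffineSubspace.direction_bot] at h1
    rw [finrank_bot] at h1
    omega
  -- Step 2: Helly gives a common point
  have hHelly : (⋂ i ∈ (Finset.univ : Finset (Fin n)), K i).Nonempty := by
    apply Convex.helly_theorem' (fun i _ => hconv i)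
    intro I hIu hMcard
    have hIg : I.card ≤ max (d + 1) (2 * (d - k + 1)) := by
      rw [hVd] at hMcard; omega
    obtain ⟨S, hIS, _, hScard⟩ := Finset.exists_subsuperset_card_eq hIu hIg
      (by rw [Finset.card_univ, Fintype.card_fin]; exact hn)
    obtain ⟨p, hp⟩ := hSne S hScard
    exact ⟨p, Set.mem_iInter₂.2 fun i hi => Set.mem_iInter₂.1 hp i (hIS hi)⟩
  obtain ⟨x, hx⟩ := hHelly
  have hxK : ∀ i, x ∈ K i := fun i => Set.mem_iInter₂.1 hx i (Finset.mem_univ i)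
  -- Step 3: pass to the cones of feasible directions at x
  set F : Fin n → Set (EuclideanSpace ℝ (Fin d)) := fun i => feas (K i) x with hF
  have hFcone : ∀ i, KIsCone (F i) := fun i => feas_isCone (hconv i) (hxK i)
  have hFdim : ∀ S : Finset (Fin n), S.card = max (d + 1) (2 * (d - k + 1)) →
      k ≤ finrank ℝ (span ℝ (⋂ i ∈ S, F i)) := by
    intro S hScard
    have h1 := hdim S hScard
    rw [direction_affineSpan] at h1
    refine le_trans h1 (Submodule.finrank_mono ?_)
    rw [vectorSpan_def]
    apply span_le.2
    rintro v hv
    obtain ⟨y, hy, y', hy', rfl⟩ := Set.mem_vsub.1 hv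
    have hmem : ∀ u, u ∈ (⋂ i ∈ S, K i) → u - x ∈ (⋂ i ∈ S, F i) := by
      intro u hu
      refine Set.mem_iInter₂.2 fun i hi => ⟨1, one_pos, ?_⟩
      have := Set.mem_iInter₂.1 hu i hi
      simpa using this
    have he : y -ᵥ y' = (y - x) - (y' - x) := by
      rw [vsub_eq_sub]; abel
    rw [he]
    exact Submodule.sub_mem _ (subset_span (hmem y hy)) (subset_span (hmem y' hy'))
  have hkF : k ≤ finrank ℝ (span ℝ (⋂ i, F i)) :=
    cone_family d k n hk1 hkd hn hVd F hFcone hFdim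
  -- Step 4: transfer back to the affine span of the intersection
  refine le_trans hkF (Submodule.finrank_mono ?_)
  apply span_le.2
  intro v hv
  have hch : ∀ i : Fin n, ∃ t : ℝ, 0 < t ∧ x + t • v ∈ K i :=
    fun i => Set.mem_iInter.1 hv i
  choose tf htf using hch
  have hne : (Finset.univ : Finset (Fin n)).Nonempty :=
    ⟨⟨0, hnpos⟩, Finset.mem_univ _⟩
  set tbar := Finset.univ.inf' hne tf with htbar
  have htbarpos : 0 < tbar := (Finset.lt_inf'_iff _).2 fun c _ => (htf c).1
  have hmem : x + tbar • v ∈ ⋂ i, K i := by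
    refine Set.mem_iInter.2 fun i => ?_
    exact convex_interval (hconv i) (hxK i) (htf i).2 htbarpos
      (Finset.inf'_le _ (Finset.mem_univ i))
  have h1 : x + tbar • v ∈ affineSpan ℝ (⋂ i, K i) :=
    subset_affineSpan _ _ hmem
  have h2 : x ∈ affineSpan ℝ (⋂ i, K i) :=
    subset_affineSpan _ _ (Set.mem_iInter.2 hxK)
  have h3 : (x + tbar • v) -ᵥ x ∈ (affineSpan ℝ (⋂ i, K i)).direction :=
    AffineSubspace.vsub_mem_direction h1 h2
  have h4 : tbar • v ∈ (affineSpan ℝ (⋂ i, K i)).direction := by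
    have he : (x + tbar • v) -ᵥ x = tbar • v := by
      rw [vsub_eq_sub]; abel
    rwa [he] at h3
  have h5 := Submodule.smul_mem _ tbar⁻¹ h4
  rwa [smul_smul, inv_mul_cancel₀ (ne_of_gt htbarpos), one_smul] at h5
end

section
/- Let F be a finite family of convex lattice sets in ℤ^d, that is, sets of the form ℤ^d ∩ C where C is a convex subset of ℝ^d, with |F| ≥ 2^d. If every 2^d members of F have a point in common, then the intersection of all members of F is non-empty. -/
set_option maxHeartbeats 1000000

namespace DoignonProof

open Finset

variable {d : ℕ}

/-- integer dot product -/
def dot (a x : Fin d → ℤ) : ℤ := ∑ t, a t * x t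

lemma dot_midpoint (a x y z : Fin d → ℤ) (h : ∀ t, x t + y t = 2 * z t) :
    dot a x + dot a y = 2 * dot a z := by
  unfold dot
  rw [← Finset.sum_add_distrib, Finset.mul_sum]
  apply Finset.sum_congr rfl
  intro t _
  rw [← mul_add, h t]
  ring

lemma card_parity : Fintype.card (Fin d → ZMod 2) = 2 ^ d := by
  simp [Fintype.card_fun]

theorem heart_aux {ι : Type*} [Fintype ι] [DecidableEq ι] (a : ι → (Fin d → ℤ))
    (hcard : 2 ^ d < Fintype.card ι) :
    ∀ (N : ℕ) (b : ι → ℤ) (e : ι → ℤ) (x : ι → (Fin d → ℤ)),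
      (∀ k l, l ≠ k → dot (a l) (x k) ≤ b l) →
      (∀ k, dot (a k) (x k) = b k + e k) →
      (∀ k, 1 ≤ e k) →
      (∀ k y, (∀ l, l ≠ k → dot (a l) y ≤ b l) → b k + e k ≤ dot (a k) y) →
      (∀ y, ∃ k, b k < dot (a k) y) →
      (∑ k, (e k).toNat ≤ N) → False := by
  intro N
  induction N with
  | zero =>
    intro b e x hfeas heq hpos hmin hinf hsum
    have h1 : Fintype.card ι ≤ ∑ k, (e k).toNat := by
      rw [← Finset.card_univ, Finset.card_eq_sum_ones]
      apply Finset.sum_le_sum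
      intro k _
      have := hpos k
      omega
    have h2 : 0 < 2 ^ d := Nat.pow_pos (n := d) (by norm_num)
    omega
  | succ N ih =>
    intro b e x hfeas heq hpos hmin hinf hsum
    -- pigeonhole
    obtain ⟨i, j, hij, hfij⟩ := Fintype.exists_ne_map_eq_of_card_lt
      (fun k => (fun t => ((x k t : ZMod 2)) : Fin d → ZMod 2))
      (by rw [card_parity]; exact hcard)
    by_cases hxeq : x i = x j
    · -- then x i satisfies everything, contradiction
      obtain ⟨k, hk⟩ := hinf (x i)
      rcases eq_or_ne k i with rfl | hne
      · have := hfeas j k hij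
        rw [← hxeq] at this
        omega
      · have := hfeas i k hne
        omega
    · -- midpoint
      have hdvd : ∀ t, (2:ℤ) ∣ (x i t + x j t) := by
        intro t
        have hft : ((x i t : ℤ) : ZMod 2) = ((x j t : ℤ) : ZMod 2) := congrFun hfij t
        have : ((x i t + x j t : ℤ) : ZMod 2) = 0 := by
          push_cast
          rw [hft, ← two_mul]
          have h2 : (2 : ZMod 2) = 0 := by decide
          rw [h2, zero_mul]
        exact (ZMod.intCast_zmod_eq_zero_iff_dvd _ 2).mp this
      set z : Fin d → ℤ := fun t => (x i t + x j t) / 2 with hzdef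
      have hz : ∀ t, x i t + x j t = 2 * z t := by
        intro t
        exact (Int.mul_ediv_cancel' (hdvd t)).symm
      have hdot : ∀ c : Fin d → ℤ, dot c (x i) + dot c (x j) = 2 * dot c z :=
        fun c => dot_midpoint c _ _ _ hz
      have hzk : ∀ l, l ≠ i → l ≠ j → dot (a l) z ≤ b l := by
        intro l h1 h2
        have e1 := hfeas i l h1
        have e2 := hfeas j l h2
        have e3 := hdot (a l)
        omega
      -- z must violate both i and j
      have hzi : b i < dot (a i) z := by
        by_contra hcon
        push_neg at hcon
        have hzdom : ∀ l, l ≠ j → dot (a l) z ≤ b l := by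
          intro l hl
          rcases eq_or_ne l i with rfl | hli
          · exact hcon
          · exact hzk l hli hl
        have h1 := hmin j z hzdom
        have h2 := hfeas i j hij.symm
        have h3 := heq j
        have h4 := hdot (a j)
        have h5 := hpos j
        omega
      have hzj : b j < dot (a j) z := by
        by_contra hcon
        push_neg at hcon
        have hzdom : ∀ l, l ≠ i → dot (a l) z ≤ b l := by
          intro l hl
          rcases eq_or_ne l j with rfl | hlj
          · exact hcon
          · exact hzk l hl hlj
        have h1 := hmin i z hzdom
        have h2 := hfeas j i hij
        have h3 := heq i
        have h4 := hdot (a i)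
        have h5 := hpos i
        omega
      -- e i ≥ 2
      have hei2 : 2 ≤ e i := by
        have h2 := hfeas j i hij
        have h3 := heq i
        have h4 := hdot (a i)
        omega
      -- relax row i
      set b' : ι → ℤ := Function.update b i (b i + 1) with hb'def
      have hb'i : b' i = b i + 1 := Function.update_self i (b i + 1) b
      have hb'ne : ∀ l, l ≠ i → b' l = b l := fun l hl => Function.update_of_ne hl _ b
      have hb'ge : ∀ l, b l ≤ b' l := by
        intro l
        rcases eq_or_ne l i with rfl | hl
        · omega
        · rw [hb'ne l hl]
      -- new system still infeasible
      have hinf' : ∀ y, ∃ k, b' k < dot (a k) y := by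
        intro y
        by_contra hcon
        push_neg at hcon
        have hdom : ∀ l, l ≠ i → dot (a l) y ≤ b l := by
          intro l hl
          have := hcon l
          rw [hb'ne l hl] at this
          exact this
        have h1 := hmin i y hdom
        have h2 := hcon i
        omega
      -- new minimizers
      have hE : ∀ k, ∃ ee : ℤ,
          (∃ y, (∀ l, l ≠ k → dot (a l) y ≤ b' l) ∧ dot (a k) y - b' k = ee) ∧
          (∀ v, (∃ y, (∀ l, l ≠ k → dot (a l) y ≤ b' l) ∧ dot (a k) y - b' k = v) → ee ≤ v) := by
        intro k
        apply Int.exists_least_of_bdd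
        · refine ⟨1, ?_⟩
          rintro v ⟨y, hy, rfl⟩
          obtain ⟨l, hl⟩ := hinf' y
          rcases eq_or_ne l k with rfl | hne
          · omega
          · exact absurd (hy l hne) (not_le.mpr hl)
        · exact ⟨_, x k, fun l hl => le_trans (hfeas k l hl) (hb'ge l), rfl⟩
      choose e' he'mem he'min using hE
      choose x' hx'feas hx'eq using he'mem
      have he'pos : ∀ k, 1 ≤ e' k := by
        intro k
        obtain ⟨l, hl⟩ := hinf' (x' k)
        rcases eq_or_ne l k with rfl | hne
        · have := hx'eq l
          omega
        · exact absurd (hx'feas k l hne) (not_le.mpr hl)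
      have he'i : e' i ≤ e i - 1 := by
        have hle := he'min i (dot (a i) (x i) - b' i)
          ⟨x i, fun l hl => le_trans (hfeas i l hl) (hb'ge l), rfl⟩
        have := heq i
        omega
      have he'k : ∀ k, k ≠ i → e' k ≤ e k := by
        intro k hk
        have hle := he'min k (dot (a k) (x k) - b' k)
          ⟨x k, fun l hl => le_trans (hfeas k l hl) (hb'ge l), rfl⟩
        have h1 := heq k
        have h2 := hb'ne k hk
        omega
      have hsum' : ∑ k, (e' k).toNat ≤ N := by
        have hlt : ∑ k, (e' k).toNat < ∑ k, (e k).toNat := by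
          apply Finset.sum_lt_sum
          · intro k _
            rcases eq_or_ne k i with rfl | hk
            · have := he'pos k; have := hpos k; omega
            · have := he'k k hk; have := he'pos k; have := hpos k; omega
          · exact ⟨i, Finset.mem_univ i, by have := he'pos i; omega⟩
        omega
      exact ih b' e' x' hx'feas
        (by intro k; have := hx'eq k; omega)
        he'pos
        (by
          intro k y hy
          have := he'min k (dot (a k) y - b' k) ⟨y, hy, rfl⟩
          omega)
        hinf' hsum'

theorem heart {ι : Type*} [Fintype ι] (a : ι → Fin d → ℤ) (b : ι → ℤ)
    (h1 : ∀ y : Fin d → ℤ, ∃ k, b k < dot (a k) y)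
    (h2 : ∀ k, ∃ y, ∀ l, l ≠ k → dot (a l) y ≤ b l) :
    Fintype.card ι ≤ 2 ^ d := by
  classical
  by_contra hc
  push_neg at hc
  have hE : ∀ k, ∃ ee : ℤ,
      (∃ y, (∀ l, l ≠ k → dot (a l) y ≤ b l) ∧ dot (a k) y - b k = ee) ∧
      (∀ v, (∃ y, (∀ l, l ≠ k → dot (a l) y ≤ b l) ∧ dot (a k) y - b k = v) → ee ≤ v) := by
    intro k
    apply Int.exists_least_of_bdd
    · refine ⟨1, ?_⟩
      rintro v ⟨y, hy, rfl⟩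
      obtain ⟨l, hl⟩ := h1 y
      rcases eq_or_ne l k with rfl | hne
      · omega
      · exact absurd (hy l hne) (not_le.mpr hl)
    · obtain ⟨y, hy⟩ := h2 k
      exact ⟨_, y, hy, rfl⟩
  choose e hmem hmin using hE
  choose x hxf hxe using hmem
  have hpos : ∀ k, 1 ≤ e k := by
    intro k
    obtain ⟨l, hl⟩ := h1 (x k)
    rcases eq_or_ne l k with rfl | hne
    · have := hxe l; omega
    · exact absurd (hxf k l hne) (not_le.mpr hl)
  exact heart_aux a hc (∑ k, (e k).toNat) b e x hxf
    (by intro k; have := hxe k; omega)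
    hpos
    (by intro k y hy; have := hmin k (dot (a k) y - b k) ⟨y, hy, rfl⟩; omega)
    h1 le_rfl


def zcast (v : Fin d → ℤ) : EuclideanSpace ℝ (Fin d) := WithLp.toLp 2 (fun j => (v j : ℝ))

lemma dot_cast (a y : Fin d → ℤ) : ((dot a y : ℤ) : ℝ) = ∑ t, (a t : ℝ) * (y t : ℝ) := by
  unfold dot
  push_cast
  rfl

/-- Integral separation of a lattice point outside a convex set from a finite set
of lattice points inside it. -/
lemma int_separation (C : Set (EuclideanSpace ℝ (Fin d))) (hC : Convex ℝ C)
    (F : Finset (Fin d → ℤ)) (hF : ∀ y ∈ F, zcast y ∈ C)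
    (z : Fin d → ℤ) (hz : zcast z ∉ C) :
    ∃ a : Fin d → ℤ, ∃ β : ℤ, (∀ y ∈ F, dot a y ≤ β) ∧ β + 1 ≤ dot a z := by
  rcases F.eq_empty_or_nonempty with rfl | hFne
  · exact ⟨0, -1, by simp, by simp [dot]⟩
  -- the convex hull of the lattice points of F
  set S : Set (EuclideanSpace ℝ (Fin d)) := zcast '' (F : Set (Fin d → ℤ)) with hSdef
  have hSfin : S.Finite := (F.finite_toSet).image _
  have hhull_sub : convexHull ℝ S ⊆ C := convexHull_min (by
    rintro p ⟨y, hy, rfl⟩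
    exact hF y hy) hC
  have hznot : zcast z ∉ convexHull ℝ S := fun h => hz (hhull_sub h)
  obtain ⟨f₀, u₀, hfu₀, hus₀⟩ := geometric_hahn_banach_point_closed
    (convex_convexHull ℝ S) (hSfin.isClosed_convexHull ℝ) hznot
  -- flip so that the z side is large
  set f : EuclideanSpace ℝ (Fin d) →L[ℝ] ℝ := -f₀ with hfdef
  set u : ℝ := -u₀ with hudef
  have hfu : u < f (zcast z) := by
    simp only [hfdef, hudef, ContinuousLinearMap.neg_apply]
    linarith
  have hus : ∀ y ∈ F, f (zcast y) < u := by
    intro y hy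
    have : zcast y ∈ convexHull ℝ S := subset_convexHull ℝ S ⟨y, hy, rfl⟩
    have := hus₀ _ this
    simp only [hfdef, hudef, ContinuousLinearMap.neg_apply]
    linarith
  -- coordinates of f
  set w : Fin d → ℝ := fun t => f (zcast (Pi.single t 1)) with hwdef
  have hrep : ∀ v : Fin d → ℤ, f (zcast v) = ∑ t, (v t : ℝ) * w t := by
    intro v
    have hv : (zcast v : EuclideanSpace ℝ (Fin d))
        = ∑ t, (v t : ℝ) • zcast (Pi.single t 1) := by
      ext j
      rw [WithLp.ofLp_sum, Finset.sum_apply]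
      simp [zcast, Pi.single_apply]
    rw [hv, map_sum]
    simp [hwdef, smul_eq_mul]
  -- quantities
  set δ : ℝ := f (zcast z) - u with hδdef
  have hδpos : 0 < δ := by simp only [hδdef]; linarith
  set B : ℝ := ((F.image (fun y => ∑ t, |(z t : ℝ) - (y t : ℝ)|)).max' (hFne.image _)) with hBdef
  have hB : ∀ y ∈ F, ∑ t, |(z t : ℝ) - (y t : ℝ)| ≤ B := by
    intro y hy
    exact Finset.le_max' _ _
      (Finset.mem_image_of_mem (fun y => ∑ t, |(z t : ℝ) - (y t : ℝ)|) hy)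
  obtain ⟨N, hN⟩ := exists_nat_gt (B / (2 * δ))
  have hNδ : B / 2 < (N : ℝ) * δ := by
    rw [div_lt_iff₀ (by positivity : (0:ℝ) < 2 * δ)] at hN
    nlinarith
  -- integral approximation
  set a : Fin d → ℤ := fun t => round ((N : ℝ) * w t) with hadef
  clear_value f u w δ B a
  have key : ∀ y ∈ F, dot a y < dot a z := by
    intro y hy
    have hcast : ((dot a z - dot a y : ℤ) : ℝ)
        = ∑ t, ((a t : ℝ) * ((z t : ℝ) - (y t : ℝ))) := by
      push_cast [dot_cast]
      rw [← Finset.sum_sub_distrib]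
      apply Finset.sum_congr rfl
      intro t _
      ring
    have hsplit : ∀ t, (a t : ℝ) * ((z t : ℝ) - (y t : ℝ))
        = (N : ℝ) * w t * ((z t : ℝ) - (y t : ℝ))
          + ((a t : ℝ) - (N : ℝ) * w t) * ((z t : ℝ) - (y t : ℝ)) := by
      intro t; ring
    have hmain : ∑ t, (N : ℝ) * w t * ((z t : ℝ) - (y t : ℝ)) = (N : ℝ) * (f (zcast z) - f (zcast y)) := by
      rw [hrep z, hrep y, ← Finset.sum_sub_distrib, Finset.mul_sum]
      apply Finset.sum_congr rfl
      intro t _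
      ring
    have herr : |∑ t, ((a t : ℝ) - (N : ℝ) * w t) * ((z t : ℝ) - (y t : ℝ))| ≤ B / 2 := by
      calc |∑ t, ((a t : ℝ) - (N : ℝ) * w t) * ((z t : ℝ) - (y t : ℝ))|
          ≤ ∑ t, |((a t : ℝ) - (N : ℝ) * w t) * ((z t : ℝ) - (y t : ℝ))| :=
            Finset.abs_sum_le_sum_abs _ _
        _ ≤ ∑ t, (1/2) * |(z t : ℝ) - (y t : ℝ)| := by
            apply Finset.sum_le_sum
            intro t _
            rw [abs_mul]
            apply mul_le_mul_of_nonneg_right _ (abs_nonneg _)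
            rw [abs_sub_comm, hadef]
            exact abs_sub_round _
        _ = (∑ t, |(z t : ℝ) - (y t : ℝ)|) / 2 := by
            rw [Finset.sum_div]
            apply Finset.sum_congr rfl
            intro t _
            ring
        _ ≤ B / 2 := by
            have := hB y hy
            linarith
    have hgap : (N : ℝ) * δ ≤ (N : ℝ) * (f (zcast z) - f (zcast y)) := by
      apply mul_le_mul_of_nonneg_left _ (Nat.cast_nonneg N)
      have := hus y hy
      simp only [hδdef]
      linarith
    have hfinal : (0 : ℝ) < ((dot a z - dot a y : ℤ) : ℝ) := by
      rw [hcast]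
      have : ∑ t, ((a t : ℝ) * ((z t : ℝ) - (y t : ℝ)))
          = (∑ t, (N : ℝ) * w t * ((z t : ℝ) - (y t : ℝ)))
            + ∑ t, ((a t : ℝ) - (N : ℝ) * w t) * ((z t : ℝ) - (y t : ℝ)) := by
        rw [← Finset.sum_add_distrib]
        apply Finset.sum_congr rfl
        intro t _
        ring
      rw [this, hmain]
      have h1 := abs_le.mp herr
      linarith [hNδ, hgap, h1.1]
    have : (0 : ℤ) < dot a z - dot a y := by exact_mod_cast hfinal
    omega
  -- take β as the max
  set β : ℤ := (F.image (dot a)).max' (hFne.image _) with hβdef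
  refine ⟨a, β, fun y hy => Finset.le_max' _ _ (Finset.mem_image_of_mem _ hy), ?_⟩
  obtain ⟨y₀, hy₀, hy₀eq⟩ := Finset.mem_image.mp ((F.image (dot a)).max'_mem (hFne.image _))
  have := key y₀ hy₀
  omega


lemma dot_single (t : Fin d) (x : Fin d → ℤ) : dot (Pi.single t 1) x = x t := by
  unfold dot
  rw [Finset.sum_eq_single t]
  · simp
  · intro s _ hs
    simp [Pi.single_apply, hs]
  · intro h
    exact absurd (Finset.mem_univ t) h

lemma dot_neg_single (t : Fin d) (x : Fin d → ℤ) : dot (-(Pi.single t 1)) x = -(x t) := by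
  have h : ∀ s, (-(Pi.single t 1) : Fin d → ℤ) s * x s = -((Pi.single t 1 : Fin d → ℤ) s * x s) := by
    intro s
    simp
  unfold dot
  rw [Finset.sum_congr rfl (fun s _ => h s), Finset.sum_neg_distrib]
  rw [← dot_single t x]
  rfl

lemma dot_zero (x : Fin d → ℤ) : dot (0 : Fin d → ℤ) x = 0 := by
  simp [dot]

lemma bounds_exist (Wset : Finset (Fin d → ℤ)) (hWne : Wset.Nonempty) :
    ∃ lo hi : Fin d → ℤ, ∀ w ∈ Wset, ∀ t, lo t ≤ w t ∧ w t ≤ hi t := by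
  refine ⟨fun t => (Wset.image (fun w => w t)).min' (hWne.image _),
    fun t => (Wset.image (fun w => w t)).max' (hWne.image _), ?_⟩
  intro w hw t
  exact ⟨Finset.min'_le _ _ (Finset.mem_image_of_mem (fun w => w t) hw),
    Finset.le_max' _ _ (Finset.mem_image_of_mem (fun w => w t) hw)⟩


end DoignonProof

open DoignonProof Finset

/-- **Doignon's theorem.** The Helly number of the family of convex lattice sets in `ℝ^d`
(sets of the form `ℤ^d ∩ C` with `C ⊆ ℝ^d` convex) is `2^d`: if every `2^d` members of a
finite family of at least `2^d` convex lattice sets have a common point, then the whole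
family has a common point. -/
theorem doignon (d n : ℕ) (hd : 1 ≤ d) (hn : 2 ^ d ≤ n)
    (K : Fin n → Set (Fin d → ℤ))
    (hlat : ∀ i, ∃ C : Set (EuclideanSpace ℝ (Fin d)), Convex ℝ C ∧
      K i = {v : Fin d → ℤ | WithLp.toLp 2 (fun j => (v j : ℝ)) ∈ C})
    (hhelly : ∀ G : Finset (Fin n), G.card = 2 ^ d → (⋂ i ∈ G, K i).Nonempty) :
    (⋂ i, K i).Nonempty := by
  classical
  by_contra hne
  rw [Set.not_nonempty_iff_eq_empty] at hne
  have hmiss : ∀ x : Fin d → ℤ, ∃ i, x ∉ K i := by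
    intro x
    by_contra hcon
    push_neg at hcon
    have hx : x ∈ ⋂ i, K i := Set.mem_iInter.mpr hcon
    rw [hne] at hx
    exact hx
  choose C hCconv hKC using hlat
  have hmemK : ∀ (i : Fin n) (v : Fin d → ℤ), v ∈ K i ↔ zcast v ∈ C i := by
    intro i v
    rw [hKC i]
    exact Iff.rfl
  -- witnesses of all 2^d-subfamilies
  have hsub : ∀ G : {G : Finset (Fin n) // G.card = 2 ^ d},
      ∃ w : Fin d → ℤ, ∀ i ∈ G.1, w ∈ K i := by
    rintro ⟨G, hG⟩
    obtain ⟨w, hw⟩ := hhelly G hG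
    exact ⟨w, fun i hi => Set.mem_iInter₂.mp hw i hi⟩
  choose W hW using hsub
  obtain ⟨G₀, -, hG₀⟩ := Finset.exists_subset_card_eq
    (show 2 ^ d ≤ (Finset.univ : Finset (Fin n)).card by simpa using hn)
  haveI : Nonempty {G : Finset (Fin n) // G.card = 2 ^ d} := ⟨⟨G₀, hG₀⟩⟩
  set Wset : Finset (Fin d → ℤ) := Finset.univ.image W with hWset
  have hWne : Wset.Nonempty :=
    ⟨W ⟨G₀, hG₀⟩, Finset.mem_image_of_mem _ (Finset.mem_univ _)⟩
  obtain ⟨lo, hi, hlohi⟩ := bounds_exist Wset hWne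
  set Box : Finset (Fin d → ℤ) := Fintype.piFinset (fun t => Finset.Icc (lo t) (hi t)) with hBox
  have hWBox : ∀ w ∈ Wset, w ∈ Box := by
    intro w hw
    rw [hBox, Fintype.mem_piFinset]
    intro t
    rw [Finset.mem_Icc]
    exact hlohi w hw t
  -- separation rows
  have hrows : ∀ (i : Fin n) (z : Fin d → ℤ), ∃ aβ : (Fin d → ℤ) × ℤ,
      ((z ∈ Box ∧ z ∉ K i) →
        ((∀ y ∈ Box.filter (fun y => y ∈ K i), dot aβ.1 y ≤ aβ.2) ∧ aβ.2 + 1 ≤ dot aβ.1 z))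
      ∧ (¬(z ∈ Box ∧ z ∉ K i) → aβ = (0, 0)) := by
    intro i z
    by_cases hcase : z ∈ Box ∧ z ∉ K i
    · obtain ⟨a, β, h1, h2⟩ := int_separation (C i) (hCconv i)
        (Box.filter (fun y => y ∈ K i))
        (fun y hy => (hmemK i y).mp (Finset.mem_filter.mp hy).2)
        z (fun hc => hcase.2 ((hmemK i z).mpr hc))
      exact ⟨(a, β), fun _ => ⟨h1, h2⟩, fun hcon => absurd hcase hcon⟩
    · exact ⟨(0, 0), fun h => absurd h hcase, fun _ => rfl⟩
  choose AB hABsep hABjunk using hrows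
  -- rows
  set RowsBox : Finset ((Fin d → ℤ) × ℤ × Option (Fin n)) :=
    (Finset.univ.image (fun t : Fin d =>
        ((Pi.single t 1 : Fin d → ℤ), hi t, (none : Option (Fin n)))))
    ∪ (Finset.univ.image (fun t : Fin d =>
        (-(Pi.single t 1 : Fin d → ℤ), -(lo t), (none : Option (Fin n))))) with hRB
  set RowsSep : Finset ((Fin d → ℤ) × ℤ × Option (Fin n)) :=
    (Box ×ˢ (Finset.univ : Finset (Fin n))).image
      (fun p : (Fin d → ℤ) × Fin n => ((AB p.2 p.1).1, (AB p.2 p.1).2, some p.2)) with hRS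
  set Rows := RowsBox ∪ RowsSep with hRows
  -- infeasibility
  have hRinf : ∀ x : Fin d → ℤ, ∃ r ∈ Rows, r.2.1 < dot r.1 x := by
    intro x
    by_cases hx : x ∈ Box
    · obtain ⟨i, hxi⟩ := hmiss x
      refine ⟨((AB i x).1, (AB i x).2, some i), ?_, ?_⟩
      · rw [hRows]
        apply Finset.mem_union_right
        rw [hRS]
        exact Finset.mem_image.mpr ⟨(x, i),
          Finset.mem_product.mpr ⟨hx, Finset.mem_univ i⟩, rfl⟩
      · have := (hABsep i x ⟨hx, hxi⟩).2
        dsimp only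
        omega
    · rw [hBox, Fintype.mem_piFinset] at hx
      push_neg at hx
      obtain ⟨t, ht⟩ := hx
      rw [Finset.mem_Icc] at ht
      by_cases hlt : x t < lo t
      · refine ⟨(-(Pi.single t 1 : Fin d → ℤ), -(lo t), none), ?_, ?_⟩
        · rw [hRows]
          apply Finset.mem_union_left
          rw [hRB]
          apply Finset.mem_union_right
          exact Finset.mem_image.mpr ⟨t, Finset.mem_univ t, rfl⟩
        · dsimp only
          rw [dot_neg_single]
          omega
      · have hgt : hi t < x t := by omega
        refine ⟨((Pi.single t 1 : Fin d → ℤ), hi t, none), ?_, ?_⟩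
        · rw [hRows]
          apply Finset.mem_union_left
          rw [hRB]
          apply Finset.mem_union_left
          exact Finset.mem_image.mpr ⟨t, Finset.mem_univ t, rfl⟩
        · dsimp only
          rw [dot_single]
          exact hgt
  -- minimal infeasible subsystem
  set T := Rows.powerset.filter
    (fun S => ∀ x : Fin d → ℤ, ∃ r ∈ S, r.2.1 < dot r.1 x) with hT
  have hTne : Rows ∈ T := by
    rw [hT, Finset.mem_filter, Finset.mem_powerset]
    exact ⟨subset_rfl, hRinf⟩
  obtain ⟨S, hST, hSmin⟩ := Finset.exists_min_image T Finset.card ⟨Rows, hTne⟩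
  have hSsub : S ⊆ Rows := Finset.mem_powerset.mp (Finset.mem_filter.mp hST).1
  have hSinf : ∀ x : Fin d → ℤ, ∃ r ∈ S, r.2.1 < dot r.1 x :=
    (Finset.mem_filter.mp hST).2
  have hSfeas : ∀ r ∈ S, ∃ x : Fin d → ℤ, ∀ r' ∈ S.erase r, dot r'.1 x ≤ r'.2.1 := by
    intro r hr
    by_contra hcon
    push_neg at hcon
    have hET : S.erase r ∈ T := by
      rw [hT, Finset.mem_filter, Finset.mem_powerset]
      refine ⟨(Finset.erase_subset _ _).trans hSsub, ?_⟩
      intro x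
      obtain ⟨r', hr', hv⟩ := hcon x
      exact ⟨r', hr', hv⟩
    have h1 := hSmin _ hET
    have h2 := Finset.card_erase_lt_of_mem hr
    omega
  -- heart
  have hcardS : S.card ≤ 2 ^ d := by
    have hh := heart (ι := ↥S) (fun r => (r : (Fin d → ℤ) × ℤ × Option (Fin n)).1)
      (fun r => (r : (Fin d → ℤ) × ℤ × Option (Fin n)).2.1)
      (by
        intro y
        obtain ⟨r, hr, hv⟩ := hSinf y
        exact ⟨⟨r, hr⟩, hv⟩)
      (by
        rintro ⟨r, hr⟩
        obtain ⟨x, hx⟩ := hSfeas r hr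
        refine ⟨x, ?_⟩
        rintro ⟨r', hr'⟩ hne
        apply hx
        rw [Finset.mem_erase]
        exact ⟨fun h => hne (Subtype.ext h), hr'⟩)
    simpa [Fintype.card_coe] using hh
  -- tags
  set I₁ : Finset (Fin n) := S.biUnion (fun r => r.2.2.toFinset) with hI₁
  have hI₁card : I₁.card ≤ 2 ^ d := by
    calc I₁.card ≤ ∑ r ∈ S, (r.2.2.toFinset).card := Finset.card_biUnion_le
      _ ≤ ∑ _r ∈ S, 1 := by
          apply Finset.sum_le_sum
          intro r _
          rcases r.2.2 with _ | i <;> simp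
      _ = S.card := by rw [Finset.sum_const, smul_eq_mul, mul_one]
      _ ≤ 2 ^ d := hcardS
  obtain ⟨G, hIG, hGcard⟩ := Finset.exists_superset_card_eq hI₁card (by simpa using hn)
  set w := W ⟨G, hGcard⟩ with hwdef
  have hwK : ∀ i ∈ G, w ∈ K i := hW ⟨G, hGcard⟩
  have hwBox : w ∈ Box := hWBox _ (Finset.mem_image_of_mem _ (Finset.mem_univ _))
  -- w satisfies all rows of S : contradiction
  obtain ⟨r, hrS, hrv⟩ := hSinf w
  have hrR : r ∈ Rows := hSsub hrS
  rw [hRows, Finset.mem_union] at hrR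
  rcases hrR with hrB | hrsep
  · rw [hRB, Finset.mem_union] at hrB
    rcases hrB with h | h
    · obtain ⟨t, -, rfl⟩ := Finset.mem_image.mp h
      dsimp only at hrv
      rw [dot_single] at hrv
      have : w t ≤ hi t := by
        have := hwBox
        rw [hBox, Fintype.mem_piFinset] at this
        have := this t
        rw [Finset.mem_Icc] at this
        exact this.2
      omega
    · obtain ⟨t, -, rfl⟩ := Finset.mem_image.mp h
      dsimp only at hrv
      rw [dot_neg_single] at hrv
      have : lo t ≤ w t := by
        have := hwBox
        rw [hBox, Fintype.mem_piFinset] at this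
        have := this t
        rw [Finset.mem_Icc] at this
        exact this.1
      omega
  · rw [hRS] at hrsep
    obtain ⟨p, hp, rfl⟩ := Finset.mem_image.mp hrsep
    by_cases hz : p.1 ∈ Box ∧ p.1 ∉ K p.2
    · have hiI : p.2 ∈ I₁ := by
        rw [hI₁]
        apply Finset.mem_biUnion.mpr
        exact ⟨((AB p.2 p.1).1, (AB p.2 p.1).2, some p.2), hrS, by simp⟩
      have hwKi : w ∈ K p.2 := hwK _ (hIG hiI)
      have hval := (hABsep p.2 p.1 hz).1 w (Finset.mem_filter.mpr ⟨hwBox, hwKi⟩)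
      simp only at hrv
      omega
    · have hj := hABjunk p.2 p.1 hz
      simp only at hrv
      rw [hj] at hrv
      rw [dot_zero] at hrv
      omega
end

section
/- For every d ≥ 1 there is a constant c_d > 0 with the following property: for every ε with 0 < ε ≤ 1 and every finite set X of n ≥ d+1 points in ℝ^d, there exists a finite set F ⊆ ℝ^d with |F| ≤ c_d / ε^{d+1} such that for every subset Y ⊆ X with |Y| ≥ εn the convex hull conv Y contains a point of F. -/
open Finset Module Metric
open scoped Classical

local notation "E" d => EuclideanSpace ℝ (Fin d)


variable {d : ℕ}


/-- Carathéodory with explicit cardinality bound. -/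
lemma cara_card {d : ℕ} {S : Finset (E d)} {p : E d}
    (hp : p ∈ convexHull ℝ (S : Set (E d))) :
    ∃ T : Finset (E d), T ⊆ S ∧ T.card ≤ d + 1 ∧ p ∈ convexHull ℝ (T : Set (E d)) := by
  rw [convexHull_eq_union] at hp
  simp only [Set.mem_iUnion, exists_prop] at hp
  obtain ⟨T, hTS, hT, hpT⟩ := hp
  refine ⟨T, by exact_mod_cast hTS, ?_, hpT⟩
  have h1 := hT.card_le_finrank_succ
  have h2 : finrank ℝ (vectorSpan ℝ (Set.range ((↑) : T → E d))) ≤ finrank ℝ (E d) :=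
    Submodule.finrank_le _
  rw [finrank_euclideanSpace_fin] at h2
  simpa [Fintype.card_coe] using h1.trans (by omega)

/-- Carathéodory inside a hyperplane: one fewer point needed. -/
lemma cara_card_hyperplane {d : ℕ} (hd : 1 ≤ d) {S : Finset (E d)} {p a : E d} {c : ℝ}
    (ha : a ≠ 0) (hS : ∀ x ∈ S, inner ℝ a x = c)
    (hp : p ∈ convexHull ℝ (S : Set (E d))) :
    ∃ T : Finset (E d), T ⊆ S ∧ T.card ≤ d ∧ p ∈ convexHull ℝ (T : Set (E d)) := by
  rw [convexHull_eq_union] at hp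
  simp only [Set.mem_iUnion, exists_prop] at hp
  obtain ⟨T, hTS, hT, hpT⟩ := hp
  have hTS' : T ⊆ S := by exact_mod_cast hTS
  refine ⟨T, hTS', ?_, hpT⟩
  have h1 := hT.card_le_finrank_succ
  -- the vector span lies in the kernel of ⟪a, ·⟫
  set f : (E d) →ₗ[ℝ] ℝ := (innerSL ℝ a : (E d) →L[ℝ] ℝ).toLinearMap with hf
  have hker : vectorSpan ℝ (Set.range ((↑) : T → E d)) ≤ LinearMap.ker f := by
    rw [vectorSpan_def]
    rw [Submodule.span_le]
    rintro v ⟨x, hx, y, hy, rfl⟩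
    obtain ⟨⟨x, hxT⟩, rfl⟩ := by exact hx
    obtain ⟨⟨y, hyT⟩, rfl⟩ := by exact hy
    simp only [SetLike.mem_coe, LinearMap.mem_ker, hf, ContinuousLinearMap.coe_coe, innerSL_apply_apply,
      vsub_eq_sub, inner_sub_right]
    rw [hS x (hTS' hxT), hS y (hTS' hyT), sub_self]
  have hrange : LinearMap.range f = ⊤ := by
    rw [LinearMap.range_eq_top]
    intro r
    refine ⟨(r / (‖a‖^2)) • a, ?_⟩
    have : (inner ℝ a a : ℝ) = ‖a‖^2 := real_inner_self_eq_norm_sq a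
    simp only [hf, ContinuousLinearMap.coe_coe, innerSL_apply_apply, inner_smul_right, this]
    have hna : ‖a‖^2 ≠ 0 := by
      simpa using (norm_ne_zero_iff.2 ha)
    field_simp
  have hkerrank : finrank ℝ (LinearMap.ker f) + 1 = d := by
    have := LinearMap.finrank_range_add_finrank_ker f
    rw [hrange, finrank_top, finrank_euclideanSpace_fin] at this
    simp only [finrank_self] at this
    omega
  have h2 : finrank ℝ (vectorSpan ℝ (Set.range ((↑) : T → E d))) ≤ finrank ℝ (LinearMap.ker f) :=
    Submodule.finrank_mono hker
  simpa [Fintype.card_coe] using h1.trans (by omega)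

/-- Moving from `q` towards a point `v` with positive inner product with `p - q`
strictly decreases the distance to `p`. -/
lemma dist_step {d : ℕ} (p q v : E d) (hqv : 0 < (inner ℝ (p - q) (v - q) : ℝ)) :
    ∃ θ : ℝ, 0 < θ ∧ θ ≤ 1 ∧ dist p (q + θ • (v - q)) < dist p q := by
  set a : E d := p - q with ha
  set w : E d := v - q with hw
  have hwne : w ≠ 0 := by
    intro h; rw [h, inner_zero_right] at hqv; exact lt_irrefl _ hqv
  have hw2 : (0:ℝ) < ‖w‖^2 := by
    have := norm_pos_iff.2 hwne
    positivity
  set θ : ℝ := min 1 ((inner ℝ a w : ℝ) / ‖w‖^2) with hθ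
  have hθpos : 0 < θ := lt_min one_pos (div_pos hqv hw2)
  have hθ1 : θ ≤ 1 := min_le_left _ _
  refine ⟨θ, hθpos, hθ1, ?_⟩
  have hkey : θ * ‖w‖^2 ≤ (inner ℝ a w : ℝ) := by
    have : θ ≤ (inner ℝ a w : ℝ) / ‖w‖^2 := min_le_right _ _
    calc θ * ‖w‖^2 ≤ ((inner ℝ a w : ℝ) / ‖w‖^2) * ‖w‖^2 := by nlinarith
    _ = (inner ℝ a w : ℝ) := by field_simp
  have hdist1 : dist p (q + θ • w) = ‖a - θ • w‖ := by
    rw [dist_eq_norm]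
    congr 1
    rw [ha]
    abel
  have hexp : ‖a - θ • w‖^2 = ‖a‖^2 - 2 * θ * (inner ℝ a w : ℝ) + θ^2 * ‖w‖^2 := by
    rw [norm_sub_sq_real, real_inner_smul_right, norm_smul]
    simp [mul_pow, sq_abs]
    ring
  have hlt : ‖a - θ • w‖^2 < ‖a‖^2 := by
    have h1 : θ^2 * ‖w‖^2 ≤ θ * (inner ℝ a w : ℝ) := by
      have := mul_le_mul_of_nonneg_left hkey hθpos.le
      calc θ^2 * ‖w‖^2 = θ * (θ * ‖w‖^2) := by ring
      _ ≤ θ * (inner ℝ a w : ℝ) := this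
    nlinarith
  have hdq : dist p q = ‖a‖ := by rw [dist_eq_norm]
  rw [hdist1, hdq]
  have h0 : 0 ≤ ‖a - θ • w‖ := norm_nonneg _
  have h0' : 0 ≤ ‖a‖ := norm_nonneg _
  nlinarith

/-- **Colorful Carathéodory theorem** (Bárány). -/
lemma colorful_caratheodory_s16 {d : ℕ} (hd : 1 ≤ d) (V : Fin (d+1) → Finset (E d)) (p : E d)
    (hV : ∀ i, p ∈ convexHull ℝ ((V i : Set (E d)))) :
    ∃ f : Fin (d+1) → E d, (∀ i, f i ∈ V i) ∧ p ∈ convexHull ℝ (Set.range f) := by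
  classical
  set Φ : Finset (Fin (d+1) → E d) := Fintype.piFinset V with hΦ
  have hVne : ∀ i, (V i).Nonempty := by
    intro i
    by_contra h
    rw [not_nonempty_iff_eq_empty] at h
    have := hV i
    rw [h] at this
    simpa using this
  have hΦne : Φ.Nonempty := by
    refine ⟨fun i => (hVne i).choose, ?_⟩
    rw [hΦ, Fintype.mem_piFinset]
    exact fun i => (hVne i).choose_spec
  set D : (Fin (d+1) → E d) → ℝ := fun f => infDist p (convexHull ℝ (Set.range f)) with hD
  obtain ⟨f₀, hf₀Φ, hf₀min⟩ := Φ.exists_min_image D hΦne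
  have hf₀V : ∀ i, f₀ i ∈ V i := by
    rw [hΦ, Fintype.mem_piFinset] at hf₀Φ; exact hf₀Φ
  refine ⟨f₀, hf₀V, ?_⟩
  set K : Set (E d) := convexHull ℝ (Set.range f₀) with hK
  have hKco : IsCompact K := (Set.finite_range f₀).isCompact_convexHull ℝ
  have hKne : K.Nonempty := ⟨f₀ 0, subset_convexHull _ _ (Set.mem_range_self 0)⟩
  have hKconv : Convex ℝ K := convex_convexHull _ _
  obtain ⟨q, hqK, hq⟩ := hKco.exists_infDist_eq_dist hKne p
  by_contra hpK
  have hpq : p ≠ q := fun h => hpK (h ▸ hqK)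
  set a : E d := p - q with ha
  have hane : a ≠ 0 := sub_ne_zero.2 hpq
  -- obtuse angle criterion for the nearest point
  have hobtuse : ∀ x ∈ K, (inner ℝ a (x - q) : ℝ) ≤ 0 := by
    intro x hx
    by_contra hpos
    push_neg at hpos
    obtain ⟨θ, hθ0, hθ1, hlt⟩ := dist_step p q x hpos
    have hmem : q + θ • (x - q) ∈ K := by
      have h1 : (1 - θ) • q + θ • x ∈ K := hKconv hqK hx (by linarith) hθ0.le (by ring)
      have h2 : (1 - θ) • q + θ • x = q + θ • (x - q) := by module
      rwa [h2] at h1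
    have h3 := infDist_le_dist_of_mem (x := p) hmem
    rw [hq] at h3
    linarith
  -- q is a convex combination of points of T = image of f₀
  set T : Finset (E d) := Finset.image f₀ univ with hT
  have hTK : (T : Set (E d)) ⊆ K := by
    rw [hK, hT]
    intro x hx
    apply subset_convexHull
    simpa using hx
  have hqT : q ∈ convexHull ℝ (T : Set (E d)) := by
    rwa [hT, coe_image, coe_univ, Set.image_univ, ← hK]
  rw [Finset.convexHull_eq] at hqT
  obtain ⟨w, hw0, hw1, hwq⟩ := hqT
  -- positive-weight points lie on the hyperplane through q orthogonal to a
  set supp : Finset (E d) := T.filter (fun t => w t ≠ 0) with hsupp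
  have hsupp_sub : supp ⊆ T := filter_subset _ _
  have hsum_supp : ∑ t ∈ supp, w t = 1 := by
    rw [hsupp, Finset.sum_filter_ne_zero]; exact hw1
  have hq_eq : ∑ t ∈ T, w t • t = q := by
    have := hwq
    rwa [Finset.centerMass_eq_of_sum_1 _ _ hw1] at this
  have hplane : ∀ t ∈ supp, (inner ℝ a (t - q) : ℝ) = 0 := by
    have hsum0 : ∑ t ∈ T, w t * (inner ℝ a (t - q) : ℝ) = 0 := by
      have e1 : ∀ t ∈ T, w t * (inner ℝ a (t - q) : ℝ)
          = (inner ℝ a (w t • t) : ℝ) - w t * (inner ℝ a q : ℝ) := by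
        intro t _
        rw [real_inner_smul_right, inner_sub_right]
        ring
      rw [Finset.sum_congr rfl e1, Finset.sum_sub_distrib, ← inner_sum, hq_eq,
        ← Finset.sum_mul, hw1, one_mul, sub_self]
    have hterms : ∀ t ∈ T, w t * (inner ℝ a (t - q) : ℝ) ≤ 0 := by
      intro t ht
      have h1 := hobtuse t (hTK ht)
      have h2 := hw0 t ht
      exact mul_nonpos_of_nonneg_of_nonpos h2 h1
    have := (Finset.sum_eq_zero_iff_of_nonpos hterms).1 hsum0
    intro t ht
    rw [hsupp, mem_filter] at ht
    have := this t ht.1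
    rcases mul_eq_zero.1 this with h | h
    · exact absurd h ht.2
    · exact h
  have hq_supp : q ∈ convexHull ℝ (supp : Set (E d)) := by
    have hcm : supp.centerMass w id = q := by
      rw [hsupp, Finset.centerMass_filter_ne_zero]
      rw [Finset.centerMass_eq_of_sum_1 _ _ hw1]
      simpa using hq_eq
    rw [← hcm]
    exact Finset.centerMass_mem_convexHull supp
      (fun t ht => hw0 t (hsupp_sub ht)) (by rw [hsum_supp]; norm_num)
      (fun t ht => ht)
  -- Carathéodory in the hyperplane: q ∈ conv T₀, |T₀| ≤ d
  obtain ⟨T₀, hT₀supp, hT₀card, hqT₀⟩ :=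
    cara_card_hyperplane hd (a := a) (c := (inner ℝ a q : ℝ)) hane
      (fun x hx => by have := hplane x hx; rw [inner_sub_right] at this; linarith)
      hq_supp
  -- pick preimage indices; find an unused color i₀
  set g : (E d) → Fin (d+1) := fun t => if h : ∃ i, f₀ i = t then h.choose else 0 with hg
  have hgspec : ∀ t ∈ T₀, f₀ (g t) = t := by
    intro t ht
    have : t ∈ T := hsupp_sub (hT₀supp ht)
    rw [hT, Finset.mem_image] at this
    obtain ⟨i, _, hi⟩ := this
    have hex : ∃ i, f₀ i = t := ⟨i, hi⟩
    simp only [hg, dif_pos hex]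
    exact hex.choose_spec
  have hcard : (T₀.image g).card < (univ : Finset (Fin (d+1))).card := by
    calc (T₀.image g).card ≤ T₀.card := Finset.card_image_le
    _ ≤ d := hT₀card
    _ < d + 1 := Nat.lt_succ_self d
    _ = (univ : Finset (Fin (d+1))).card := by simp
  have hex0 : ∃ i₀ : Fin (d+1), i₀ ∉ T₀.image g := by
    by_contra h
    push_neg at h
    have hsub : (univ : Finset (Fin (d+1))) ⊆ T₀.image g := fun i _ => h i
    have := Finset.card_le_card hsub
    omega
  obtain ⟨i₀, hi₀⟩ := hex0
  -- find v ∈ V i₀ on the far side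
  have hvex : ∃ v ∈ V i₀, (inner ℝ a p : ℝ) ≤ inner ℝ a v := by
    by_contra h
    push_neg at h
    have hconv : Convex ℝ {x : E d | (inner ℝ a x : ℝ) < inner ℝ a p} := by
      apply convex_halfSpace_lt
      exact ⟨fun x y => inner_add_right a x y, fun c x => real_inner_smul_right a x c⟩
    have hsub : (convexHull ℝ ((V i₀ : Set (E d)))) ⊆ {x : E d | (inner ℝ a x : ℝ) < inner ℝ a p} :=
      convexHull_min (fun v hv => h v hv) hconv
    have := hsub (hV i₀)
    simp at this
  obtain ⟨v, hvV, hvp⟩ := hvex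
  -- the improved rainbow selection
  set f₁ : Fin (d+1) → E d := Function.update f₀ i₀ v with hf₁
  have hf₁Φ : f₁ ∈ Φ := by
    rw [hΦ, Fintype.mem_piFinset]
    intro i
    by_cases hi : i = i₀
    · rw [hf₁, hi, Function.update_self]; exact hvV
    · rw [hf₁, Function.update_of_ne hi]; exact hf₀V i
  have hT₀r : (T₀ : Set (E d)) ⊆ Set.range f₁ := by
    intro t ht
    have ht' : t ∈ T₀ := ht
    refine ⟨g t, ?_⟩
    have hne : g t ≠ i₀ := by
      intro h
      exact hi₀ (h ▸ Finset.mem_image_of_mem g ht')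
    rw [hf₁, Function.update_of_ne hne]
    exact hgspec t ht'
  have hvr : v ∈ Set.range f₁ := ⟨i₀, by rw [hf₁, Function.update_self]⟩
  set K₁ : Set (E d) := convexHull ℝ (Set.range f₁) with hK₁
  have hqK₁ : q ∈ K₁ := convexHull_mono hT₀r hqT₀
  have hvK₁ : v ∈ K₁ := subset_convexHull _ _ hvr
  have hqvpos : 0 < (inner ℝ (p - q) (v - q) : ℝ) := by
    have h1 : (inner ℝ a (v - q) : ℝ) = (inner ℝ a (v - p) : ℝ) + (inner ℝ a a : ℝ) := by
      rw [← inner_add_right]; congr 1; rw [ha]; abel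
    have h2 : (0:ℝ) ≤ inner ℝ a (v - p) := by
      rw [inner_sub_right]; linarith
    have h3 : (0:ℝ) < (inner ℝ a a : ℝ) := by
      rw [real_inner_self_eq_norm_sq]
      have := norm_pos_iff.2 hane
      positivity
    rw [← ha]
    linarith [h1, h2, h3]
  obtain ⟨θ, hθ0, hθ1, hlt⟩ := dist_step p q v hqvpos
  have hmem : q + θ • (v - q) ∈ K₁ := by
    have h1 : (1 - θ) • q + θ • v ∈ K₁ :=
      (convex_convexHull ℝ _) hqK₁ hvK₁ (by linarith) hθ0.le (by ring)
    have h2 : (1 - θ) • q + θ • v = q + θ • (v - q) := by module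
    rwa [h2] at h1
  have hD1 : D f₁ ≤ dist p (q + θ • (v - q)) := infDist_le_dist_of_mem hmem
  have hD0 : D f₀ = dist p q := hq
  have := hf₀min f₁ hf₁Φ
  rw [hD0] at this
  linarith

/-- A centerpoint-style point: in the hull of every big subset. -/
lemma centerpoint {d : ℕ} (Y : Finset (E d)) (hY : Y.Nonempty) :
    ∃ p : E d, ∀ A ⊆ Y, Y.card ≤ A.card + (Y.card - 1) / (d + 1) →
      p ∈ convexHull ℝ (A : Set (E d)) := by
  classical
  set m := Y.card with hm
  set s := (m - 1) / (d + 1) with hs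
  set 𝒜 : Finset (Finset (E d)) := Y.powerset.filter (fun A => m ≤ A.card + s) with h𝒜
  have hint : (⋂ A ∈ 𝒜, convexHull ℝ (A : Set (E d))).Nonempty := by
    apply Convex.helly_theorem' (𝕜 := ℝ)
    · intro A _; exact convex_convexHull _ _
    · intro I hI hIcard
      have hIY : ∀ A ∈ I, A ⊆ Y ∧ m ≤ A.card + s := by
        intro A hA
        have := hI hA
        rw [h𝒜, mem_filter, mem_powerset] at this
        exact this
      have hU : (I.biUnion (fun A => Y \ A)).card ≤ (d + 1) * s := by
        calc (I.biUnion (fun A => Y \ A)).card ≤ ∑ A ∈ I, (Y \ A).card :=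
              Finset.card_biUnion_le
        _ ≤ ∑ _A ∈ I, s := by
              apply Finset.sum_le_sum
              intro A hA
              have h1 := (hIY A hA).1
              have h2 := (hIY A hA).2
              have h3 := Finset.card_sdiff_of_subset h1
              have h4 := Finset.card_le_card h1
              omega
        _ ≤ (d + 1) * s := by
              rw [Finset.sum_const, smul_eq_mul]
              have hfr : finrank ℝ (E d) = d := finrank_euclideanSpace_fin
              rw [hfr] at hIcard
              exact Nat.mul_le_mul_right s hIcard
      have hmpos : 1 ≤ m := Finset.card_pos.2 hY
      have hds : (d + 1) * s ≤ m - 1 := by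
        rw [hs, Nat.mul_comm]
        exact Nat.div_mul_le_self (m - 1) (d + 1)
      have hsmall : (I.biUnion (fun A => Y \ A)).card < m := by omega
      have hYU : (Y \ I.biUnion (fun A => Y \ A)).Nonempty := by
        rw [← Finset.card_pos]
        have := Finset.le_card_sdiff (I.biUnion (fun A => Y \ A)) Y
        omega
      obtain ⟨y, hy⟩ := hYU
      rw [Finset.mem_sdiff] at hy
      refine ⟨y, ?_⟩
      rw [Set.mem_iInter₂]
      intro A hA
      apply subset_convexHull
      have : y ∈ A := by
        by_contra hyA
        exact hy.2 (Finset.mem_biUnion.2 ⟨A, hA, Finset.mem_sdiff.2 ⟨hy.1, hyA⟩⟩)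
      exact_mod_cast this
  obtain ⟨p, hp⟩ := hint
  rw [Set.mem_iInter₂] at hp
  refine ⟨p, fun A hA hcard => ?_⟩
  exact hp A (by rw [h𝒜, mem_filter, mem_powerset]; exact ⟨hA, hcard⟩)

private lemma foldr_union_card {d : ℕ} :
    ∀ L : List (Finset (E d)), (∀ T ∈ L, T.card ≤ d + 1) →
      (L.foldr (· ∪ ·) ∅).card ≤ L.length * (d + 1)
  | [], _ => by simp
  | T :: L, h => by
    simp only [List.foldr_cons, List.length_cons]
    calc (T ∪ L.foldr (· ∪ ·) ∅).card ≤ T.card + (L.foldr (· ∪ ·) ∅).card :=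
          Finset.card_union_le _ _
    _ ≤ (d + 1) + L.length * (d + 1) := by
          have h1 := h T (List.mem_cons_self)
          have h2 := foldr_union_card L (fun S hS => h S (List.mem_cons_of_mem T hS))
          omega
    _ = (L.length + 1) * (d + 1) := by ring

private lemma mem_subset_foldr_union {d : ℕ} :
    ∀ (L : List (Finset (E d))) (T : Finset (E d)), T ∈ L → T ⊆ L.foldr (· ∪ ·) ∅
  | S :: L, T, h => by
    simp only [List.foldr_cons]
    rcases List.mem_cons.1 h with rfl | h
    · exact Finset.subset_union_left
    · exact (mem_subset_foldr_union L T h).trans Finset.subset_union_right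

/-- Extraction of pairwise disjoint small sets all of whose hulls contain `p`. -/
lemma extract_simplices {d : ℕ} (Y : Finset (E d)) (p : E d) (s : ℕ)
    (hp : ∀ A ⊆ Y, Y.card ≤ A.card + s → p ∈ convexHull ℝ (A : Set (E d))) :
    ∀ k : ℕ, k * (d + 1) ≤ s → ∃ L : List (Finset (E d)), L.length = k + 1 ∧
      L.Pairwise Disjoint ∧
      ∀ T ∈ L, T ⊆ Y ∧ T.card ≤ d + 1 ∧ p ∈ convexHull ℝ (T : Set (E d)) := by
  classical
  intro k
  induction k with
  | zero =>
    intro _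
    have h1 : p ∈ convexHull ℝ (Y : Set (E d)) := hp Y (subset_refl Y) (by omega)
    obtain ⟨T, hTY, hTcard, hpT⟩ := cara_card h1
    exact ⟨[T], rfl, by simp, by simp [hTY, hTcard, hpT]⟩
  | succ k ih =>
    intro hk
    obtain ⟨L, hlen, hdisj, hprop⟩ := ih (le_trans (Nat.mul_le_mul_right _ (Nat.le_succ k)) hk)
    set U : Finset (E d) := L.foldr (· ∪ ·) ∅ with hU
    have hUcard : U.card ≤ (k + 1) * (d + 1) := by
      rw [hU, ← hlen]
      exact foldr_union_card L (fun T hT => (hprop T hT).2.1)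
    have hUs : U.card ≤ s := le_trans hUcard hk
    have hA : Y.card ≤ (Y \ U).card + s := by
      have h1 := Finset.le_card_sdiff U Y
      omega
    have h2 : p ∈ convexHull ℝ ((Y \ U : Finset (E d)) : Set (E d)) :=
      hp (Y \ U) (Finset.sdiff_subset) hA
    obtain ⟨T', hT'sub, hT'card, hpT'⟩ := cara_card h2
    refine ⟨T' :: L, by simp [hlen], ?_, ?_⟩
    · rw [List.pairwise_cons]
      refine ⟨fun S hS => ?_, hdisj⟩
      have hSU : S ⊆ U := mem_subset_foldr_union L S hS
      have hT'U : ∀ x ∈ T', x ∉ U := by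
        intro x hx
        have := hT'sub hx
        rw [Finset.mem_sdiff] at this
        exact this.2
      rw [Finset.disjoint_left]
      intro x hx hxS
      exact hT'U x hx (hSU hxS)
    · intro T hT
      rcases List.mem_cons.1 hT with rfl | hT
      · exact ⟨hT'sub.trans Finset.sdiff_subset, hT'card, hpT'⟩
      · exact hprop T hT

/-- **First selection lemma** (weak form): some point lies in the convex hulls of many
`(d+1)`-element subsets of `Y`. -/
lemma selection {d : ℕ} (hd : 1 ≤ d) (Y : Finset (E d)) (hY : Y.Nonempty) :
    ∃ p : E d, ((Y.card - 1) / (d + 1) / (d + 1) + 1).choose (d + 1) ≤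
      ((Y.powersetCard (d + 1)).filter
        (fun S : Finset (E d) => p ∈ convexHull ℝ (S : Set (E d)))).card := by
  classical
  obtain ⟨p, hp⟩ := centerpoint Y hY
  set s := (Y.card - 1) / (d + 1) with hs
  set r := s / (d + 1) + 1 with hr
  obtain ⟨L, hlen, hdisj, hprop⟩ :=
    extract_simplices Y p s hp (s / (d + 1)) (Nat.div_mul_le_self s (d + 1))
  refine ⟨p, ?_⟩
  -- view L as a function Fin r → Finset (E d)
  have hlen' : L.length = r := by rw [hlen, hr]
  set TT : Fin r → Finset (E d) := fun i => L.get (Fin.cast hlen'.symm i) with hTT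
  have hTTmem : ∀ i, TT i ∈ L := by
    intro i
    rw [hTT]
    exact L.get_mem _
  have hTTdisj : ∀ i j : Fin r, i ≠ j → Disjoint (TT i) (TT j) := by
    intro i j hij
    have hne : (Fin.cast hlen'.symm i) ≠ (Fin.cast hlen'.symm j) := by
      intro h
      apply hij
      have := congrArg (Fin.cast hlen') h
      simpa using this
    rcases lt_or_gt_of_ne hne with h | h
    · exact List.pairwise_iff_get.1 hdisj _ _ h
    · exact (List.pairwise_iff_get.1 hdisj _ _ h).symm
  set P : Finset (Finset (Fin r)) := (univ : Finset (Fin r)).powersetCard (d + 1) with hP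
  set Filt : Finset (Finset (E d)) := (Y.powersetCard (d + 1)).filter
      (fun S : Finset (E d) => p ∈ convexHull ℝ (S : Set (E d))) with hF
  have hPcard : P.card = r.choose (d + 1) := by
    rw [hP, Finset.card_powersetCard, Finset.card_univ, Fintype.card_fin]
  rw [← hPcard]
  -- the linking property
  set Q : Finset (Fin r) → Finset (E d) → Prop := fun I S =>
    (∀ x ∈ S, ∃ i ∈ I, x ∈ TT i) ∧ (∀ i ∈ I, ∃ x ∈ S, x ∈ TT i) with hQ
  have hex : ∀ I ∈ P, ∃ S, S ∈ Filt ∧ Q I S := by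
    intro I hI
    rw [hP, Finset.mem_powersetCard] at hI
    obtain ⟨-, hIcard⟩ := hI
    set e := I.orderIsoOfFin hIcard with he
    have hVi : ∀ j : Fin (d+1), p ∈ convexHull ℝ ((TT (e j) : Set (E d))) :=
      fun j => (hprop _ (hTTmem (e j))).2.2
    obtain ⟨f, hfV, hpf⟩ := colorful_caratheodory_s16 hd (fun j => TT (e j)) p hVi
    have hfinj : Function.Injective f := by
      intro j₁ j₂ hf
      by_contra hne
      have hene : (e j₁ : Fin r) ≠ (e j₂ : Fin r) := by
        intro h
        exact hne (e.injective (Subtype.ext h))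
      have hdis := hTTdisj _ _ hene
      rw [Finset.disjoint_left] at hdis
      exact hdis (hfV j₁) (hf ▸ hfV j₂)
    set S : Finset (E d) := Finset.image f univ with hS
    have hrange : (S : Set (E d)) = Set.range f := by
      rw [hS, coe_image, coe_univ, Set.image_univ]
    refine ⟨S, ?_, ?_, ?_⟩
    · rw [hF, mem_filter, Finset.mem_powersetCard]
      refine ⟨⟨?_, ?_⟩, ?_⟩
      · intro x hx
        rw [hS, Finset.mem_image] at hx
        obtain ⟨j, -, rfl⟩ := hx
        exact (hprop _ (hTTmem (e j))).1 (hfV j)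
      · rw [hS, Finset.card_image_of_injective _ hfinj, card_univ, Fintype.card_fin]
      · rwa [hrange]
    · intro x hx
      rw [hS, Finset.mem_image] at hx
      obtain ⟨j, -, rfl⟩ := hx
      exact ⟨e j, (e j).2, hfV j⟩
    · intro i hi
      set j := e.symm ⟨i, hi⟩ with hj
      refine ⟨f j, ?_, ?_⟩
      · rw [hS]; exact Finset.mem_image_of_mem f (mem_univ j)
      · have : (e j : Fin r) = i := by rw [hj]; simp
        rw [← this] at hi ⊢
        exact hfV j
  have hex2 : ∀ I : Finset (Fin r), ∃ S, I ∈ P → S ∈ Filt ∧ Q I S := by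
    intro I
    by_cases h : I ∈ P
    · obtain ⟨S, h1, h2⟩ := hex I h
      exact ⟨S, fun _ => ⟨h1, h2⟩⟩
    · exact ⟨∅, fun h' => absurd h' h⟩
  choose φ hφ using hex2
  have hsub : ∀ I ∈ P, ∀ J ∈ P, ∀ S, Q I S → Q J S → I ⊆ J := by
    intro I _ J _ S hQI hQJ i hi
    obtain ⟨x, hxS, hxTTi⟩ := hQI.2 i hi
    obtain ⟨j, hjJ, hxTTj⟩ := hQJ.1 x hxS
    have hij : i = j := by
      by_contra hne
      have := hTTdisj i j hne
      rw [Finset.disjoint_left] at this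
      exact this hxTTi hxTTj
    rwa [hij]
  apply Finset.card_le_card_of_injOn φ (fun I hI => (hφ I hI).1)
  intro I hI J hJ hIJ
  rw [Finset.mem_coe] at hI hJ
  have hQI := (hφ I hI).2
  have hQJ := (hφ J hJ).2
  rw [hIJ] at hQI
  exact Finset.Subset.antisymm (hsub I hI J hJ (φ J) hQI hQJ) (hsub J hJ I hI (φ J) hQJ hQI)

/-- Greedy construction of a weak net, given a uniform selection bound. -/
lemma greedy {d : ℕ} (X : Finset (E d)) (ε : ℝ) (h : ℕ) (hh : 1 ≤ h)
    (Hsel : ∀ Y ⊆ X, ε * (X.card : ℝ) ≤ (Y.card : ℝ) →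
      ∃ p : E d, h ≤ ((Y.powersetCard (d+1)).filter
        (fun S : Finset (E d) => p ∈ convexHull ℝ (S : Set (E d)))).card) :
    ∀ k : ℕ, ∀ F : Finset (E d),
      ((X.powersetCard (d+1)).filter
        (fun S : Finset (E d) => ∀ q ∈ F, q ∉ convexHull ℝ (S : Set (E d)))).card ≤ k * h →
      ∃ F' : Finset (E d), F ⊆ F' ∧ F'.card ≤ F.card + k ∧
        ∀ Y ⊆ X, ε * (X.card : ℝ) ≤ (Y.card : ℝ) →
          ∃ p ∈ F', p ∈ convexHull ℝ (Y : Set (E d)) := by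
  classical
  intro k
  induction k with
  | zero =>
    intro F hB
    refine ⟨F, subset_refl _, by omega, ?_⟩
    intro Y hYX hYc
    by_contra hno
    push_neg at hno
    obtain ⟨p, hp⟩ := Hsel Y hYX hYc
    have hpos : 0 < ((Y.powersetCard (d+1)).filter
        (fun S : Finset (E d) => p ∈ convexHull ℝ (S : Set (E d)))).card := by omega
    obtain ⟨S, hS⟩ := Finset.card_pos.1 hpos
    rw [mem_filter, Finset.mem_powersetCard] at hS
    obtain ⟨⟨hSY, hScard⟩, hpS⟩ := hS
    have hSB : S ∈ (X.powersetCard (d+1)).filter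
        (fun S : Finset (E d) => ∀ q ∈ F, q ∉ convexHull ℝ (S : Set (E d))) := by
      rw [mem_filter, Finset.mem_powersetCard]
      refine ⟨⟨hSY.trans hYX, hScard⟩, fun q hq hqS => ?_⟩
      exact hno q hq (convexHull_mono (by exact_mod_cast hSY) hqS)
    have := Finset.card_pos.2 ⟨S, hSB⟩
    omega
  | succ k ih =>
    intro F hB
    by_cases hall : ∀ Y ⊆ X, ε * (X.card : ℝ) ≤ (Y.card : ℝ) →
        ∃ p ∈ F, p ∈ convexHull ℝ (Y : Set (E d))
    · exact ⟨F, subset_refl _, by omega, hall⟩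
    push_neg at hall
    obtain ⟨Y, hYX, hYc, hno⟩ := hall
    obtain ⟨p, hp⟩ := Hsel Y hYX hYc
    set 𝒮 : Finset (Finset (E d)) := (Y.powersetCard (d+1)).filter
        (fun S : Finset (E d) => p ∈ convexHull ℝ (S : Set (E d))) with h𝒮
    set B : Finset (E d) → Finset (Finset (E d)) := fun G => (X.powersetCard (d+1)).filter
        (fun S : Finset (E d) => ∀ q ∈ G, q ∉ convexHull ℝ (S : Set (E d))) with hBdef
    have h𝒮B : 𝒮 ⊆ B F := by
      intro S hS
      rw [h𝒮, mem_filter, Finset.mem_powersetCard] at hS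
      obtain ⟨⟨hSY, hScard⟩, _⟩ := hS
      rw [hBdef, mem_filter, Finset.mem_powersetCard]
      refine ⟨⟨hSY.trans hYX, hScard⟩, fun q hq hqS => ?_⟩
      exact hno q hq (convexHull_mono (by exact_mod_cast hSY) hqS)
    have hBnew : B (insert p F) ⊆ B F \ 𝒮 := by
      intro S hS
      rw [hBdef, mem_filter] at hS
      obtain ⟨hS1, hS2⟩ := hS
      rw [Finset.mem_sdiff]
      constructor
      · rw [hBdef, mem_filter]
        exact ⟨hS1, fun q hq => hS2 q (Finset.mem_insert_of_mem hq)⟩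
      · intro hS𝒮
        rw [h𝒮, mem_filter] at hS𝒮
        exact hS2 p (Finset.mem_insert_self p F) hS𝒮.2
    have hcard : (B (insert p F)).card ≤ k * h := by
      have h1 := Finset.card_le_card hBnew
      have h2 : (B F \ 𝒮).card = (B F).card - 𝒮.card := Finset.card_sdiff_of_subset h𝒮B
      have h3 : (k+1) * h = k * h + h := by ring
      have hBF : (B F).card ≤ (k+1) * h := by rw [hBdef]; exact hB
      have hp' : h ≤ 𝒮.card := hp
      omega
    obtain ⟨F', hFF', hF'card, hF'⟩ := ih (insert p F) hcard
    refine ⟨F', (Finset.subset_insert p F).trans hFF', ?_, hF'⟩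
    have := Finset.card_insert_le p F
    omega

set_option maxHeartbeats 1000000 in
/-- **The weak ε-net theorem** (Alon–Bárány–Füredi–Kleitman). For every `d ≥ 1` there is a
constant `c_d` such that for every `0 < ε ≤ 1` and every finite set `X` of at least
`d+1` points in `ℝ^d` there is a weak `ε`-net `F` for `X` of size at most `c_d / ε^{d+1}`:
`F` meets the convex hull of every `Y ⊆ X` with `|Y| ≥ ε|X|`. -/
theorem weak_epsilon_net (d : ℕ) (hd : 1 ≤ d) :
    ∃ c : ℝ, 0 < c ∧
      ∀ ε : ℝ, 0 < ε → ε ≤ 1 →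
        ∀ X : Finset (EuclideanSpace ℝ (Fin d)), d + 1 ≤ X.card →
          ∃ F : Finset (EuclideanSpace ℝ (Fin d)),
            (F.card : ℝ) ≤ c / ε ^ (d + 1) ∧
            ∀ Y ⊆ X, ε * (X.card : ℝ) ≤ (Y.card : ℝ) →
              ∃ p ∈ F, p ∈ convexHull ℝ (Y : Set (EuclideanSpace ℝ (Fin d))) := by
  classical
  set D : ℝ := (d : ℝ) + 1 with hDdef
  have hD2 : 2 ≤ D := by
    have : (1:ℝ) ≤ (d:ℝ) := by exact_mod_cast hd
    rw [hDdef]; linarith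
  have hD0 : 0 < D := by linarith
  set c : ℝ := (2*D^3)^(d+1) + 8*D^4 + 1 with hc
  have hc0 : 0 < c := by positivity
  clear_value c
  refine ⟨c, hc0, ?_⟩
  intro ε hε hε1 X hX
  set n := X.card with hn
  have hn0 : 0 < n := by omega
  have hnR : (0:ℝ) < n := by exact_mod_cast hn0
  have hεn : (0:ℝ) < ε * n := by positivity
  have hεpow : (0:ℝ) < ε ^ (d+1) := by positivity
  have hεpow1 : ε ^ (d+1) ≤ 1 := pow_le_one₀ hε.le hε1
  by_cases hcase : ε * n ≤ 8*D^4
  · -- small case: take F = X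
    refine ⟨X, ?_, ?_⟩
    · have h1 : (n:ℝ) ≤ 8*D^4/ε := by
        rw [le_div_iff₀ hε]; linarith [hcase]
      have h2 : ε^(d+1) ≤ ε := by
        have := pow_le_pow_of_le_one hε.le hε1 (show 1 ≤ d+1 by omega)
        rwa [pow_one] at this
      have h3 : 8*D^4/ε ≤ 8*D^4/ε^(d+1) := by gcongr <;> positivity
      have h4 : 8*D^4/ε^(d+1) ≤ c/ε^(d+1) := by
        gcongr
        rw [hc]
        have : (0:ℝ) ≤ (2*D^3)^(d+1) := by positivity
        linarith
      calc ((X.card : ℝ)) ≤ 8*D^4/ε := h1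
      _ ≤ c/ε^(d+1) := le_trans h3 h4
    · intro Y hYX hYc
      have hYne : Y.Nonempty := by
        rw [← Finset.card_pos]
        by_contra hcon
        push_neg at hcon
        have hzero : Y.card = 0 := by omega
        rw [hzero] at hYc
        norm_num at hYc
        linarith
      obtain ⟨y, hy⟩ := hYne
      exact ⟨y, hYX hy, subset_convexHull _ _ (by exact_mod_cast hy)⟩
  · push_neg at hcase
    set m₀ := ⌈ε * (n:ℝ)⌉₊ with hm₀def
    set M := (m₀ : ℝ) with hM
    have hm₀ : ε * n ≤ M := Nat.le_ceil _
    have hMK : 8*D^4 < M := lt_of_lt_of_le hcase hm₀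
    have hM0 : (0:ℝ) < M := by nlinarith
    have hm₀1 : 1 ≤ m₀ := by
      by_contra hcon
      push_neg at hcon
      have : m₀ = 0 := by omega
      rw [hM, this] at hM0
      norm_num at hM0
    clear_value M
    set s₀ := (m₀ - 1)/(d+1) with hs₀def
    set r₀ := s₀/(d+1) + 1 with hr₀def
    set h := r₀.choose (d+1) with hhdef
    clear_value s₀ r₀ h
    -- real lower bound for natural division
    have div_bound : ∀ a : ℕ, (a:ℝ)/D - 1 < ((a/(d+1) : ℕ):ℝ) := by
      intro a
      have h1 : a < (d+1) * (a/(d+1) + 1) := Nat.lt_mul_div_succ a (by omega)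
      have h2 : (a:ℝ) < ((d:ℝ)+1) * (((a/(d+1) : ℕ):ℝ) + 1) := by exact_mod_cast h1
      rw [sub_lt_iff_lt_add, div_lt_iff₀ hD0, hDdef]
      nlinarith [h2]
    have hcast1 : ((m₀ - 1 : ℕ):ℝ) = M - 1 := by
      rw [hM]; push_cast [Nat.cast_sub hm₀1]; ring
    have hs₀ : M/D - 2 < (s₀:ℝ) := by
      have := div_bound (m₀ - 1)
      rw [hcast1] at this
      have hDinv : (1:ℝ)/D ≤ 1 := by
        rw [div_le_one hD0]; linarith
      have : (M-1)/D - 1 < (s₀:ℝ) := by rw [hs₀def]; exact_mod_cast this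
      have hexp : (M-1)/D = M/D - 1/D := by ring
      rw [hexp] at this
      linarith
    have hr₀ : M/D^2 - 2 < (r₀:ℝ) := by
      have h1 := div_bound s₀
      have h2 : (r₀:ℝ) = ((s₀/(d+1) : ℕ):ℝ) + 1 := by rw [hr₀def]; push_cast; ring
      have h3 : (s₀:ℝ)/D - 1 < ((s₀/(d+1) : ℕ):ℝ) := h1
      have h4 : (M/D - 2)/D < (s₀:ℝ)/D := by gcongr
      have h5 : (M/D - 2)/D = M/D^2 - 2/D := by field_simp
      have h6 : 2/D ≤ 2 := by rw [div_le_iff₀ hD0]; linarith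
      rw [h2]
      rw [h5] at h4
      linarith
    have hMD2 : 8*D^2 < M/D^2 := by
      rw [lt_div_iff₀ (by positivity)]
      nlinarith
    have hr₀d : (d:ℝ) < (r₀:ℝ) := by
      have : (d:ℝ) = D - 1 := by rw [hDdef]; ring
      nlinarith
    have hr₀d' : d ≤ r₀ := by exact_mod_cast (le_of_lt (by exact_mod_cast hr₀d : d < r₀))
    have hsubcast : ((r₀ - d : ℕ):ℝ) = (r₀:ℝ) - (d:ℝ) := by
      push_cast [Nat.cast_sub hr₀d']; ring
    have hrd_bound : M/(2*D^2) ≤ ((r₀ - d : ℕ):ℝ) := by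
      rw [hsubcast]
      have h1 : (d:ℝ) = D - 1 := by rw [hDdef]; ring
      have h2 : M/(2*D^2) + (D+1) ≤ M/D^2 - 1 := by
        have h3 : M/D^2 - M/(2*D^2) = M/(2*D^2) := by field_simp; ring
        have hq : (0:ℝ) ≤ 4*D^2 - D - 2 := by nlinarith [hD2]
        have hq2 : (D+2)*(2*D^2) ≤ 8*D^4 := by nlinarith [mul_nonneg (by positivity : (0:ℝ) ≤ 2*D^2) hq]
        have h4 : D + 2 ≤ M/(2*D^2) := by
          rw [le_div_iff₀ (by positivity)]
          linarith
        linarith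
      nlinarith [hr₀]
    -- lower bound on h
    have hfact : ((d+1).factorial : ℝ) ≤ D^(d+1) := by
      have h1 := Nat.factorial_le_pow (d+1)
      have h2 : (((d+1)^(d+1) : ℕ):ℝ) = D^(d+1) := by push_cast [hDdef]; ring
      calc ((d+1).factorial : ℝ) ≤ (((d+1)^(d+1) : ℕ):ℝ) := by exact_mod_cast h1
      _ = D^(d+1) := h2
    have hchoose := Nat.pow_le_choose (α := ℝ) (d+1) r₀
    have hidx : r₀ + 1 - (d+1) = r₀ - d := by omega
    rw [hidx] at hchoose
    have hfact0 : (0:ℝ) < ((d+1).factorial : ℝ) := by exact_mod_cast (d+1).factorial_pos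
    have hhlow : (M/(2*D^2))^(d+1) / D^(d+1) ≤ (h:ℝ) := by
      have h1 : (M/(2*D^2))^(d+1) ≤ ((r₀ - d : ℕ):ℝ)^(d+1) :=
        pow_le_pow_left₀ (by positivity) hrd_bound _
      have h2 : (M/(2*D^2))^(d+1) / D^(d+1) ≤ ((r₀ - d : ℕ):ℝ)^(d+1) / ((d+1).factorial : ℝ) := by
        apply div_le_div₀ (by positivity) h1 hfact0 hfact
      exact le_trans h2 (by rw [hhdef]; exact_mod_cast hchoose)
    have hhlow2 : (ε*n)^(d+1) / (2*D^3)^(d+1) ≤ (h:ℝ) := by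
      have h1 : (ε*n)^(d+1) / (2*D^3)^(d+1) = ((ε*n)/(2*D^2))^(d+1) / D^(d+1) := by
        rw [div_pow, div_div, ← mul_pow]
        congr 2
        ring
      rw [h1]
      refine le_trans ?_ hhlow
      have hc2 : (0:ℝ) < 2*D^2 := by positivity
      have hcD : (0:ℝ) < D^(d+1) := by positivity
      have hbase0 : (0:ℝ) ≤ ε*(n:ℝ)/(2*D^2) := le_of_lt (div_pos hεn hc2)
      have hbase : ε*(n:ℝ)/(2*D^2) ≤ M/(2*D^2) := (div_le_div_iff_of_pos_right hc2).2 hm₀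
      exact (div_le_div_iff_of_pos_right hcD).2 (pow_le_pow_left₀ hbase0 hbase _)
    have hh0 : (0:ℝ) < (h:ℝ) := by
      refine lt_of_lt_of_le ?_ hhlow2
      positivity
    have hh1 : 1 ≤ h := Nat.cast_pos.mp hh0
    -- selection hypothesis
    have Hsel : ∀ Y ⊆ X, ε * (n : ℝ) ≤ (Y.card : ℝ) →
        ∃ p : E d, h ≤ ((Y.powersetCard (d+1)).filter
          (fun S : Finset (E d) => p ∈ convexHull ℝ (S : Set (E d)))).card := by
      intro Y hYX hYc
      have hYm₀ : m₀ ≤ Y.card := Nat.ceil_le.2 hYc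
      have hYne : Y.Nonempty := Finset.card_pos.1 (by omega)
      obtain ⟨p, hp⟩ := selection hd Y hYne
      refine ⟨p, le_trans ?_ hp⟩
      rw [hhdef]
      apply Nat.choose_le_choose
      rw [hr₀def, hs₀def]
      have h1 : m₀ - 1 ≤ Y.card - 1 := by omega
      have h2 : (m₀ - 1)/(d+1) ≤ (Y.card - 1)/(d+1) := Nat.div_le_div_right h1
      have h3 : (m₀ - 1)/(d+1)/(d+1) ≤ (Y.card - 1)/(d+1)/(d+1) := Nat.div_le_div_right h2
      omega
    -- run the greedy construction
    set k := (n.choose (d+1))/h + 1 with hkdef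
    clear_value k
    have hB : ((X.powersetCard (d+1)).filter
        (fun S : Finset (E d) => ∀ q ∈ (∅ : Finset (E d)), q ∉ convexHull ℝ (S : Set (E d)))).card
        ≤ k * h := by
      have h1 : ((X.powersetCard (d+1)).filter
          (fun S : Finset (E d) => ∀ q ∈ (∅ : Finset (E d)), q ∉ convexHull ℝ (S : Set (E d)))).card
          ≤ (X.powersetCard (d+1)).card := Finset.card_filter_le _ _
      rw [Finset.card_powersetCard] at h1
      have h2 : n.choose (d+1) < h * (n.choose (d+1)/h + 1) := Nat.lt_mul_div_succ _ (by omega)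
      calc _ ≤ n.choose (d+1) := h1
      _ ≤ k * h := by rw [hkdef]; rw [Nat.mul_comm]; omega
    obtain ⟨F, -, hFcard, hFnet⟩ := greedy X ε h hh1 Hsel k ∅ hB
    refine ⟨F, ?_, hFnet⟩
    -- final size bound
    have hk1 : (k:ℝ) ≤ ((n.choose (d+1) : ℕ):ℝ)/(h:ℝ) + 1 := by
      rw [hkdef]
      push_cast
      have := Nat.cast_div_le (α := ℝ) (m := n.choose (d+1)) (n := h)
      linarith
    have hk2 : ((n.choose (d+1) : ℕ):ℝ) ≤ (n:ℝ)^(d+1) := by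
      have := Nat.choose_le_pow n (d+1)
      exact_mod_cast this
    have hk3 : ((n.choose (d+1) : ℕ):ℝ)/(h:ℝ) ≤ (n:ℝ)^(d+1) / ((ε*n)^(d+1) / (2*D^3)^(d+1)) := by
      apply div_le_div₀ (by positivity) hk2 (by positivity) hhlow2
    have hk4 : (n:ℝ)^(d+1) / ((ε*n)^(d+1) / (2*D^3)^(d+1)) = (2*D^3)^(d+1)/ε^(d+1) := by
      rw [mul_pow]
      field_simp
    have hk5 : (k:ℝ) ≤ (2*D^3)^(d+1)/ε^(d+1) + 1 := by
      rw [hk4] at hk3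
      linarith
    have hk6 : (2*D^3)^(d+1)/ε^(d+1) + 1 ≤ c/ε^(d+1) := by
      rw [hc, div_add' _ _ _ (ne_of_gt hεpow)]
      apply (div_le_div_iff_of_pos_right hεpow).2
      have hD4 : (0:ℝ) ≤ 8*D^4 := by positivity
      linarith [hεpow1]
    have hFk' : F.card ≤ k := by simpa using hFcard
    have hFk : (F.card : ℝ) ≤ (k:ℝ) := by exact_mod_cast hFk'
    linarith
end

section
/- Let r ≥ 1 and d ≥ 1 be integers and let X be a set of r(d+1) points in ℝ^d. Then X can be partitioned into r pairwise disjoint sets S_1, ..., S_r, each of size exactly d+1, such that the convex hulls conv S_1, ..., conv S_r have a point in common. -/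
open Finset Metric Module
open scoped RealInnerProductSpace

section helpers
variable {F : Type*} [NormedAddCommGroup F] [InnerProductSpace ℝ F]

lemma fs_norm_sub_smul_sq (a b : F) (t : ℝ) :
    ‖a - t • b‖ ^ 2 = ‖a‖ ^ 2 - 2 * t * ⟪a, b⟫ + t ^ 2 * ‖b‖ ^ 2 := by
  rw [norm_sub_sq_real, real_inner_smul_right, norm_smul]
  simp only [Real.norm_eq_abs, mul_pow, sq_abs]
  ring

lemma fs_proj_inner_nonpos {K : Set F} (hK : Convex ℝ K) {x y : F} (hy : y ∈ K)
    (hmin : ∀ z ∈ K, dist x y ≤ dist x z) {z : F} (hz : z ∈ K) :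
    ⟪x - y, z - y⟫ ≤ 0 := by
  by_contra h
  push_neg at h
  have hzy : z - y ≠ 0 := by
    intro h0
    rw [h0, inner_zero_right] at h
    exact lt_irrefl _ h
  set β : ℝ := ⟪x - y, z - y⟫ with hβ
  have hn : (0:ℝ) < ‖z - y‖ ^ 2 := pow_pos (norm_pos_iff.mpr hzy) 2
  set t : ℝ := min 1 (β / ‖z - y‖ ^ 2) with ht
  have ht0 : 0 < t := lt_min one_pos (div_pos h hn)
  have ht1 : t ≤ 1 := min_le_left _ _
  have htβ : t * ‖z - y‖ ^ 2 ≤ β := by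
    calc t * ‖z - y‖ ^ 2 ≤ (β / ‖z - y‖ ^ 2) * ‖z - y‖ ^ 2 :=
          mul_le_mul_of_nonneg_right (min_le_right _ _) hn.le
      _ = β := by field_simp
  have hw : y + t • (z - y) ∈ K := by
    have := hK hy hz (by linarith : (0:ℝ) ≤ 1 - t) ht0.le (by ring)
    convert this using 1
    module
  have hd := hmin _ hw
  have hsq : dist x (y + t • (z - y)) ^ 2 < dist x y ^ 2 := by
    have hxw : x - (y + t • (z - y)) = (x - y) - t • (z - y) := by abel
    rw [dist_eq_norm, dist_eq_norm, hxw, fs_norm_sub_smul_sq]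
    have h2 : t ^ 2 * ‖z - y‖ ^ 2 ≤ t * β := by
      have := mul_le_mul_of_nonneg_left htβ ht0.le
      calc t ^ 2 * ‖z - y‖ ^ 2 = t * (t * ‖z - y‖ ^ 2) := by ring
        _ ≤ t * β := this
    nlinarith [mul_pos ht0 h]
  have := pow_le_pow_left₀ dist_nonneg hd 2
  linarith

end helpers


section helpers2
variable {F : Type*} [NormedAddCommGroup F] [InnerProductSpace ℝ F] [FiniteDimensional ℝ F]

lemma fs_exists_min_sum_infDist_sq {r : ℕ} (hr : 0 < r) (K : Fin r → Set F)
    (hcpt : ∀ i, IsCompact (K i)) (hne : ∀ i, (K i).Nonempty)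
    {a : F} {R : ℝ} (hball : ∀ i, K i ⊆ Metric.closedBall a R) :
    ∃ x : F, ∀ z : F, (∑ i, Metric.infDist x (K i) ^ 2) ≤ ∑ i, Metric.infDist z (K i) ^ 2 := by
  set g : F → ℝ := fun x => ∑ i, Metric.infDist x (K i) ^ 2 with hg
  have hcont : Continuous g := by
    apply continuous_finset_sum
    intro i _
    exact (Metric.continuous_infDist_pt (K i)).pow 2
  apply hcont.exists_forall_le' a
  have hC : ∀ x : F, max 0 R + Real.sqrt (g a) ≤ dist x a → g a ≤ g x := by
    intro x hx
    have i0 : Fin r := ⟨0, hr⟩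
    obtain ⟨y, hyK, hyd⟩ := (hcpt i0).exists_infDist_eq_dist (hne i0) x
    have hya : dist y a ≤ R := by
      have := hball i0 hyK
      rwa [Metric.mem_closedBall] at this
    have h1 : Real.sqrt (g a) ≤ Metric.infDist x (K i0) := by
      rw [hyd]
      have : dist x a ≤ dist x y + dist y a := dist_triangle x y a
      have h2 : dist x a - max 0 R ≤ dist x y := by
        have : dist y a ≤ max 0 R := le_trans hya (le_max_right _ _)
        linarith
      linarith [le_max_left 0 R]
    have hga : 0 ≤ g a := by
      apply Finset.sum_nonneg
      intro i _
      positivity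
    have h2 : g a ≤ Metric.infDist x (K i0) ^ 2 := by
      have := pow_le_pow_left₀ (Real.sqrt_nonneg _) h1 2
      rwa [Real.sq_sqrt hga] at this
    refine le_trans h2 ?_
    apply Finset.single_le_sum (f := fun i => Metric.infDist x (K i) ^ 2) (fun i _ => by positivity)
      (Finset.mem_univ i0)
  have := (tendsto_dist_right_cocompact_atTop a).eventually_ge_atTop (max 0 R + Real.sqrt (g a))
  exact this.mono hC

end helpers2


section helper3
variable {d : ℕ}

local notation "E" => EuclideanSpace ℝ (Fin d)

lemma fs_exists_erase (hd : 1 ≤ d) (A : Finset E) (hA : A.card = d + 1)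
    {x y : E} (hxy : x ≠ y) (hy : y ∈ convexHull ℝ (A : Set E))
    (hproj : ∀ z ∈ convexHull ℝ (A : Set E), ⟪x - y, z - y⟫ ≤ 0) :
    ∃ q ∈ A, y ∈ convexHull ℝ ((A : Set E) \ {q}) := by
  classical
  by_cases hAI : AffineIndependent ℝ ((↑) : ↥A → E)
  · -- affinely independent case: find a point with strictly negative inner product
    have hstrict : ∃ a ∈ A, ⟪x - y, (a : E) - y⟫ < 0 := by
      by_contra hno
      push_neg at hno
      have hzero : ∀ a ∈ A, ⟪x - y, (a : E) - y⟫ = 0 := fun a ha =>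
        le_antisymm (hproj a (subset_convexHull ℝ _ (Finset.mem_coe.mpr ha))) (hno a ha)
      have hu : x - y ≠ 0 := sub_ne_zero.mpr hxy
      have hle : vectorSpan ℝ (A : Set E) ≤ (ℝ ∙ (x - y))ᗮ := by
        rw [vectorSpan_def, Submodule.span_le]
        rintro v ⟨p, hp, q, hq, rfl⟩
        rw [SetLike.mem_coe, Submodule.mem_orthogonal_singleton_iff_inner_right]
        have h1 := hzero p hp
        have h2 := hzero q hq
        have hpq : p -ᵥ q = (p - y) - (q - y) := by
          rw [vsub_eq_sub]; abel
        show ⟪x - y, p -ᵥ q⟫ = 0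
        rw [hpq, inner_sub_right, h1, h2, sub_zero]
      have hrank : finrank ℝ (vectorSpan ℝ (A : Set E)) = d := by
        have hcard : Fintype.card ↥A = d + 1 := by simp [hA]
        have h := hAI.finrank_vectorSpan hcard
        rwa [Subtype.range_coe_subtype, Finset.setOf_mem] at h
      have h1 : finrank ℝ (ℝ ∙ (x - y)) = 1 := finrank_span_singleton hu
      have h2 := Submodule.finrank_add_finrank_orthogonal (K := (ℝ ∙ (x - y) : Submodule ℝ E))
      have h3 : finrank ℝ E = d := finrank_euclideanSpace_fin
      have h4 := Submodule.finrank_mono hle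
      omega
    obtain ⟨a, haA, ha⟩ := hstrict
    rw [Finset.mem_convexHull'] at hy
    obtain ⟨w, hw0, hw1, hwy⟩ := hy
    have hsum0 : ∑ z ∈ A, w z * ⟪x - y, z - y⟫ = 0 := by
      have e1 : ∑ z ∈ A, w z * ⟪x - y, z - y⟫ = ⟪x - y, ∑ z ∈ A, w z • (z - y)⟫ := by
        rw [inner_sum]
        exact Finset.sum_congr rfl fun z _ => (real_inner_smul_right _ _ _).symm
      have e2 : ∑ z ∈ A, w z • (z - y) = (0 : E) := by
        have e3 : ∑ z ∈ A, w z • (z - y) = (∑ z ∈ A, w z • z) - (∑ z ∈ A, w z) • y := by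
          rw [Finset.sum_smul, ← Finset.sum_sub_distrib]
          exact Finset.sum_congr rfl fun z _ => smul_sub _ _ _
        rw [e3, hwy, hw1, one_smul, sub_self]
      rw [e1, e2, inner_zero_right]
    have hterms : ∀ z ∈ A, w z * ⟪x - y, z - y⟫ ≤ 0 := fun z hz =>
      mul_nonpos_of_nonneg_of_nonpos (hw0 z hz)
        (hproj z (subset_convexHull ℝ _ (Finset.mem_coe.mpr hz)))
    have hallzero := (Finset.sum_eq_zero_iff_of_nonpos hterms).mp hsum0
    have hwa : w a = 0 := by
      rcases mul_eq_zero.mp (hallzero a haA) with h | h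
      · exact h
      · exact absurd h (ne_of_lt ha)
    refine ⟨a, haA, ?_⟩
    rw [← Finset.coe_erase, Finset.mem_convexHull']
    refine ⟨w, fun z hz => hw0 z (Finset.mem_of_mem_erase hz), ?_, ?_⟩
    · rw [← Finset.sum_erase_add A w haA, hwa, add_zero] at hw1
      exact hw1
    · rw [← Finset.sum_erase_add A (fun z => w z • z) haA, hwa, zero_smul, add_zero] at hwy
      exact hwy
  · obtain ⟨q, hq⟩ := Caratheodory.mem_convexHull_erase hAI hy
    refine ⟨q, Finset.mem_coe.mp q.2, ?_⟩
    rwa [← Finset.coe_erase]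

end helper3


lemma fs_filter_equiv_card {α β : Type*} [Fintype α] [Fintype β] (e : α ≃ β)
    (P : β → Prop) [DecidablePred P] :
    ((Finset.univ).filter fun z => P (e z)).card = ((Finset.univ).filter P).card := by
  rw [← Fintype.card_subtype, ← Fintype.card_subtype]
  exact Fintype.card_congr (e.subtypeEquiv fun a => Iff.rfl)

open scoped Classical in
noncomputable def fsPart {d r : ℕ} (X : Finset (EuclideanSpace ℝ (Fin d)))
    (c : {x // x ∈ X} → Fin r) (i : Fin r) : Finset (EuclideanSpace ℝ (Fin d)) :=
  ((Finset.univ).filter fun z => c z = i).image Subtype.val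

lemma fsPart_mem {d r : ℕ} {X : Finset (EuclideanSpace ℝ (Fin d))}
    {c : {x // x ∈ X} → Fin r} {i : Fin r} {z : EuclideanSpace ℝ (Fin d)} :
    z ∈ fsPart X c i ↔ ∃ h : z ∈ X, c ⟨z, h⟩ = i := by
  classical
  unfold fsPart
  simp only [Finset.mem_image, Finset.mem_filter, Finset.mem_univ, true_and]
  constructor
  · rintro ⟨w, hw, rfl⟩
    exact ⟨w.2, by simpa using hw⟩
  · rintro ⟨h, hc⟩
    exact ⟨⟨z, h⟩, hc, rfl⟩

open scoped Classical in
lemma fsPart_card {d r : ℕ} (X : Finset (EuclideanSpace ℝ (Fin d)))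
    (c : {x // x ∈ X} → Fin r) (i : Fin r) :
    (fsPart X c i).card = ((Finset.univ).filter fun z => c z = i).card := by
  unfold fsPart
  rw [Finset.card_image_of_injective _ Subtype.val_injective]

lemma fsPart_subset {d r : ℕ} {X : Finset (EuclideanSpace ℝ (Fin d))}
    {c : {x // x ∈ X} → Fin r} {i : Fin r} : fsPart X c i ⊆ X := by
  intro z hz
  exact (fsPart_mem.mp hz).fst

section helpers4
variable {F : Type*} [NormedAddCommGroup F] [InnerProductSpace ℝ F]

lemma fs_exists_closer {K : Set F} (hK : Convex ℝ K) {x y q : F} (hy : y ∈ K) (hq : q ∈ K)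
    (hβ : 0 < ⟪x - y, q - y⟫) : ∃ w ∈ K, dist x w < dist x y := by
  by_contra h
  push_neg at h
  exact absurd (fs_proj_inner_nonpos hK hy h hq) (not_le.mpr hβ)

end helpers4

noncomputable def fsHull {d r : ℕ} (X : Finset (EuclideanSpace ℝ (Fin d)))
    (c : {x // x ∈ X} → Fin r) (i : Fin r) : Set (EuclideanSpace ℝ (Fin d)) :=
  convexHull ℝ ↑(fsPart X c i)

/-- **The theorem of Frick and Soberón.** Any set of `r(d+1)` points in `ℝ^d` can be
partitioned into `r` pairwise disjoint parts, each of size exactly `d+1`, whose convex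
hulls have a point in common. -/
theorem frick_soberon (r d : ℕ) (hr : 1 ≤ r) (hd : 1 ≤ d)
    (X : Finset (EuclideanSpace ℝ (Fin d))) (hX : X.card = r * (d + 1)) :
    ∃ S : Fin r → Finset (EuclideanSpace ℝ (Fin d)),
      (∀ i, S i ⊆ X) ∧
      (∀ i j, i ≠ j → Disjoint (S i) (S j)) ∧
      (∀ x ∈ X, ∃ i, x ∈ S i) ∧
      (∀ i, (S i).card = d + 1) ∧
      ∃ p : EuclideanSpace ℝ (Fin d),
        ∀ i, p ∈ convexHull ℝ ((S i : Set (EuclideanSpace ℝ (Fin d)))) := by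
  classical
  have hr0 : 0 < r := hr
  have hXne : X.Nonempty := by
    rw [← Finset.card_pos, hX]
    exact Nat.mul_pos hr0 (Nat.succ_pos d)
  obtain ⟨a, haX⟩ := hXne
  obtain ⟨R, hRX⟩ : ∃ R : ℝ, ∀ z ∈ X, dist z a ≤ R :=
    ⟨X.sup' ⟨a, haX⟩ (fun z => dist z a), fun z hz => by
      exact Finset.le_sup' (fun z => dist z a) hz⟩
  -- the type of valid colourings
  let Ω : Type _ := {c : {x // x ∈ X} → Fin r //
      ∀ i : Fin r, ((Finset.univ).filter fun z => c z = i).card = d + 1}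
  haveI hΩfin : Finite Ω := Subtype.finite
  have hΩne : Nonempty Ω := by
    let e : {x // x ∈ X} ≃ Fin r × Fin (d + 1) :=
      (X.equivFin.trans (finCongr hX)).trans finProdFinEquiv.symm
    refine ⟨⟨fun z => (e z).1, fun i => ?_⟩⟩
    rw [fs_filter_equiv_card e (fun p => p.1 = i)]
    have hset : ((Finset.univ).filter fun p : Fin r × Fin (d + 1) => p.1 = i)
        = {i} ×ˢ Finset.univ := by
      ext p
      rw [Finset.mem_product, Finset.mem_singleton]
      simp
    rw [hset, Finset.card_product, Finset.card_singleton, one_mul, Finset.card_univ,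
      Fintype.card_fin]
  -- basic facts about parts and hulls
  have hcard : ∀ (c : Ω) (i), (fsPart X c.1 i).card = d + 1 := fun c i => by
    rw [fsPart_card]; exact c.2 i
  have hPne : ∀ (c : Ω) (i), (fsPart X c.1 i).Nonempty := fun c i =>
    Finset.card_pos.mp (by rw [hcard]; omega)
  have hHne : ∀ (c : Ω) (i), (fsHull X c.1 i).Nonempty := fun c i =>
    ((Finset.coe_nonempty.mpr (hPne c i)).mono (subset_convexHull ℝ _))
  have hHcpt : ∀ (c : Ω) (i), IsCompact (fsHull X c.1 i) := fun c i =>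
    (fsPart X c.1 i).finite_toSet.isCompact_convexHull (𝕜 := ℝ)
  have hHconv : ∀ (c : Ω) (i), Convex ℝ (fsHull X c.1 i) := fun c i => convex_convexHull ℝ _
  have hHball : ∀ (c : Ω) (i), fsHull X c.1 i ⊆ Metric.closedBall a R := fun c i =>
    convexHull_min (fun z hz => Metric.mem_closedBall.mpr (hRX z (fsPart_subset hz)))
      (convex_closedBall a R)
  -- minimisers in space
  have hxmex : ∀ c : Ω, ∃ x, ∀ z,
      (∑ i, Metric.infDist x (fsHull X c.1 i) ^ 2) ≤ ∑ i, Metric.infDist z (fsHull X c.1 i) ^ 2 :=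
    fun c => fs_exists_min_sum_infDist_sq hr0 (fun i => fsHull X c.1 i) (hHcpt c) (hHne c)
      (hHball c)
  choose xm hxm using hxmex
  -- minimiser among colourings
  obtain ⟨c, hcmin⟩ := Finite.exists_min
    (fun c : Ω => ∑ i, Metric.infDist (xm c) (fsHull X c.1 i) ^ 2)
  set x := xm c with hxdef
  have hy : ∀ i, ∃ y ∈ fsHull X c.1 i, Metric.infDist x (fsHull X c.1 i) = dist x y := fun i =>
    (hHcpt c i).exists_infDist_eq_dist (hHne c i) x
  choose y hyK hyd using hy
  have hmin : ∀ i, ∀ z ∈ fsHull X c.1 i, dist x (y i) ≤ dist x z := fun i z hz => by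
    rw [← hyd i]; exact Metric.infDist_le_dist_of_mem hz
  have hproj : ∀ i, ∀ z ∈ fsHull X c.1 i, ⟪x - y i, z - y i⟫ ≤ 0 := fun i z hz =>
    fs_proj_inner_nonpos (hHconv c i) (hyK i) (hmin i) hz
  -- main claim : all distances vanish
  have hzero : ∀ i, Metric.infDist x (fsHull X c.1 i) = 0 := by
    by_contra hcon
    push_neg at hcon
    obtain ⟨i₀, hi₀⟩ := hcon
    have hd0 : 0 < dist x (y i₀) := by
      rw [← hyd i₀]
      exact lt_of_le_of_ne Metric.infDist_nonneg (Ne.symm hi₀)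
    have hxy0 : x ≠ y i₀ := by
      intro h
      rw [h, dist_self] at hd0
      exact lt_irrefl _ hd0
    -- first order condition : the sum of the vectors x - y i vanishes
    have hv : ∑ i, (x - y i) = 0 := by
      set v : EuclideanSpace ℝ (Fin d) := ∑ i, (x - y i) with hvdef
      by_contra hv0
      have hvnorm : 0 < ‖v‖ ^ 2 := pow_pos (norm_pos_iff.mpr hv0) 2
      set t : ℝ := 1 / r with htdef
      have ht0 : 0 < t := by positivity
      have hrt : (r : ℝ) * t = 1 := by
        rw [htdef]
        field_simp
      have hub : ∀ i, Metric.infDist (x - t • v) (fsHull X c.1 i) ^ 2 ≤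
          ‖x - y i‖ ^ 2 - 2 * t * ⟪x - y i, v⟫ + t ^ 2 * ‖v‖ ^ 2 := by
        intro i
        have h1 : Metric.infDist (x - t • v) (fsHull X c.1 i) ≤ dist (x - t • v) (y i) :=
          Metric.infDist_le_dist_of_mem (hyK i)
        have h2 : dist (x - t • v) (y i) = ‖(x - y i) - t • v‖ := by
          rw [dist_eq_norm]
          congr 1
          abel
        calc Metric.infDist (x - t • v) (fsHull X c.1 i) ^ 2
            ≤ dist (x - t • v) (y i) ^ 2 := pow_le_pow_left₀ Metric.infDist_nonneg h1 2
          _ = _ := by rw [h2, fs_norm_sub_smul_sq]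
      have hsum1 : ∑ i, ⟪x - y i, v⟫ = ‖v‖ ^ 2 := by
        rw [← sum_inner, ← hvdef, real_inner_self_eq_norm_sq]
      have hgx : (∑ i, Metric.infDist x (fsHull X c.1 i) ^ 2) = ∑ i, ‖x - y i‖ ^ 2 := by
        refine Finset.sum_congr rfl fun i _ => ?_
        rw [hyd i, dist_eq_norm]
      have hchain : (∑ i, Metric.infDist x (fsHull X c.1 i) ^ 2)
          ≤ (∑ i, ‖x - y i‖ ^ 2) - 2 * t * ‖v‖ ^ 2 + r * (t ^ 2 * ‖v‖ ^ 2) := by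
        calc (∑ i, Metric.infDist x (fsHull X c.1 i) ^ 2)
            ≤ ∑ i, Metric.infDist (x - t • v) (fsHull X c.1 i) ^ 2 := hxm c (x - t • v)
          _ ≤ ∑ i, (‖x - y i‖ ^ 2 - 2 * t * ⟪x - y i, v⟫ + t ^ 2 * ‖v‖ ^ 2) :=
              Finset.sum_le_sum fun i _ => hub i
          _ = (∑ i, ‖x - y i‖ ^ 2) - 2 * t * ‖v‖ ^ 2 + r * (t ^ 2 * ‖v‖ ^ 2) := by
              rw [Finset.sum_add_distrib, Finset.sum_sub_distrib, ← Finset.mul_sum, hsum1,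
                Finset.sum_const, Finset.card_univ, Fintype.card_fin, nsmul_eq_mul]
      rw [hgx] at hchain
      have hfin : 2 * t * ‖v‖ ^ 2 ≤ (r : ℝ) * (t ^ 2 * ‖v‖ ^ 2) := by linarith
      have : (r : ℝ) * (t ^ 2 * ‖v‖ ^ 2) = t * ‖v‖ ^ 2 := by
        calc (r : ℝ) * (t ^ 2 * ‖v‖ ^ 2) = ((r : ℝ) * t) * (t * ‖v‖ ^ 2) := by ring
          _ = t * ‖v‖ ^ 2 := by rw [hrt, one_mul]
      rw [this] at hfin
      nlinarith
    -- choose the point q' to be removed from part i₀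
    obtain ⟨q', hq'A, hq'y⟩ := fs_exists_erase hd (fsPart X c.1 i₀) (hcard c i₀) hxy0 (hyK i₀)
      (hproj i₀)
    obtain ⟨hq'X, hq'c⟩ := fsPart_mem.mp hq'A
    -- choose the index j receiving q'
    have hsum0 : ∑ i, ⟪x - y i, q' - x⟫ = 0 := by
      rw [← sum_inner, hv, inner_zero_left]
    have hi₀neg : ⟪x - y i₀, q' - x⟫ < 0 := by
      have h1 : ⟪x - y i₀, q' - y i₀⟫ ≤ 0 :=
        hproj i₀ q' (subset_convexHull ℝ _ (Finset.mem_coe.mpr hq'A))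
      have h2 : q' - x = (q' - y i₀) - (x - y i₀) := by abel
      have h3 : 0 < ⟪x - y i₀, x - y i₀⟫ := by
        rw [real_inner_self_eq_norm_sq]
        exact pow_pos (norm_pos_iff.mpr (sub_ne_zero.mpr hxy0)) 2
      rw [h2, inner_sub_right]
      linarith
    obtain ⟨j, hjpos⟩ : ∃ j, 0 < ⟪x - y j, q' - x⟫ := by
      by_contra hno
      push_neg at hno
      have h4 := Finset.sum_erase_add Finset.univ (fun i => ⟪x - y i, q' - x⟫)
        (Finset.mem_univ i₀)
      have h5 : ∑ i ∈ Finset.univ.erase i₀, ⟪x - y i, q' - x⟫ ≤ 0 :=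
        Finset.sum_nonpos fun i _ => hno i
      rw [hsum0] at h4
      linarith
    have hji₀ : j ≠ i₀ := by
      intro h
      rw [h] at hjpos
      linarith
    have hβ : 0 < ⟪x - y j, q' - y j⟫ := by
      have h2 : q' - y j = (q' - x) + (x - y j) := by abel
      have h3 : (0:ℝ) ≤ ⟪x - y j, x - y j⟫ := real_inner_self_nonneg
      rw [h2, inner_add_right]
      linarith
    -- a strictly closer point in the enlarged hull
    have hyK' : y j ∈ convexHull ℝ (↑(insert q' (fsPart X c.1 j)) : Set _) :=
      convexHull_mono (by rw [Finset.coe_insert]; exact Set.subset_insert _ _) (hyK j)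
    have hq'K' : q' ∈ convexHull ℝ (↑(insert q' (fsPart X c.1 j)) : Set _) :=
      subset_convexHull ℝ _ (by simp)
    obtain ⟨w, hwK', hww⟩ := fs_exists_closer (convex_convexHull ℝ _) hyK' hq'K' hβ
    -- Carathéodory
    rw [convexHull_eq_union] at hwK'
    simp only [Set.mem_iUnion] at hwK'
    obtain ⟨T, hTsub, hTai, hwT⟩ := hwK'
    have hTcard : T.card ≤ d + 1 := by
      have h1 := hTai.card_le_finrank_succ
      have h2 : finrank ℝ (vectorSpan ℝ (Set.range ((↑) : ↥T → EuclideanSpace ℝ (Fin d)))) ≤ d := by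
        have h3 := Submodule.finrank_le
          (vectorSpan ℝ (Set.range ((↑) : ↥T → EuclideanSpace ℝ (Fin d))))
        rwa [finrank_euclideanSpace_fin] at h3
      rw [Fintype.card_coe] at h1
      omega
    have hq'T : q' ∈ T := by
      by_contra hq'T
      have hTS : (T : Set (EuclideanSpace ℝ (Fin d))) ⊆ ↑(fsPart X c.1 j) := by
        intro z hz
        have h6 := hTsub hz
        rw [Finset.coe_insert] at h6
        rcases h6 with rfl | h7
        · exact absurd (Finset.mem_coe.mp hz) hq'T
        · exact h7
      have h1 : Metric.infDist x (fsHull X c.1 j) ≤ dist x w :=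
        Metric.infDist_le_dist_of_mem (convexHull_mono hTS hwT)
      rw [hyd j] at h1
      linarith
    -- q' is not in part j
    have hcq : c.1 ⟨q', hq'X⟩ = i₀ := hq'c
    have hq'Sj : q' ∉ fsPart X c.1 j := by
      intro hmem
      obtain ⟨h1, h2⟩ := fsPart_mem.mp hmem
      exact hji₀ ((hcq.symm.trans h2).symm)
    -- choose the point p' to be moved from part j to part i₀
    have hTe : T.erase q' ⊆ fsPart X c.1 j := by
      intro z hz
      obtain ⟨hzq, hzT⟩ := Finset.mem_erase.mp hz
      have h6 := hTsub (Finset.mem_coe.mpr hzT)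
      rw [Finset.coe_insert] at h6
      rcases h6 with rfl | h7
      · exact absurd rfl hzq
      · exact Finset.mem_coe.mp h7
    have hTne : T.erase q' ≠ fsPart X c.1 j := by
      intro h
      have h8 : (T.erase q').card = d + 1 := by rw [h]; exact hcard c j
      have h9 : (T.erase q').card = T.card - 1 := Finset.card_erase_of_mem hq'T
      omega
    obtain ⟨p', hp'S, hp'Te⟩ := Finset.exists_of_ssubset (hTe.ssubset_of_ne hTne)
    have hp'q' : p' ≠ q' := by
      intro h
      rw [h] at hp'S
      exact hq'Sj hp'S
    have hp'T : p' ∉ T := by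
      intro hmem
      exact hp'Te (Finset.mem_erase.mpr ⟨hp'q', hmem⟩)
    obtain ⟨hp'X, hp'c⟩ := fsPart_mem.mp hp'S
    -- the swap
    set p : {z // z ∈ X} := ⟨p', hp'X⟩ with hpdef
    set q : {z // z ∈ X} := ⟨q', hq'X⟩ with hqdef
    have hcp : c.1 p = j := hp'c
    have hcq2 : c.1 q = i₀ := hq'c
    have hpq : p ≠ q := by
      intro h
      rw [h] at hcp
      rw [hcp] at hcq2
      exact hji₀ hcq2
    set c2 : {z // z ∈ X} → Fin r := fun z => c.1 (Equiv.swap p q z) with hc2def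
    have hc2valid : ∀ i : Fin r, ((Finset.univ).filter fun z => c2 z = i).card = d + 1 :=
      fun i => by
        rw [hc2def]
        rw [fs_filter_equiv_card (Equiv.swap p q) (fun z => c.1 z = i)]
        exact c.2 i
    set c' : Ω := ⟨c2, hc2valid⟩ with hc'def
    have hc2p : c2 p = i₀ := by
      rw [hc2def]
      simp only [Equiv.swap_apply_left]
      exact hcq2
    have hc2q : c2 q = j := by
      rw [hc2def]
      simp only [Equiv.swap_apply_right]
      exact hcp
    have hc2z : ∀ z, z ≠ p → z ≠ q → c2 z = c.1 z := fun z h1 h2 => by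
      rw [hc2def]
      simp only []
      rw [Equiv.swap_apply_of_ne_of_ne h1 h2]
    -- parts of the new colouring
    have hpart_eq : ∀ i, i ≠ i₀ → i ≠ j → fsPart X c2 i = fsPart X c.1 i := by
      intro i h1 h2
      ext z
      rw [fsPart_mem, fsPart_mem]
      have hfix : ∀ hz : z ∈ X, (c2 ⟨z, hz⟩ = i ↔ c.1 ⟨z, hz⟩ = i) := by
        intro hz
        by_cases e1 : (⟨z, hz⟩ : {z // z ∈ X}) = p
        · rw [e1, hc2p, hcp]
          constructor
          · intro h; exact absurd h.symm h1
          · intro h; exact absurd h.symm h2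
        by_cases e2 : (⟨z, hz⟩ : {z // z ∈ X}) = q
        · rw [e2, hc2q, hcq2]
          constructor
          · intro h; exact absurd h.symm h2
          · intro h; exact absurd h.symm h1
        · rw [hc2z _ e1 e2]
      exact ⟨fun ⟨hz, h⟩ => ⟨hz, (hfix hz).mp h⟩, fun ⟨hz, h⟩ => ⟨hz, (hfix hz).mpr h⟩⟩
    have hsub_i₀ : (↑(fsPart X c.1 i₀) : Set (EuclideanSpace ℝ (Fin d))) \ {q'}
        ⊆ ↑(fsPart X c2 i₀) := by
      rintro z ⟨hzS, hzq⟩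
      obtain ⟨hzX, hzc⟩ := fsPart_mem.mp (Finset.mem_coe.mp hzS)
      refine Finset.mem_coe.mpr (fsPart_mem.mpr ⟨hzX, ?_⟩)
      have e1 : (⟨z, hzX⟩ : {z // z ∈ X}) ≠ q := by
        intro h
        exact hzq (by rw [Set.mem_singleton_iff]; exact congrArg Subtype.val h)
      have e2 : (⟨z, hzX⟩ : {z // z ∈ X}) ≠ p := by
        intro h
        rw [h, hcp] at hzc
        exact hji₀ hzc
      rw [hc2z _ e2 e1]
      exact hzc
    have hsub_j : (T : Set (EuclideanSpace ℝ (Fin d))) ⊆ ↑(fsPart X c2 j) := by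
      intro z hzT
      have h6 := hTsub hzT
      rw [Finset.coe_insert] at h6
      rcases h6 with rfl | hzS
      · exact Finset.mem_coe.mpr (fsPart_mem.mpr ⟨hq'X, hc2q⟩)
      · obtain ⟨hzX, hzc⟩ := fsPart_mem.mp (Finset.mem_coe.mp hzS)
        refine Finset.mem_coe.mpr (fsPart_mem.mpr ⟨hzX, ?_⟩)
        have e2 : (⟨z, hzX⟩ : {z // z ∈ X}) ≠ q := by
          intro h
          rw [h, hcq2] at hzc
          exact hji₀ hzc.symm
        have e1 : (⟨z, hzX⟩ : {z // z ∈ X}) ≠ p := by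
          intro h
          apply hp'T
          have : z = p' := congrArg Subtype.val h
          rwa [← this]
        rw [hc2z _ e1 e2]
        exact hzc
    -- comparison of the sums
    have hHlt : Metric.infDist x (fsHull X c2 j) < Metric.infDist x (fsHull X c.1 j) := by
      have h1 : Metric.infDist x (fsHull X c2 j) ≤ dist x w :=
        Metric.infDist_le_dist_of_mem (convexHull_mono hsub_j hwT)
      rw [hyd j]
      exact lt_of_le_of_lt h1 hww
    have hHle : Metric.infDist x (fsHull X c2 i₀) ≤ Metric.infDist x (fsHull X c.1 i₀) := by
      have h1 : y i₀ ∈ fsHull X c2 i₀ := convexHull_mono hsub_i₀ hq'y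
      rw [hyd i₀]
      exact Metric.infDist_le_dist_of_mem h1
    have hlt : (∑ i, Metric.infDist x (fsHull X c2 i) ^ 2)
        < ∑ i, Metric.infDist x (fsHull X c.1 i) ^ 2 := by
      apply Finset.sum_lt_sum
      · intro i _
        by_cases e1 : i = i₀
        · subst e1
          exact pow_le_pow_left₀ Metric.infDist_nonneg hHle 2
        by_cases e2 : i = j
        · subst e2
          exact pow_le_pow_left₀ Metric.infDist_nonneg hHlt.le 2
        · rw [show fsHull X c2 i = fsHull X c.1 i from by
            unfold fsHull; rw [hpart_eq i e1 e2]]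
      · refine ⟨j, Finset.mem_univ j, ?_⟩
        exact pow_lt_pow_left₀ hHlt Metric.infDist_nonneg two_ne_zero
    have hle2 : (∑ i, Metric.infDist (xm c') (fsHull X c'.1 i) ^ 2)
        ≤ ∑ i, Metric.infDist x (fsHull X c'.1 i) ^ 2 := hxm c' x
    have hle3 := hcmin c'
    have hc'1 : c'.1 = c2 := rfl
    rw [hc'1] at hle2
    rw [hc'1] at hle3
    linarith
  -- conclusion
  have hxmem : ∀ i, x ∈ fsHull X c.1 i := fun i =>
    ((hHcpt c i).isClosed.mem_iff_infDist_zero (hHne c i)).mpr (hzero i)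
  refine ⟨fun i => fsPart X c.1 i, fun i => fsPart_subset, ?_, ?_, hcard c, x, hxmem⟩
  · intro i j hij
    rw [Finset.disjoint_left]
    intro z hz1 hz2
    obtain ⟨h1, e1⟩ := fsPart_mem.mp hz1
    obtain ⟨h2, e2⟩ := fsPart_mem.mp hz2
    apply hij
    rw [← e1, ← e2]
  · intro z hz
    exact ⟨c.1 ⟨z, hz⟩, fsPart_mem.mpr ⟨hz, rfl⟩⟩
end
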